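/- arXiv:2310.17223 — 7 statements merged into one kernel-verified Lean document; each statement's English description precedes it below -/
import Mathlib

section
/- Under the stated assumptions, for every threshold b > 0 the hitting time τ_b has finite expectation: E[τ_b] < ∞. -/
open MeasureTheory Filter Set
open scoped ENNReal

/-- Proposition 1(i): under the drift, boundedness and sampling assumptions, the hitting
time `τ_b = inf {n > w : S_n ≥ b}` of the delayed partial-sum process has finite
expectation, `E[τ_b] < ∞`. -/
theorem finite_expectation_of_hitting_time
    {Ω : Type*} [m0 : MeasurableSpace Ω] (P : Measure Ω) [IsProbabilityMeasure P]
    (𝒢 : Filtration ℕ m0) (h𝒢0 : 𝒢 0 = ⊥)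
    (Y : ℕ → Ω → ℝ)
    (hY2 : ∀ n, 1 ≤ n → MemLp (Y n) 2 P)
    (hadp : ∀ n, 1 ≤ n → StronglyMeasurable[𝒢 n] (Y n))
    (w q : ℕ) (hq : 0 < q) (hqw : q < w)
    (N : Set ℕ) (hN : ∀ m ∈ N, w < m)
    (μstar μlow μ v : ℝ)
    (hμstar : 0 < μstar) (hμlow : 0 < μlow) (hμ : 0 < μ) (hv : 0 < v)
    (haOut : ∀ n, w < n → n ∉ N →
      (fun _ => μstar) ≤ᵐ[P] P[Y n | 𝒢 (n - w - 1)])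
    (haIn : ∀ n, w < n → n ∈ N →
      (fun _ => μlow) ≤ᵐ[P] P[Y n | 𝒢 (n - w - 1)])
    (hbnd : ∀ n, w < n → P[Y n | 𝒢 (n - 1)] ≤ᵐ[P] (fun _ => μ))
    (hvar : ∀ n, w < n → P[(fun ω => (Y n ω) ^ 2) | 𝒢 (n - 1)] ≤ᵐ[P] (fun _ => v))
    (hd : ∀ (n : ℕ) (s : Finset ℕ),
      (∀ m ∈ s, m ∈ N ∧ m ∈ Finset.Ioc w (w + n)) → (s.card : ℝ) ≤ n * q / w)
    (S : ℕ → Ω → ℝ) (hS : ∀ n ω, S n ω = ∑ i ∈ Finset.Ioc w n, Y i ω)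
    (b : ℝ) (hb : 0 < b)
    (τ : Ω → ℝ≥0∞)
    (hτ : ∀ ω, τ ω = sInf {t : ℝ≥0∞ | ∃ n : ℕ, t = n ∧ w < n ∧ b ≤ S n ω}) :
    ∫⁻ ω, τ ω ∂P < ∞ := by
  classical
  -- constants
  set c := min μstar μlow with hc_def
  have hc : 0 < c := lt_min hμstar hμlow
  set sv := Real.sqrt v with hsv_def
  have hsv : 0 < sv := Real.sqrt_pos.mpr hv
  have hsv2 : sv * sv = v := Real.mul_self_sqrt hv.le
  -- integrability and measurability
  have hYint : ∀ i, w < i → Integrable (Y i) P := fun i hi =>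
    (hY2 i (by omega)).integrable (by norm_num)
  have hYsq : ∀ i, w < i → Integrable (fun ω => Y i ω ^ 2) P := fun i hi =>
    (hY2 i (by omega)).integrable_sq
  have hSsm : ∀ k, StronglyMeasurable[𝒢 k] (S k) := by
    intro k
    have hfe : S k = fun ω => ∑ i ∈ Finset.Ioc w k, Y i ω := funext (hS k)
    have h1 : StronglyMeasurable[𝒢 k] (∑ i ∈ Finset.Ioc w k, Y i) := by
      refine Finset.stronglyMeasurable_sum _ fun i hi => ?_
      have hi' := Finset.mem_Ioc.mp hi
      exact (hadp i (by omega)).mono (𝒢.mono hi'.2)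
    have h2 : (∑ i ∈ Finset.Ioc w k, Y i) = fun ω => ∑ i ∈ Finset.Ioc w k, Y i ω := by
      funext ω; simp
    rw [hfe, ← h2]; exact h1
  -- the sets D j = {τ ≥ j} and E k = {τ = k}
  set D : ℕ → Set Ω := fun j => {ω | ∀ k ∈ Finset.Ioo w j, S k ω < b} with hDdef
  have hDanti : ∀ {j j' : ℕ}, j ≤ j' → D j' ⊆ D j := by
    intro j j' h ω hω k hk
    have hk' := Finset.mem_Ioo.mp hk
    exact hω k (Finset.mem_Ioo.mpr ⟨hk'.1, lt_of_lt_of_le hk'.2 h⟩)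
  have hDw1 : D (w + 1) = Set.univ := by
    ext ω
    simp only [hDdef, Set.mem_setOf_eq, Set.mem_univ, iff_true]
    intro k hk
    have := Finset.mem_Ioo.mp hk
    omega
  have hDmeas : ∀ j m : ℕ, j ≤ m + 1 → MeasurableSet[𝒢 m] (D j) := by
    intro j m hjm
    have hfe : D j = ⋂ k ∈ Finset.Ioo w j, {ω | S k ω < b} := by
      ext ω; simp [hDdef]
    rw [hfe]
    refine Finset.measurableSet_biInter _ fun k hk => ?_
    have hk' := Finset.mem_Ioo.mp hk
    have hmk : MeasurableSet[𝒢 k] {ω | S k ω < b} :=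
      (hSsm k).measurableSet_lt stronglyMeasurable_const
    exact 𝒢.mono (by omega) _ hmk
  have hDm0 : ∀ j, MeasurableSet (D j) := fun j => 𝒢.le j _ (hDmeas j j (by omega))
  set E : ℕ → Set Ω := fun k => D k \ D (k + 1) with hEdef
  have hEm0 : ∀ k, MeasurableSet (E k) := fun k => (hDm0 k).diff (hDm0 (k + 1))
  have hEmG : ∀ k m, k + 1 ≤ m + 1 → MeasurableSet[𝒢 m] (E k) := fun k m h =>
    (hDmeas k m (by omega)).diff (hDmeas (k + 1) m h)
  -- the E k are pairwise disjoint, so their probabilities sum to at most 1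
  have hEsum : ∀ s : Finset ℕ, ∑ k ∈ s, (P (E k)).toReal ≤ 1 := by
    intro s
    have hpd : (s : Set ℕ).PairwiseDisjoint E := by
      intro a _ a' _ haa'
      have key : ∀ x y : ℕ, x < y → Disjoint (E x) (E y) := by
        intro x y hxy
        exact Set.disjoint_left.mpr fun ω hωx hωy => hωx.2 (hDanti (by omega) hωy.1)
      rcases lt_or_gt_of_ne haa' with h | h
      · exact key a a' h
      · exact (key a' a h).symm
    have hsum : ∑ k ∈ s, P (E k) = P (⋃ k ∈ s, E k) :=
      (measure_biUnion_finset hpd fun k _ => hEm0 k).symm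
    have h1 : (∑ k ∈ s, P (E k)).toReal = ∑ k ∈ s, (P (E k)).toReal :=
      ENNReal.toReal_sum fun k _ => measure_ne_top P _
    rw [← h1, hsum]
    have := prob_le_one (μ := P) (s := ⋃ k ∈ s, E k)
    calc (P (⋃ k ∈ s, E k)).toReal ≤ (1 : ℝ≥0∞).toReal :=
          ENNReal.toReal_mono (by norm_num) this
      _ = 1 := by norm_num
  -- Lemma A : drift lower bound on sets measurable w.r.t. the delayed σ-algebra
  have lemA : ∀ i, w < i → ∀ B : Set Ω, MeasurableSet[𝒢 (i - w - 1)] B →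
      c * (P B).toReal ≤ ∫ ω in B, Y i ω ∂P := by
    intro i hi B hB
    have hle : (fun _ : Ω => c) ≤ᵐ[P] P[Y i | 𝒢 (i - w - 1)] := by
      by_cases hiN : i ∈ N
      · exact (haIn i hi hiN).mono fun ω h => le_trans (min_le_right _ _) h
      · exact (haOut i hi hiN).mono fun ω h => le_trans (min_le_left _ _) h
    have h1 : ∫ ω in B, Y i ω ∂P = ∫ ω in B, (P[Y i | 𝒢 (i - w - 1)]) ω ∂P :=
      (setIntegral_condExp (𝒢.le _) (hYint i hi) hB).symm
    have h2 : ∫ ω in B, (fun _ : Ω => c) ω ∂P ≤ ∫ ω in B, (P[Y i | 𝒢 (i - w - 1)]) ω ∂P :=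
      setIntegral_mono_ae (integrable_const c).integrableOn
        integrable_condExp.integrableOn hle
    have h3 : ∫ ω in B, (fun _ : Ω => c) ω ∂P = (P B).toReal * c := by
      simp [setIntegral_const, smul_eq_mul, measureReal_def]
    rw [h1]; rw [h3] at h2; linarith [h2]
  -- Lemma Sq : second moment bound on sets measurable w.r.t. 𝒢 (i-1)
  have lemSq : ∀ i, w < i → ∀ B : Set Ω, MeasurableSet[𝒢 (i - 1)] B →
      ∫ ω in B, Y i ω ^ 2 ∂P ≤ v * (P B).toReal := by
    intro i hi B hB
    have h1 : ∫ ω in B, Y i ω ^ 2 ∂P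
        = ∫ ω in B, (P[(fun ω => Y i ω ^ 2) | 𝒢 (i - 1)]) ω ∂P :=
      (setIntegral_condExp (𝒢.le _) (hYsq i hi) hB).symm
    have h2 : ∫ ω in B, (P[(fun ω => Y i ω ^ 2) | 𝒢 (i - 1)]) ω ∂P
        ≤ ∫ ω in B, (fun _ : Ω => v) ω ∂P :=
      setIntegral_mono_ae integrable_condExp.integrableOn
        (integrable_const v).integrableOn (hvar i hi)
    have h3 : ∫ ω in B, (fun _ : Ω => v) ω ∂P = (P B).toReal * v := by
      simp [setIntegral_const, smul_eq_mul, measureReal_def]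
    rw [h1]; rw [h3] at h2; linarith [h2]
  -- Lemma Abs : |∫_B Y i| ≤ √v P(B) for B ∈ 𝒢 (i-1)
  have lemAbs : ∀ i, w < i → ∀ B : Set Ω, MeasurableSet[𝒢 (i - 1)] B →
      |∫ ω in B, Y i ω ∂P| ≤ sv * (P B).toReal := by
    intro i hi B hB
    have hBm : MeasurableSet B := 𝒢.le _ _ hB
    have habs : |∫ ω in B, Y i ω ∂P| ≤ ∫ ω in B, |Y i ω| ∂P := by
      simpa [Real.norm_eq_abs] using
        norm_integral_le_integral_norm (μ := P.restrict B) (f := Y i)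
    have hpt : ∀ ω, |Y i ω| ≤ (Y i ω ^ 2 + v) / (2 * sv) := by
      intro ω
      rw [le_div_iff₀ (by positivity)]
      nlinarith [sq_nonneg (|Y i ω| - sv), sq_abs (Y i ω)]
    have hint2 : Integrable (fun ω => (Y i ω ^ 2 + v) / (2 * sv)) P :=
      ((hYsq i hi).add (integrable_const v)).div_const _
    have h2 : ∫ ω in B, |Y i ω| ∂P ≤ ∫ ω in B, (Y i ω ^ 2 + v) / (2 * sv) ∂P :=
      setIntegral_mono ((hYint i hi).abs.integrableOn) hint2.integrableOn hpt
    have h3 : ∫ ω in B, (Y i ω ^ 2 + v) / (2 * sv) ∂P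
        = ((∫ ω in B, Y i ω ^ 2 ∂P) + v * (P B).toReal) / (2 * sv) := by
      rw [integral_div, integral_add ((hYsq i hi).integrableOn) (integrable_const v).integrableOn]
      simp [setIntegral_const, smul_eq_mul, mul_comm, measureReal_def]
    have h4 := lemSq i hi B hB
    have hp0 : (0 : ℝ) ≤ (P B).toReal := ENNReal.toReal_nonneg
    have h5 : ((∫ ω in B, Y i ω ^ 2 ∂P) + v * (P B).toReal) / (2 * sv)
        ≤ sv * (P B).toReal := by
      rw [div_le_iff₀ (by positivity)]
      nlinarith
    calc |∫ ω in B, Y i ω ∂P| ≤ ∫ ω in B, |Y i ω| ∂P := habs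
      _ ≤ ∫ ω in B, (Y i ω ^ 2 + v) / (2 * sv) ∂P := h2
      _ = ((∫ ω in B, Y i ω ^ 2 ∂P) + v * (P B).toReal) / (2 * sv) := h3
      _ ≤ sv * (P B).toReal := h5
  -- Lemma Pos : overshoot bound  ∫_{E k} (Y k)⁺ ≤ (c/2) P(D k) + (v/(2c)) P(E k)
  have lemPos : ∀ k, w < k → ∫ ω in E k, max (Y k ω) 0 ∂P
      ≤ c / 2 * (P (D k)).toReal + v / (2 * c) * (P (E k)).toReal := by
    intro k hk
    set lam := v / c with hlam_def
    have hlam : 0 < lam := div_pos hv hc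
    have hpt : ∀ ω, max (Y k ω) 0 ≤ (Y k ω ^ 2 + lam ^ 2) / (2 * lam) := by
      intro ω
      rw [max_le_iff]
      constructor
      · rw [le_div_iff₀ (by positivity)]
        nlinarith [sq_nonneg (Y k ω - lam)]
      · positivity
    have hint2 : Integrable (fun ω => (Y k ω ^ 2 + lam ^ 2) / (2 * lam)) P :=
      ((hYsq k hk).add (integrable_const _)).div_const _
    have h2 : ∫ ω in E k, max (Y k ω) 0 ∂P
        ≤ ∫ ω in E k, (Y k ω ^ 2 + lam ^ 2) / (2 * lam) ∂P :=
      setIntegral_mono ((hYint k hk).pos_part.integrableOn) hint2.integrableOn hpt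
    have h3 : ∫ ω in E k, (Y k ω ^ 2 + lam ^ 2) / (2 * lam) ∂P
        = ((∫ ω in E k, Y k ω ^ 2 ∂P) + lam ^ 2 * (P (E k)).toReal) / (2 * lam) := by
      rw [integral_div, integral_add ((hYsq k hk).integrableOn) (integrable_const _).integrableOn]
      simp [setIntegral_const, smul_eq_mul, mul_comm, measureReal_def]
    have hmono : ∫ ω in E k, Y k ω ^ 2 ∂P ≤ ∫ ω in D k, Y k ω ^ 2 ∂P := by
      refine setIntegral_mono_set ((hYsq k hk).integrableOn) ?_ ?_
      · exact Filter.Eventually.of_forall fun ω => sq_nonneg _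
      · exact HasSubset.Subset.eventuallyLE (Set.diff_subset)
    have h4 : ∫ ω in D k, Y k ω ^ 2 ∂P ≤ v * (P (D k)).toReal :=
      lemSq k hk (D k) (hDmeas k (k - 1) (by omega))
    have hpD0 : (0 : ℝ) ≤ (P (D k)).toReal := ENNReal.toReal_nonneg
    have hpE0 : (0 : ℝ) ≤ (P (E k)).toReal := ENNReal.toReal_nonneg
    have h5 : ((∫ ω in E k, Y k ω ^ 2 ∂P) + lam ^ 2 * (P (E k)).toReal) / (2 * lam)
        ≤ c / 2 * (P (D k)).toReal + v / (2 * c) * (P (E k)).toReal := by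
      rw [div_le_iff₀ (by positivity)]
      have hRHS : (c / 2 * (P (D k)).toReal + v / (2 * c) * (P (E k)).toReal) * (2 * lam)
          = v * (P (D k)).toReal + lam ^ 2 * (P (E k)).toReal := by
        rw [hlam_def]; field_simp
      rw [hRHS]
      linarith [hmono, h4]
    linarith [h2, h3 ▸ h2, h5, le_trans (h3 ▸ h2) h5]
  -- key per-index estimate
  have keyi : ∀ n, w < n → ∀ i ∈ Finset.Ioc w n,
      c * (P (D i)).toReal ≤ (∫ ω in D i, Y i ω ∂P)
        + sv * ∑ k ∈ Finset.Ico (max (i - w) (w + 1)) i, (P (E k)).toReal := by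
    intro n hn i hi
    have hiw : w < i := (Finset.mem_Ioc.mp hi).1
    set i' := max (i - w) (w + 1) with hi'_def
    have hi'le : i' ≤ i := by omega
    have hDi'meas : MeasurableSet[𝒢 (i - w - 1)] (D i') := by
      by_cases h2w : w + 1 ≤ i - w
      · have h : i' = i - w := by omega
        rw [h]
        exact hDmeas (i - w) (i - w - 1) (by omega)
      · have h : i' = w + 1 := by omega
        rw [h, hDw1]
        exact MeasurableSet.univ
    have hA := lemA i hiw (D i') hDi'meas
    have hmono : c * (P (D i)).toReal ≤ c * (P (D i')).toReal :=
      mul_le_mul_of_nonneg_left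
        (ENNReal.toReal_mono (measure_ne_top P _) (measure_mono (hDanti hi'le))) hc.le
    have hstep : ∀ j, i' ≤ j → j ≤ i →
        ∫ ω in D i', Y i ω ∂P ≤ (∫ ω in D j, Y i ω ∂P)
          + sv * ∑ k ∈ Finset.Ico i' j, (P (E k)).toReal := by
      intro j hj
      induction j, hj using Nat.le_induction with
      | base => intro _; simp
      | succ j hj ih =>
        intro hji
        have hji' : j ≤ i := by omega
        have hEj : MeasurableSet[𝒢 (i - 1)] (E j) := hEmG j (i - 1) (by omega)
        have hAbs := abs_le.mp (lemAbs i hiw (E j) hEj)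
        have hdecomp : ∫ ω in D j, Y i ω ∂P
            = (∫ ω in D (j + 1), Y i ω ∂P) + ∫ ω in E j, Y i ω ∂P := by
          rw [← setIntegral_union disjoint_sdiff_self_right (hEm0 j)
            ((hYint i hiw).integrableOn) ((hYint i hiw).integrableOn),
            Set.union_diff_cancel (hDanti (Nat.le_succ j))]
        have hsumE : ∑ k ∈ Finset.Ico i' (j + 1), (P (E k)).toReal
            = (∑ k ∈ Finset.Ico i' j, (P (E k)).toReal) + (P (E j)).toReal :=
          Finset.sum_Ico_succ_top hj _
        have h1 := ih hji'
        rw [hsumE, mul_add]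
        linarith [hAbs.2]
    have hfin := hstep i hi'le le_rfl
    linarith
  -- summing the per-index estimates, with the double-counting bound on the error term
  have hsummed : ∀ n, w < n →
      c * ∑ i ∈ Finset.Ioc w n, (P (D i)).toReal
        ≤ (∑ i ∈ Finset.Ioc w n, ∫ ω in D i, Y i ω ∂P) + sv * (w : ℝ) := by
    intro n hn
    have h1 : ∑ i ∈ Finset.Ioc w n, c * (P (D i)).toReal
        ≤ ∑ i ∈ Finset.Ioc w n, ((∫ ω in D i, Y i ω ∂P)
          + sv * ∑ k ∈ Finset.Ico (max (i - w) (w + 1)) i, (P (E k)).toReal) :=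
      Finset.sum_le_sum (keyi n hn)
    have hT : ∑ i ∈ Finset.Ioc w n,
        ∑ k ∈ Finset.Ico (max (i - w) (w + 1)) i, (P (E k)).toReal ≤ (w : ℝ) := by
      have step1 : ∀ i ∈ Finset.Ioc w n,
          ∑ k ∈ Finset.Ico (max (i - w) (w + 1)) i, (P (E k)).toReal
          ≤ ∑ k ∈ Finset.Ioc w n,
            (if k < i ∧ i ≤ k + w then (P (E k)).toReal else 0) := by
        intro i hi
        have hi' := Finset.mem_Ioc.mp hi
        have hsub : Finset.Ico (max (i - w) (w + 1)) i ⊆ Finset.Ioc w n := by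
          intro k hk
          have := Finset.mem_Ico.mp hk
          exact Finset.mem_Ioc.mpr (by omega)
        have heq : ∀ k ∈ Finset.Ico (max (i - w) (w + 1)) i,
            (P (E k)).toReal = (if k < i ∧ i ≤ k + w then (P (E k)).toReal else 0) := by
          intro k hk
          have := Finset.mem_Ico.mp hk
          rw [if_pos (by omega)]
        rw [Finset.sum_congr rfl heq]
        refine Finset.sum_le_sum_of_subset_of_nonneg hsub fun k _ _ => ?_
        split <;> simp [ENNReal.toReal_nonneg]
      have step2 : ∑ i ∈ Finset.Ioc w n, ∑ k ∈ Finset.Ioc w n,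
            (if k < i ∧ i ≤ k + w then (P (E k)).toReal else 0)
          = ∑ k ∈ Finset.Ioc w n, ∑ i ∈ Finset.Ioc w n,
            (if k < i ∧ i ≤ k + w then (P (E k)).toReal else 0) := Finset.sum_comm
      have step3 : ∀ k ∈ Finset.Ioc w n, ∑ i ∈ Finset.Ioc w n,
          (if k < i ∧ i ≤ k + w then (P (E k)).toReal else 0)
          ≤ (w : ℝ) * (P (E k)).toReal := by
        intro k _
        rw [← Finset.sum_filter, Finset.sum_const, nsmul_eq_mul]
        have hcard : ((Finset.Ioc w n).filter fun i => k < i ∧ i ≤ k + w).card ≤ w := by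
          have hsub2 : ((Finset.Ioc w n).filter fun i => k < i ∧ i ≤ k + w)
              ⊆ Finset.Ioc k (k + w) := by
            intro i hi
            have := (Finset.mem_filter.mp hi).2
            exact Finset.mem_Ioc.mpr (by omega)
          calc ((Finset.Ioc w n).filter fun i => k < i ∧ i ≤ k + w).card
              ≤ (Finset.Ioc k (k + w)).card := Finset.card_le_card hsub2
            _ = w := by rw [Nat.card_Ioc]; omega
        exact mul_le_mul_of_nonneg_right (by exact_mod_cast hcard) ENNReal.toReal_nonneg
      calc ∑ i ∈ Finset.Ioc w n,
            ∑ k ∈ Finset.Ico (max (i - w) (w + 1)) i, (P (E k)).toReal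
          ≤ ∑ i ∈ Finset.Ioc w n, ∑ k ∈ Finset.Ioc w n,
            (if k < i ∧ i ≤ k + w then (P (E k)).toReal else 0) := Finset.sum_le_sum step1
        _ = ∑ k ∈ Finset.Ioc w n, ∑ i ∈ Finset.Ioc w n,
            (if k < i ∧ i ≤ k + w then (P (E k)).toReal else 0) := step2
        _ ≤ ∑ k ∈ Finset.Ioc w n, (w : ℝ) * (P (E k)).toReal := Finset.sum_le_sum step3
        _ = (w : ℝ) * ∑ k ∈ Finset.Ioc w n, (P (E k)).toReal := by rw [Finset.mul_sum]
        _ ≤ (w : ℝ) * 1 := mul_le_mul_of_nonneg_left (hEsum _) (by positivity)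
        _ = (w : ℝ) := mul_one _
    calc c * ∑ i ∈ Finset.Ioc w n, (P (D i)).toReal
        = ∑ i ∈ Finset.Ioc w n, c * (P (D i)).toReal := Finset.mul_sum _ _ _
      _ ≤ ∑ i ∈ Finset.Ioc w n, ((∫ ω in D i, Y i ω ∂P)
            + sv * ∑ k ∈ Finset.Ico (max (i - w) (w + 1)) i, (P (E k)).toReal) := h1
      _ = (∑ i ∈ Finset.Ioc w n, ∫ ω in D i, Y i ω ∂P)
            + sv * ∑ i ∈ Finset.Ioc w n,
              ∑ k ∈ Finset.Ico (max (i - w) (w + 1)) i, (P (E k)).toReal := by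
          rw [Finset.sum_add_distrib, Finset.mul_sum]
      _ ≤ (∑ i ∈ Finset.Ioc w n, ∫ ω in D i, Y i ω ∂P) + sv * (w : ℝ) :=
          add_le_add_right (mul_le_mul_of_nonneg_left hT hsv.le) _
  -- the upper bound on the stopped sum
  have hup : ∀ n, w < n →
      (∑ i ∈ Finset.Ioc w n, ∫ ω in D i, Y i ω ∂P)
        ≤ b + (c / 2) * (∑ i ∈ Finset.Ioc w n, (P (D i)).toReal) + v / (2 * c) := by
    intro n hn
    have hwn : w + 1 ∈ Finset.Ioc w n := Finset.mem_Ioc.mpr (by omega)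
    have hgint : ∀ i ∈ Finset.Ioc w n, Integrable ((D i).indicator (Y i)) P := fun i hi =>
      ((hYint i (Finset.mem_Ioc.mp hi).1).indicator (hDm0 i))
    have hmaxint : ∀ k ∈ Finset.Ioc w n,
        Integrable ((E k).indicator fun ω => max (Y k ω) 0) P := fun k hk =>
      ((hYint k (Finset.mem_Ioc.mp hk).1).pos_part.indicator (hEm0 k))
    have h1 : ∑ i ∈ Finset.Ioc w n, ∫ ω in D i, Y i ω ∂P
        = ∫ ω, (∑ i ∈ Finset.Ioc w n, (D i).indicator (Y i) ω) ∂P := by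
      rw [integral_finset_sum _ hgint]
      exact Finset.sum_congr rfl fun i hi => (integral_indicator (hDm0 i)).symm
    -- pointwise bound
    have hpt : ∀ ω, (∑ i ∈ Finset.Ioc w n, (D i).indicator (Y i) ω)
        ≤ b + ∑ k ∈ Finset.Ioc w n, (E k).indicator (fun ω => max (Y k ω) 0) ω := by
      intro ω
      have hnn : 0 ≤ ∑ k ∈ Finset.Ioc w n, (E k).indicator (fun ω => max (Y k ω) 0) ω :=
        Finset.sum_nonneg fun k _ => Set.indicator_nonneg (fun ω _ => le_max_right _ _) ω
      set K := (Finset.Ioc w n).filter (fun k => ω ∈ D k) with hK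
      have hKne : K.Nonempty :=
        ⟨w + 1, Finset.mem_filter.mpr ⟨hwn, by rw [hDw1]; trivial⟩⟩
      set k₀ := K.max' hKne with hk0
      have hk₀K : k₀ ∈ K := K.max'_mem hKne
      have hk₀I : k₀ ∈ Finset.Ioc w n := (Finset.mem_filter.mp hk₀K).1
      have hk₀D : ω ∈ D k₀ := (Finset.mem_filter.mp hk₀K).2
      have hk₀w : w < k₀ := (Finset.mem_Ioc.mp hk₀I).1
      have e2 : K = Finset.Ioc w k₀ := by
        ext i
        constructor
        · intro hiK
          have h' := Finset.mem_filter.mp hiK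
          exact Finset.mem_Ioc.mpr ⟨(Finset.mem_Ioc.mp h'.1).1, K.le_max' i hiK⟩
        · intro hi'
          have h' := Finset.mem_Ioc.mp hi'
          refine Finset.mem_filter.mpr ⟨Finset.mem_Ioc.mpr
            ⟨h'.1, le_trans h'.2 (Finset.mem_Ioc.mp hk₀I).2⟩, hDanti h'.2 hk₀D⟩
      have hgsum : ∑ i ∈ Finset.Ioc w n, (D i).indicator (Y i) ω = S k₀ ω := by
        have e1 : ∀ i ∈ Finset.Ioc w n,
            (D i).indicator (Y i) ω = if ω ∈ D i then Y i ω else 0 := fun i _ =>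
          Set.indicator_apply _ _ _
        rw [Finset.sum_congr rfl e1, ← Finset.sum_filter, ← hK, e2, ← hS]
      rw [hgsum]
      by_cases hD1 : ω ∈ D (k₀ + 1)
      · have hSlt : S k₀ ω < b := hD1 k₀ (Finset.mem_Ioo.mpr ⟨hk₀w, Nat.lt_succ_self _⟩)
        linarith
      · have hωE : ω ∈ E k₀ := ⟨hk₀D, hD1⟩
        have hone : max (Y k₀ ω) 0
            ≤ ∑ k ∈ Finset.Ioc w n, (E k).indicator (fun ω => max (Y k ω) 0) ω := by
          have hsle := Finset.single_le_sum
            (f := fun k => (E k).indicator (fun ω => max (Y k ω) 0) ω)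
            (fun k _ => Set.indicator_nonneg (fun _ _ => le_max_right _ _) ω) hk₀I
          calc max (Y k₀ ω) 0
              = (E k₀).indicator (fun ω => max (Y k₀ ω) 0) ω :=
                (Set.indicator_of_mem hωE (fun ω => max (Y k₀ ω) 0)).symm
            _ ≤ ∑ k ∈ Finset.Ioc w n, (E k).indicator (fun ω => max (Y k ω) 0) ω := hsle
        obtain ⟨m, hm⟩ : ∃ m, k₀ = m + 1 := ⟨k₀ - 1, by omega⟩
        have hwm : w ≤ m := by omega
        have hsplit : S k₀ ω = (∑ i ∈ Finset.Ioc w m, Y i ω) + Y k₀ ω := by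
          rw [hS, hm]; exact Finset.sum_Ioc_succ_top hwm _
        have hSm : (∑ i ∈ Finset.Ioc w m, Y i ω) < b := by
          rcases eq_or_lt_of_le hwm with h | h
          · rw [← h]; simpa using hb
          · have hh := hk₀D m (Finset.mem_Ioo.mpr ⟨h, by omega⟩)
            rw [hS] at hh
            exact hh
        have := le_max_left (Y k₀ ω) 0
        rw [hsplit]
        linarith
    have hgint' : Integrable (fun ω => ∑ i ∈ Finset.Ioc w n, (D i).indicator (Y i) ω) P := by
      have := integrable_finset_sum (Finset.Ioc w n) hgint
      simpa using this
    have hhint' : Integrable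
        (fun ω => b + ∑ k ∈ Finset.Ioc w n, (E k).indicator (fun ω => max (Y k ω) 0) ω) P := by
      have := integrable_finset_sum (Finset.Ioc w n) hmaxint
      exact (integrable_const b).add (by simpa using this)
    have h2 : ∫ ω, (∑ i ∈ Finset.Ioc w n, (D i).indicator (Y i) ω) ∂P
        ≤ ∫ ω, (b + ∑ k ∈ Finset.Ioc w n, (E k).indicator (fun ω => max (Y k ω) 0) ω) ∂P :=
      integral_mono hgint' hhint' hpt
    have h3 : ∫ ω, (b + ∑ k ∈ Finset.Ioc w n, (E k).indicator (fun ω => max (Y k ω) 0) ω) ∂P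
        = b + ∑ k ∈ Finset.Ioc w n, ∫ ω in E k, max (Y k ω) 0 ∂P := by
      rw [integral_add (integrable_const b) (by simpa using integrable_finset_sum _ hmaxint),
        integral_const]
      have h4 : ∫ ω, (∑ k ∈ Finset.Ioc w n, (E k).indicator (fun ω => max (Y k ω) 0) ω) ∂P
          = ∑ k ∈ Finset.Ioc w n, ∫ ω in E k, max (Y k ω) 0 ∂P := by
        rw [integral_finset_sum _ hmaxint]
        exact Finset.sum_congr rfl fun k hk => integral_indicator (hEm0 k)
      rw [h4]
      simp
    have h5 : ∑ k ∈ Finset.Ioc w n, ∫ ω in E k, max (Y k ω) 0 ∂P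
        ≤ (c / 2) * (∑ i ∈ Finset.Ioc w n, (P (D i)).toReal) + v / (2 * c) := by
      calc ∑ k ∈ Finset.Ioc w n, ∫ ω in E k, max (Y k ω) 0 ∂P
          ≤ ∑ k ∈ Finset.Ioc w n,
            (c / 2 * (P (D k)).toReal + v / (2 * c) * (P (E k)).toReal) :=
            Finset.sum_le_sum fun k hk => lemPos k (Finset.mem_Ioc.mp hk).1
        _ = (c / 2) * (∑ i ∈ Finset.Ioc w n, (P (D i)).toReal)
            + v / (2 * c) * ∑ k ∈ Finset.Ioc w n, (P (E k)).toReal := by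
            rw [Finset.sum_add_distrib, Finset.mul_sum, Finset.mul_sum]
        _ ≤ (c / 2) * (∑ i ∈ Finset.Ioc w n, (P (D i)).toReal) + v / (2 * c) * 1 :=
            add_le_add_right (mul_le_mul_of_nonneg_left (hEsum _) (by positivity)) _
        _ = (c / 2) * (∑ i ∈ Finset.Ioc w n, (P (D i)).toReal) + v / (2 * c) := by rw [mul_one]
    rw [h1]
    linarith
  -- the uniform bound on the partial sums of P(D i)
  have hSig : ∀ n, w < n → ∑ i ∈ Finset.Ioc w n, (P (D i)).toReal
      ≤ 2 * (b + sv * (w : ℝ) + v / (2 * c)) / c := by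
    intro n hn
    have h1 := hsummed n hn
    have h2 := hup n hn
    rw [le_div_iff₀ hc]
    nlinarith
  set C₀ : ℝ := 2 * (b + sv * (w : ℝ) + v / (2 * c)) / c with hC₀
  -- pointwise:  τ ≤ ∑ᵢ 1_{D i}
  have hptτ : ∀ ω, τ ω ≤ ∑' i : ℕ, (D i).indicator (fun _ => (1 : ℝ≥0∞)) ω := by
    intro ω
    by_cases hall : ∀ i, ω ∈ D i
    · have he : ∑' i : ℕ, (D i).indicator (fun _ => (1 : ℝ≥0∞)) ω
          = ∑' _ : ℕ, (1 : ℝ≥0∞) := by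
        refine tsum_congr fun i => ?_
        exact Set.indicator_of_mem (hall i) _
      rw [he, ENNReal.tsum_const_eq_top_of_ne_zero one_ne_zero]
      exact le_top
    · push_neg at hall
      set i₀ := Nat.find hall with hi₀
      have hni₀ : ω ∉ D i₀ := Nat.find_spec hall
      have hltD : ∀ i < i₀, ω ∈ D i := fun i hi => not_not.mp (Nat.find_min hall hi)
      obtain ⟨k, hkmem, hkb⟩ : ∃ k ∈ Finset.Ioo w i₀, ¬ S k ω < b := by
        by_contra h
        push_neg at h
        exact hni₀ fun k hk => h k hk
      have hk' := Finset.mem_Ioo.mp hkmem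
      have hτk : τ ω ≤ (k : ℝ≥0∞) := by
        rw [hτ]
        exact sInf_le ⟨k, rfl, hk'.1, not_lt.mp hkb⟩
      have hik : (k : ℝ≥0∞) ≤ (i₀ : ℝ≥0∞) := by
        exact_mod_cast (le_of_lt hk'.2)
      have hsum : (i₀ : ℝ≥0∞) ≤ ∑' i : ℕ, (D i).indicator (fun _ => (1 : ℝ≥0∞)) ω := by
        have hee : ∀ i ∈ Finset.range i₀,
            (D i).indicator (fun _ => (1 : ℝ≥0∞)) ω = 1 := fun i hi =>
          Set.indicator_of_mem (hltD i (Finset.mem_range.mp hi)) _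
        calc (i₀ : ℝ≥0∞) = ∑ _i ∈ Finset.range i₀, (1 : ℝ≥0∞) := by simp
          _ = ∑ i ∈ Finset.range i₀, (D i).indicator (fun _ => (1 : ℝ≥0∞)) ω :=
            (Finset.sum_congr rfl hee).symm
          _ ≤ ∑' i : ℕ, (D i).indicator (fun _ => (1 : ℝ≥0∞)) ω := ENNReal.sum_le_tsum _
      exact le_trans hτk (le_trans hik hsum)
  have hlin : ∫⁻ ω, τ ω ∂P ≤ ∑' i : ℕ, P (D i) := by
    calc ∫⁻ ω, τ ω ∂P
        ≤ ∫⁻ ω, (∑' i : ℕ, (D i).indicator (fun _ => (1 : ℝ≥0∞)) ω) ∂P :=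
          lintegral_mono hptτ
      _ = ∑' i : ℕ, ∫⁻ ω, (D i).indicator (fun _ => (1 : ℝ≥0∞)) ω ∂P :=
          lintegral_tsum fun i => (measurable_const.indicator (hDm0 i)).aemeasurable
      _ = ∑' i : ℕ, P (D i) := by
          refine tsum_congr fun i => ?_
          exact lintegral_indicator_one (hDm0 i)
  have htail : ∑' i : ℕ, P (D i) ≤ ((w : ℝ≥0∞) + 1) + ENNReal.ofReal C₀ := by
    rw [ENNReal.tsum_eq_iSup_sum]
    refine iSup_le fun s => ?_
    obtain ⟨M, hM⟩ := s.exists_nat_subset_range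
    have hsub : ∑ i ∈ s, P (D i) ≤ ∑ i ∈ Finset.range (M + w + 1), P (D i) :=
      Finset.sum_le_sum_of_subset (hM.trans (Finset.range_subset_range.mpr (by omega)))
    have hco : (∑ i ∈ Finset.Ico 0 (w + 1), P (D i))
        + ∑ i ∈ Finset.Ico (w + 1) (M + w + 1), P (D i)
        = ∑ i ∈ Finset.Ico 0 (M + w + 1), P (D i) :=
      Finset.sum_Ico_consecutive _ (by omega) (by omega)
    have hfirst : ∑ i ∈ Finset.Ico 0 (w + 1), P (D i) ≤ (w : ℝ≥0∞) + 1 := by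
      calc ∑ i ∈ Finset.Ico 0 (w + 1), P (D i) ≤ ∑ _i ∈ Finset.Ico 0 (w + 1), 1 :=
          Finset.sum_le_sum fun i _ => prob_le_one
        _ = (w : ℝ≥0∞) + 1 := by simp
    have hsecond : ∑ i ∈ Finset.Ico (w + 1) (M + w + 1), P (D i) ≤ ENNReal.ofReal C₀ := by
      have hIco_sub : Finset.Ico (w + 1) (M + w + 1) ⊆ Finset.Ioc w (M + w + 1) := by
        intro i hi
        have := Finset.mem_Ico.mp hi
        exact Finset.mem_Ioc.mpr (by omega)
      calc ∑ i ∈ Finset.Ico (w + 1) (M + w + 1), P (D i)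
          ≤ ∑ i ∈ Finset.Ioc w (M + w + 1), P (D i) := Finset.sum_le_sum_of_subset hIco_sub
        _ = ENNReal.ofReal (∑ i ∈ Finset.Ioc w (M + w + 1), (P (D i)).toReal) := by
            rw [ENNReal.ofReal_sum_of_nonneg fun i _ => ENNReal.toReal_nonneg]
            exact Finset.sum_congr rfl fun i _ =>
              (ENNReal.ofReal_toReal (measure_ne_top P _)).symm
        _ ≤ ENNReal.ofReal C₀ := ENNReal.ofReal_le_ofReal (hSig (M + w + 1) (by omega))
    calc ∑ i ∈ s, P (D i) ≤ ∑ i ∈ Finset.range (M + w + 1), P (D i) := hsub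
      _ = (∑ i ∈ Finset.Ico 0 (w + 1), P (D i))
          + ∑ i ∈ Finset.Ico (w + 1) (M + w + 1), P (D i) := by
          rw [Finset.range_eq_Ico, ← hco]
      _ ≤ ((w : ℝ≥0∞) + 1) + ENNReal.ofReal C₀ := add_le_add hfirst hsecond
  calc ∫⁻ ω, τ ω ∂P ≤ ∑' i : ℕ, P (D i) := hlin
    _ ≤ ((w : ℝ≥0∞) + 1) + ENNReal.ofReal C₀ := htail
    _ < ∞ := by
        refine ENNReal.add_lt_top.mpr ⟨?_, ENNReal.ofReal_lt_top⟩
        have h1 : ((w : ℝ≥0∞) + 1) ≠ ∞ := by simp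
        exact lt_top_iff_ne_top.mpr h1
end

section
/- Under the stated assumptions, for every threshold b > 0, with K = v/(μ^*(1 − q/w)) one has the explicit bound E[τ_b] ≤ (b + wμ + K + √(Kb) + √(Kwμ)) / (μ^*(1 − q/w)). -/
open MeasureTheory Filter Set
open scoped ENNReal

lemma aux_quad (c v b mw x : ℝ) (hc : 0 < c) (hv : 0 < v) (hb : 0 < b)
    (hmw : 0 ≤ mw) (hx : 0 ≤ x)
    (h : c * x ≤ b + mw + Real.sqrt (v * x)) :
    x ≤ (b + mw + (v / c + Real.sqrt (v / c * b) + Real.sqrt (v / c * mw))) / c := by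
  set K := v / c with hK
  have hK0 : 0 < K := div_pos hv hc
  set u := Real.sqrt (v * x) with hu
  have hu0 : 0 ≤ u := Real.sqrt_nonneg _
  have hu2 : u ^ 2 = v * x := Real.sq_sqrt (by positivity)
  set s1 := Real.sqrt (K * b) with hs1
  have hs10 : 0 ≤ s1 := Real.sqrt_nonneg _
  have hs12 : s1 ^ 2 = K * b := Real.sq_sqrt (by positivity)
  set s2 := Real.sqrt (K * mw) with hs2
  have hs20 : 0 ≤ s2 := Real.sqrt_nonneg _
  have hs22 : s2 ^ 2 = K * mw := Real.sq_sqrt (by positivity)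
  have hvK : v = c * K := by rw [hK, mul_div_assoc', mul_div_cancel_left₀ v hc.ne']
  have key : u ≤ K + s1 + s2 := by
    by_contra hcon
    push_neg at hcon
    have h1 : u ^ 2 = c * K * x := by rw [hu2, hvK]
    nlinarith [mul_nonneg hs10 hs20, mul_pos hK0 (lt_of_le_of_lt (by positivity) hcon)]
  rw [le_div_iff₀ hc]
  nlinarith

lemma aux_amgm (y ε : ℝ) (hε : 0 < ε) : |y| ≤ (ε * y ^ 2 + ε⁻¹) / 2 := by
  have key : 2 * ε * |y| ≤ ε ^ 2 * y ^ 2 + 1 := by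
    nlinarith [sq_nonneg (ε * |y| - 1), sq_abs y]
  have h2 : |y| * 2 ≤ ε * y ^ 2 + ε⁻¹ := by
    rw [← mul_le_mul_iff_right₀ hε]
    calc ε * (|y| * 2) = 2 * ε * |y| := by ring
      _ ≤ ε ^ 2 * y ^ 2 + 1 := key
      _ = ε * (ε * y ^ 2 + ε⁻¹) := by
          field_simp
  linarith

set_option maxHeartbeats 1000000 in
/-- Proposition 1(ii): with `K = v / (μ* (1 - q/w))`, the expected hitting time satisfies
`E[τ_b] ≤ (b + wμ + K + √(Kb) + √(Kwμ)) / (μ* (1 - q/w))`. -/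
theorem expected_hitting_time_explicit_bound
    {Ω : Type*} [m0 : MeasurableSpace Ω] (P : Measure Ω) [IsProbabilityMeasure P]
    (𝒢 : Filtration ℕ m0) (h𝒢0 : 𝒢 0 = ⊥)
    (Y : ℕ → Ω → ℝ)
    (hY2 : ∀ n, 1 ≤ n → MemLp (Y n) 2 P)
    (hadp : ∀ n, 1 ≤ n → StronglyMeasurable[𝒢 n] (Y n))
    (w q : ℕ) (hq : 0 < q) (hqw : q < w)
    (N : Set ℕ) (hN : ∀ m ∈ N, w < m)
    (μstar μlow μ v : ℝ)
    (hμstar : 0 < μstar) (hμlow : 0 < μlow) (hμ : 0 < μ) (hv : 0 < v)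
    (haOut : ∀ n, w < n → n ∉ N →
      (fun _ => μstar) ≤ᵐ[P] P[Y n | 𝒢 (n - w - 1)])
    (haIn : ∀ n, w < n → n ∈ N →
      (fun _ => μlow) ≤ᵐ[P] P[Y n | 𝒢 (n - w - 1)])
    (hbnd : ∀ n, w < n → P[Y n | 𝒢 (n - 1)] ≤ᵐ[P] (fun _ => μ))
    (hvar : ∀ n, w < n → P[(fun ω => (Y n ω) ^ 2) | 𝒢 (n - 1)] ≤ᵐ[P] (fun _ => v))
    (hd : ∀ (n : ℕ) (s : Finset ℕ),
      (∀ m ∈ s, m ∈ N ∧ m ∈ Finset.Ioc w (w + n)) → (s.card : ℝ) ≤ n * q / w)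
    (S : ℕ → Ω → ℝ) (hS : ∀ n ω, S n ω = ∑ i ∈ Finset.Ioc w n, Y i ω)
    (b : ℝ) (hb : 0 < b)
    (τ : Ω → ℝ≥0∞)
    (hτ : ∀ ω, τ ω = sInf {t : ℝ≥0∞ | ∃ n : ℕ, t = n ∧ w < n ∧ b ≤ S n ω})
    (K : ℝ) (hK : K = v / (μstar * (1 - (q : ℝ) / w))) :
    ∫⁻ ω, τ ω ∂P ≤
      ENNReal.ofReal
        ((b + w * μ + (K + Real.sqrt (K * b) + Real.sqrt (K * (w * μ)))) /
          (μstar * (1 - (q : ℝ) / w))) := by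
  classical
  have hw1 : 1 ≤ w := by omega
  set c : ℝ := μstar * (1 - (q : ℝ) / w) with hc_def
  have hqw' : (q : ℝ) / w < 1 := by
    rw [div_lt_one (by positivity)]
    exact_mod_cast hqw
  have hc : 0 < c := mul_pos hμstar (by linarith)
  -- basic integrability and measurability
  have hYint : ∀ i, 1 ≤ i → Integrable (Y i) P := fun i hi => (hY2 i hi).integrable one_le_two
  have hY2int : ∀ i, 1 ≤ i → Integrable (fun ω => Y i ω ^ 2) P := fun i hi => (hY2 i hi).integrable_sq
  have hSmeas : ∀ n t : ℕ, n ≤ t → StronglyMeasurable[𝒢 t] (S n) := by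
    intro n t hnt
    have : S n = fun ω => ∑ i ∈ Finset.Ioc w n, Y i ω := funext (hS n)
    rw [this]
    apply Finset.stronglyMeasurable_fun_sum
    intro i hi
    rw [Finset.mem_Ioc] at hi
    exact ((hadp i (by omega)).mono (𝒢.mono (le_trans hi.2 hnt)))
  have hSint : ∀ n, Integrable (S n) P := by
    intro n
    have : S n = fun ω => ∑ i ∈ Finset.Ioc w n, Y i ω := funext (hS n)
    rw [this]
    apply integrable_finset_sum
    intro i hi
    rw [Finset.mem_Ioc] at hi
    exact hYint i (by omega)
  -- the sets C t = {τ > t}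
  set C : ℕ → Set Ω := fun t => {ω | ∀ n, w < n → n ≤ t → S n ω < b} with hC_def
  have hCanti : ∀ s t : ℕ, s ≤ t → C t ⊆ C s := by
    intro s t hst ω hω n hn hns
    exact hω n hn (le_trans hns hst)
  have hCuniv : ∀ t, t ≤ w → C t = univ := by
    intro t ht
    ext ω; simp only [hC_def, mem_setOf_eq, mem_univ, iff_true]
    intro n hn hnt; omega
  have hCmeas𝒢 : ∀ t, MeasurableSet[𝒢 t] (C t) := by
    intro t
    have : C t = ⋂ n ∈ Finset.Ioc w t, {ω | S n ω < b} := by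
      ext ω
      simp only [hC_def, mem_setOf_eq, mem_iInter, Finset.mem_Ioc]
      constructor
      · intro h n hn; exact h n hn.1 hn.2
      · intro h n hn hnt; exact h n ⟨hn, hnt⟩
    rw [this]
    apply Finset.measurableSet_biInter
    intro n hn
    rw [Finset.mem_Ioc] at hn
    exact measurableSet_lt (hSmeas n t hn.2).measurable measurable_const
  have hCmeas : ∀ t, MeasurableSet (C t) := fun t => 𝒢.le t _ (hCmeas𝒢 t)
  have hCfin : ∀ t, P (C t) ≠ ⊤ := fun t => measure_ne_top P _
  -- real-valued probability
  set pr : Set Ω → ℝ := fun A => (P A).toReal with hpr_def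
  have hpr_nonneg : ∀ A, 0 ≤ pr A := fun A => ENNReal.toReal_nonneg
  have hpr_mono : ∀ A B : Set Ω, A ⊆ B → pr A ≤ pr B := by
    intro A B hAB
    exact ENNReal.toReal_le_toReal (measure_ne_top P A) (measure_ne_top P B) |>.2 (measure_mono hAB)
  have hpr_univ : pr univ = 1 := by simp [hpr_def]
  have hpr_le_one : ∀ A, pr A ≤ 1 := by
    intro A; rw [← hpr_univ]; exact hpr_mono _ _ (subset_univ A)
  -- S t < b on C t for t ≥ w
  have hCS : ∀ t, w ≤ t → ∀ ω ∈ C t, S t ω < b := by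
    intro t ht ω hω
    rcases eq_or_lt_of_le ht with h | h
    · rw [hS]
      simp [← h]
      exact hb
    · exact hω t h le_rfl
  -- MAIN REAL LEMMA
  have main : ∀ T : ℕ, w < T →
      ∑ t ∈ Finset.range T, pr (C t) ≤
        (b + w * μ + (v / c + Real.sqrt (v / c * b) + Real.sqrt (v / c * (w * μ)))) / c := by
    intro T hT
    set x : ℝ := ∑ t ∈ Finset.range T, pr (C t) with hx_def
    -- splitting of x
    have hIocIco : ∀ a b : ℕ, Finset.Ioc a b = Finset.Ico (a+1) (b+1) := by
      intro a b; ext i; simp only [Finset.mem_Ioc, Finset.mem_Ico]; omega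
    have shift_sum : ∀ (a b : ℕ) (f : ℕ → ℝ),
        ∑ i ∈ Finset.Ioc a b, f i = ∑ t ∈ Finset.range (b - a), f (a + 1 + t) := by
      intro a b f
      rw [hIocIco, Finset.sum_Ico_eq_sum_range, show b + 1 - (a + 1) = b - a from by omega]
    have hsplit : x = w + ∑ t ∈ Finset.Ico w T, pr (C t) := by
      have h1 : ∀ t ∈ Finset.Ico 0 w, pr (C t) = 1 := by
        intro t ht
        rw [Finset.mem_Ico] at ht
        rw [hCuniv t (by omega)]
        exact hpr_univ
      calc x = ∑ t ∈ Finset.Ico 0 T, pr (C t) := by rw [hx_def, Finset.range_eq_Ico]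
        _ = ∑ t ∈ Finset.Ico 0 w, pr (C t) + ∑ t ∈ Finset.Ico w T, pr (C t) :=
            (Finset.sum_Ico_consecutive _ (Nat.zero_le w) (le_of_lt hT)).symm
        _ = w + ∑ t ∈ Finset.Ico w T, pr (C t) := by
            rw [Finset.sum_congr rfl h1]
            simp
    have hx_pos : 0 < x := by
      have h2 : 0 ≤ ∑ t ∈ Finset.Ico w T, pr (C t) := Finset.sum_nonneg fun t _ => hpr_nonneg _
      have hw1' : (1:ℝ) ≤ w := by exact_mod_cast hw1
      rw [hsplit]; linarith
    have sum_CE : ∑ i ∈ Finset.Ioc w T, pr (C (i - 1)) = x - w := by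
      have h1 : ∑ i ∈ Finset.Ioc w T, pr (C (i - 1)) = ∑ t ∈ Finset.Ico w T, pr (C t) := by
        rw [shift_sum, Finset.sum_Ico_eq_sum_range]
        apply Finset.sum_congr rfl
        intro j _
        rw [show w + 1 + j - 1 = w + j from by omega]
      rw [h1, hsplit]; ring
    -- drift inequality
    have drift : c * x ≤ ∑ i ∈ Finset.Ioc w (T + w), ∫ ω in C (i - w - 1), (P[Y i | 𝒢 (i - w - 1)]) ω ∂P := by
      have hg_ae : ∀ᵐ ω ∂P, ∀ i ∈ Finset.Ioc w (T + w),
          (0 ≤ (P[Y i | 𝒢 (i - w - 1)]) ω ∧ (i ∉ N → μstar ≤ (P[Y i | 𝒢 (i - w - 1)]) ω)) := by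
        rw [Filter.eventually_all_finset]
        intro i hi
        rw [Finset.mem_Ioc] at hi
        by_cases hN' : i ∈ N
        · filter_upwards [haIn i hi.1 hN'] with ω hω
          exact ⟨by linarith, fun h => (h hN').elim⟩
        · filter_upwards [haOut i hi.1 hN'] with ω hω
          exact ⟨by linarith, fun _ => hω⟩
      have hpt : ∀ᵐ ω ∂P,
          c * (∑ t ∈ Finset.range T, (C t).indicator (fun _ => (1:ℝ)) ω)
            ≤ ∑ i ∈ Finset.Ioc w (T + w),
                (C (i - w - 1)).indicator (fun ω' => (P[Y i | 𝒢 (i - w - 1)]) ω') ω := by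
        filter_upwards [hg_ae] with ω hω
        have hex : ∃ t, T ≤ t ∨ ω ∉ C t := ⟨T, Or.inl le_rfl⟩
        set m := Nat.find hex with hm_def
        have hmle : m ≤ T := Nat.find_le (Or.inl le_rfl)
        have hlt : ∀ t, t < m → t < T ∧ ω ∈ C t := by
          intro t ht
          have h := Nat.find_min hex ht
          push_neg at h
          exact ⟨h.1, h.2⟩
        have hge : ∀ t, m ≤ t → t < T → ω ∉ C t := by
          intro t hmt htT
          rcases Nat.find_spec hex with h | h
          · omega
          · intro hmem
            exact h (hCanti m t hmt hmem)
        have hwm : w < m := by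
          by_contra hcon
          push_neg at hcon
          rcases Nat.find_spec hex with h | h
          · omega
          · apply h
            rw [hCuniv m hcon]
            trivial
        have hsum : (∑ t ∈ Finset.range T, (C t).indicator (fun _ => (1:ℝ)) ω) = m := by
          have h1 : ∀ t ∈ Finset.range T,
              (C t).indicator (fun _ => (1:ℝ)) ω = if t < m then 1 else 0 := by
            intro t ht
            rw [Finset.mem_range] at ht
            by_cases h2 : t < m
            · rw [if_pos h2, Set.indicator_of_mem (hlt t h2).2]
            · rw [if_neg h2, Set.indicator_of_notMem (hge t (le_of_not_gt h2) ht)]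
          rw [Finset.sum_congr rfl h1, Finset.sum_boole]
          have : (Finset.range T).filter (fun t => t < m) = Finset.range m := by
            ext t
            simp only [Finset.mem_filter, Finset.mem_range]
            omega
          rw [this, Finset.card_range]
        have hstep1 : ∀ i ∈ Finset.Ioc w (w + m),
            (C (i - w - 1)).indicator (fun ω' => (P[Y i | 𝒢 (i - w - 1)]) ω') ω
              = (P[Y i | 𝒢 (i - w - 1)]) ω := by
          intro i hi
          rw [Finset.mem_Ioc] at hi
          exact Set.indicator_of_mem (hlt (i - w - 1) (by omega)).2 _
        have hcount : c * m ≤ ∑ i ∈ Finset.Ioc w (w + m), (P[Y i | 𝒢 (i - w - 1)]) ω := by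
          set sbad := (Finset.Ioc w (w + m)).filter (fun i => i ∈ N) with hsbad_def
          set sgood := (Finset.Ioc w (w + m)).filter (fun i => i ∉ N) with hsgood_def
          have hbadcard : (sbad.card : ℝ) ≤ m * q / w := by
            apply hd m sbad
            intro j hj
            rw [hsbad_def, Finset.mem_filter] at hj
            exact ⟨hj.2, hj.1⟩
          have hcards : sbad.card + sgood.card = m := by
            rw [hsbad_def, hsgood_def, Finset.card_filter_add_card_filter_not]
            rw [Nat.card_Ioc]
            omega
          have hsplitf : ∑ i ∈ Finset.Ioc w (w + m), (P[Y i | 𝒢 (i - w - 1)]) ω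
              = ∑ i ∈ sbad, (P[Y i | 𝒢 (i - w - 1)]) ω
                + ∑ i ∈ sgood, (P[Y i | 𝒢 (i - w - 1)]) ω :=
            (Finset.sum_filter_add_sum_filter_not _ _ _).symm
          have hIocsub : Finset.Ioc w (w + m) ⊆ Finset.Ioc w (T + w) :=
            Finset.Ioc_subset_Ioc le_rfl (by omega)
          have hbad_nonneg : (0:ℝ) ≤ ∑ i ∈ sbad, (P[Y i | 𝒢 (i - w - 1)]) ω := by
            apply Finset.sum_nonneg
            intro i hi
            rw [hsbad_def, Finset.mem_filter] at hi
            exact (hω i (hIocsub hi.1)).1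
          have hgood_lb : μstar * (sgood.card : ℝ) ≤ ∑ i ∈ sgood, (P[Y i | 𝒢 (i - w - 1)]) ω := by
            rw [mul_comm]
            have := Finset.card_nsmul_le_sum sgood (fun i => (P[Y i | 𝒢 (i - w - 1)]) ω) μstar
              (fun i hi => by
                rw [hsgood_def, Finset.mem_filter] at hi
                exact (hω i (hIocsub hi.1)).2 hi.2)
            rw [nsmul_eq_mul] at this
            exact this
          have hgcard : (sgood.card : ℝ) ≥ (m : ℝ) - m * q / w := by
            have h1 : (sgood.card : ℝ) = (m : ℝ) - sbad.card := by
              have := hcards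
              push_cast [← this]
              ring
            rw [h1]
            linarith
          have hfinal : c * m ≤ μstar * (sgood.card : ℝ) := by
            have h2 : c * m = μstar * ((m : ℝ) - m * q / w) := by
              rw [hc_def]
              field_simp
            rw [h2]
            apply mul_le_mul_of_nonneg_left _ (le_of_lt hμstar)
            linarith
          linarith
        rw [hsum]
        calc c * (m:ℝ) ≤ ∑ i ∈ Finset.Ioc w (w + m), (P[Y i | 𝒢 (i - w - 1)]) ω := hcount
          _ = ∑ i ∈ Finset.Ioc w (w + m),
                (C (i - w - 1)).indicator (fun ω' => (P[Y i | 𝒢 (i - w - 1)]) ω') ω :=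
              (Finset.sum_congr rfl hstep1).symm
          _ ≤ ∑ i ∈ Finset.Ioc w (T + w),
                (C (i - w - 1)).indicator (fun ω' => (P[Y i | 𝒢 (i - w - 1)]) ω') ω := by
              apply Finset.sum_le_sum_of_subset_of_nonneg
                (Finset.Ioc_subset_Ioc le_rfl (by omega))
              intro i hi _
              exact Set.indicator_apply_nonneg (fun _ => (hω i hi).1)
      have hlhs_int : Integrable
          (fun ω => c * ∑ t ∈ Finset.range T, (C t).indicator (fun _ => (1:ℝ)) ω) P := by
        apply Integrable.const_mul
        apply integrable_finset_sum
        intro t _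
        exact (integrable_const (1:ℝ)).indicator (hCmeas t)
      have hrhs_int : Integrable
          (fun ω => ∑ i ∈ Finset.Ioc w (T + w),
            (C (i - w - 1)).indicator (fun ω' => (P[Y i | 𝒢 (i - w - 1)]) ω') ω) P := by
        apply integrable_finset_sum
        intro i _
        exact integrable_condExp.indicator (hCmeas (i - w - 1))
      have hint := integral_mono_ae hlhs_int hrhs_int hpt
      have hL : ∫ ω, (c * ∑ t ∈ Finset.range T, (C t).indicator (fun _ => (1:ℝ)) ω) ∂P = c * x := by
        rw [integral_const_mul]
        congr 1
        rw [integral_finset_sum _ (fun t _ => (integrable_const (1:ℝ)).indicator (hCmeas t))]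
        apply Finset.sum_congr rfl
        intro t _
        rw [integral_indicator (hCmeas t), setIntegral_const, smul_eq_mul, mul_one]
        rfl
      have hR : ∫ ω, (∑ i ∈ Finset.Ioc w (T + w),
            (C (i - w - 1)).indicator (fun ω' => (P[Y i | 𝒢 (i - w - 1)]) ω') ω) ∂P
          = ∑ i ∈ Finset.Ioc w (T + w), ∫ ω in C (i - w - 1), (P[Y i | 𝒢 (i - w - 1)]) ω ∂P := by
        rw [integral_finset_sum _ (fun i _ => integrable_condExp.indicator (hCmeas (i - w - 1)))]
        apply Finset.sum_congr rfl
        intro i _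
        rw [integral_indicator (hCmeas (i - w - 1))]
      rw [hL, hR] at hint
      exact hint
    -- transfer conditional expectation
    have transfer : ∀ i ∈ Finset.Ioc w (T + w),
        ∫ ω in C (i - w - 1), (P[Y i | 𝒢 (i - w - 1)]) ω ∂P = ∫ ω in C (i - w - 1), Y i ω ∂P := by
      intro i hi
      rw [Finset.mem_Ioc] at hi
      exact setIntegral_condExp (𝒢.le (i - w - 1)) (hYint i (by omega)) (hCmeas𝒢 (i - w - 1))
    -- decomposition
    set E : ℕ → Set Ω := fun i => if i ≤ T then C (i - 1) else (∅ : Set Ω) with hE_def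
    have hE_sub : ∀ i, w < i → E i ⊆ C (i - w - 1) := by
      intro i _
      rw [hE_def]
      dsimp only
      split_ifs
      · exact hCanti _ _ (by omega)
      · exact Set.empty_subset _
    have hE_meas𝒢 : ∀ i, MeasurableSet[𝒢 (i-1)] (E i) := by
      intro i
      rw [hE_def]
      dsimp only
      split_ifs
      · exact hCmeas𝒢 (i-1)
      · exact @MeasurableSet.empty _ (𝒢 (i-1))
    have hE_meas : ∀ i, MeasurableSet (E i) := fun i => 𝒢.le (i-1) _ (hE_meas𝒢 i)
    have decomp : ∀ i ∈ Finset.Ioc w (T + w),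
        ∫ ω in C (i - w - 1), Y i ω ∂P
          = ∫ ω in E i, Y i ω ∂P + ∫ ω in C (i - w - 1) \ E i, Y i ω ∂P := by
      intro i hi
      rw [Finset.mem_Ioc] at hi
      have hEsub := hE_sub i hi.1
      have hYi : Integrable (Y i) P := hYint i (by omega)
      have h := setIntegral_union (s := E i) (t := C (i - w - 1) \ E i) (f := Y i) (μ := P)
        Set.disjoint_sdiff_right ((hCmeas (i - w - 1)).diff (hE_meas i))
        hYi.integrableOn hYi.integrableOn
      rw [Set.union_diff_cancel hEsub] at h
      exact h
    have mid : ∀ i ∈ Finset.Ioc w (T + w),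
        ∫ ω in C (i - w - 1) \ E i, Y i ω ∂P ≤ μ * (pr (C (i - w - 1)) - pr (E i)) := by
      intro i hi
      rw [Finset.mem_Ioc] at hi
      have hmeas𝒢 : MeasurableSet[𝒢 (i-1)] (C (i - w - 1) \ E i) := by
        apply MeasurableSet.diff _ (hE_meas𝒢 i)
        exact (𝒢.mono (show i - w - 1 ≤ i - 1 by omega)) _ (hCmeas𝒢 (i - w - 1))
      have hmeas : MeasurableSet (C (i - w - 1) \ E i) := 𝒢.le (i-1) _ hmeas𝒢
      have h1 : ∫ ω in C (i - w - 1) \ E i, Y i ω ∂P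
          = ∫ ω in C (i - w - 1) \ E i, (P[Y i | 𝒢 (i-1)]) ω ∂P :=
        (setIntegral_condExp (𝒢.le (i-1)) (hYint i (by omega)) hmeas𝒢).symm
      have h2 : ∫ ω in C (i - w - 1) \ E i, (P[Y i | 𝒢 (i-1)]) ω ∂P
          ≤ ∫ ω in C (i - w - 1) \ E i, (fun _ => μ) ω ∂P := by
        apply setIntegral_mono_ae integrable_condExp.integrableOn
          (integrableOn_const (measure_ne_top P _))
        exact hbnd i hi.1
      have h3 : ∫ ω in C (i - w - 1) \ E i, (fun _ => μ) ω ∂P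
          = μ * pr (C (i - w - 1) \ E i) := by
        rw [setIntegral_const]
        rw [smul_eq_mul, mul_comm]
        rfl
      have h4 : pr (C (i - w - 1) \ E i) = pr (C (i - w - 1)) - pr (E i) := by
        have hEsub := hE_sub i hi.1
        have h5 : P (C (i - w - 1) \ E i) = P (C (i - w - 1)) - P (E i) :=
          measure_diff hEsub (hE_meas i).nullMeasurableSet (measure_ne_top P _)
        rw [hpr_def]
        dsimp only
        rw [h5, ENNReal.toReal_sub_of_le (measure_mono hEsub) (measure_ne_top P _)]
      rw [h4] at h3
      calc ∫ ω in C (i - w - 1) \ E i, Y i ω ∂P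
          ≤ ∫ ω in C (i - w - 1) \ E i, (fun _ => μ) ω ∂P := h1 ▸ h2
        _ = μ * (pr (C (i - w - 1)) - pr (E i)) := h3
    have sum_D : ∑ i ∈ Finset.Ioc w (T + w), pr (C (i - w - 1)) = x := by
      rw [shift_sum, show T + w - w = T from by omega, hx_def]
      apply Finset.sum_congr rfl
      intro j _
      rw [show w + 1 + j - w - 1 = j from by omega]
    have sum_E : ∑ i ∈ Finset.Ioc w (T + w), pr (E i) = x - w := by
      have hsplit2 : ∑ i ∈ Finset.Ioc w T, pr (E i) + ∑ i ∈ Finset.Ioc T (T + w), pr (E i)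
          = ∑ i ∈ Finset.Ioc w (T + w), pr (E i) :=
        Finset.sum_Ioc_consecutive _ (le_of_lt hT) (by omega)
      have h2 : ∑ i ∈ Finset.Ioc T (T + w), pr (E i) = 0 := by
        apply Finset.sum_eq_zero
        intro i hi
        rw [Finset.mem_Ioc] at hi
        rw [hE_def]
        dsimp only
        rw [if_neg (by omega)]
        simp [hpr_def]
      have h3 : ∑ i ∈ Finset.Ioc w T, pr (E i) = ∑ i ∈ Finset.Ioc w T, pr (C (i - 1)) := by
        apply Finset.sum_congr rfl
        intro i hi
        rw [Finset.mem_Ioc] at hi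
        rw [hE_def]
        dsimp only
        rw [if_pos hi.2]
      rw [← hsplit2, h2, h3, sum_CE]
      ring
    have hvx : 0 < v * x := mul_pos hv hx_pos
    set ε : ℝ := (Real.sqrt (v * x))⁻¹ with hε_def
    have hsq : Real.sqrt (v * x) * Real.sqrt (v * x) = v * x := Real.mul_self_sqrt (le_of_lt hvx)
    have hsqpos : 0 < Real.sqrt (v * x) := Real.sqrt_pos.2 hvx
    have hε : 0 < ε := inv_pos.2 hsqpos
    set V : ℕ → ℝ := fun t => ∫ ω in C t, S t ω ∂P with hV_def
    set A' : ℕ → Set Ω := fun i => C (i - 1) \ C i with hA'_def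
    have hA'meas : ∀ i, MeasurableSet (A' i) := fun i => (hCmeas (i-1)).diff (hCmeas i)
    have hA'subset : ∀ i, A' i ⊆ C (i - 1) := fun i => Set.diff_subset
    have hSsucc : ∀ i, w < i → ∀ ω, S i ω = S (i - 1) ω + Y i ω := by
      intro i hi ω
      rw [hS, hS]
      have hins : Finset.Ioc w i = insert i (Finset.Ioc w (i-1)) := by
        ext j; simp only [Finset.mem_Ioc, Finset.mem_insert]; omega
      rw [hins, Finset.sum_insert (by simp only [Finset.mem_Ioc]; omega)]
      ring
    have step : ∀ i ∈ Finset.Ioc w T, ∫ ω in C (i - 1), Y i ω ∂P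
        = (V i - V (i - 1)) + ∫ ω in A' i, S i ω ∂P := by
      intro i hi
      rw [Finset.mem_Ioc] at hi
      have h1 : ∫ ω in C (i-1), S i ω ∂P
          = ∫ ω in C (i-1), S (i-1) ω ∂P + ∫ ω in C (i-1), Y i ω ∂P := by
        rw [← integral_add ((hSint (i-1)).integrableOn) ((hYint i (by omega)).integrableOn)]
        exact integral_congr_ae (Eventually.of_forall fun ω => hSsucc i hi.1 ω)
      have h2 : ∫ ω in C (i-1), S i ω ∂P = V i + ∫ ω in A' i, S i ω ∂P := by
        have h := setIntegral_union (s := C i) (t := A' i) (f := S i) (μ := P)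
          Set.disjoint_sdiff_right (hA'meas i) (hSint i).integrableOn (hSint i).integrableOn
        rw [Set.union_diff_cancel (hCanti (i-1) i (by omega))] at h
        exact h
      have : V i + ∫ ω in A' i, S i ω ∂P = V (i-1) + ∫ ω in C (i-1), Y i ω ∂P := by
        rw [← h2, h1, hV_def]
      linarith [this]
    have telescope : ∑ i ∈ Finset.Ioc w T, (V i - V (i - 1)) = V T - V w := by
      rw [shift_sum]
      calc ∑ t ∈ Finset.range (T - w), (V (w+1+t) - V (w+1+t-1))
          = ∑ t ∈ Finset.range (T - w), (V (w+(t+1)) - V (w+t)) :=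
            Finset.sum_congr rfl (fun t _ => by
              rw [show w+1+t-1 = w+t from by omega, show w+1+t = w+(t+1) from by omega])
        _ = V (w+(T-w)) - V (w+0) := Finset.sum_range_sub (fun j => V (w+j)) (T-w)
        _ = V T - V w := by rw [show w+(T-w) = T from by omega, Nat.add_zero]
    have hVw : V w = 0 := by
      have hzero : ∀ ω, S w ω = 0 := fun ω => by rw [hS]; simp
      calc V w = ∫ ω in C w, (0:ℝ) ∂P :=
            integral_congr_ae (Eventually.of_forall fun ω => hzero ω)
        _ = 0 := by simp
    have hVT : V T ≤ b * pr (C T) := by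
      have h := setIntegral_mono_on (hSint T).integrableOn
        (integrableOn_const (measure_ne_top P _)) (hCmeas T)
        (fun ω hω => le_of_lt (hCS T (le_of_lt hT) ω hω))
      rw [setIntegral_const, smul_eq_mul, mul_comm] at h
      exact h
    have hprA' : ∀ i, w < i → pr (A' i) = pr (C (i-1)) - pr (C i) := by
      intro i hi
      have h5 : P (A' i) = P (C (i-1)) - P (C i) :=
        measure_diff (hCanti (i-1) i (by omega)) (hCmeas i).nullMeasurableSet (measure_ne_top P _)
      rw [hpr_def]
      dsimp only
      rw [hA'_def]
      dsimp only
      rw [h5, ENNReal.toReal_sub_of_le (measure_mono (hCanti (i-1) i (by omega))) (measure_ne_top P _)]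
    have sub3 : ∀ i ∈ Finset.Ioc w T, ∫ ω in A' i, Y i ω ^ 2 ∂P ≤ v * pr (C (i-1)) := by
      intro i hi
      rw [Finset.mem_Ioc] at hi
      have hm1 : ∫ ω in A' i, Y i ω ^ 2 ∂P ≤ ∫ ω in C (i-1), Y i ω ^ 2 ∂P := by
        apply setIntegral_mono_set (hY2int i (by omega)).integrableOn
          (Eventually.of_forall fun ω => sq_nonneg _)
          (HasSubset.Subset.eventuallyLE (hA'subset i))
      have hm2 : ∫ ω in C (i-1), Y i ω ^ 2 ∂P
          = ∫ ω in C (i-1), (P[(fun ω => Y i ω ^ 2) | 𝒢 (i-1)]) ω ∂P :=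
        (setIntegral_condExp (𝒢.le (i-1)) (hY2int i (by omega)) (hCmeas𝒢 (i-1))).symm
      have hm3 : ∫ ω in C (i-1), (P[(fun ω => Y i ω ^ 2) | 𝒢 (i-1)]) ω ∂P
          ≤ ∫ ω in C (i-1), (fun _ => v) ω ∂P := by
        apply setIntegral_mono_ae integrable_condExp.integrableOn
          (integrableOn_const (measure_ne_top P _))
        exact hvar i hi.1
      have hm4 : ∫ ω in C (i-1), (fun _ => v) ω ∂P = v * pr (C (i-1)) := by
        rw [setIntegral_const, smul_eq_mul, mul_comm]
        rfl
      linarith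
    have habs : ∀ i ∈ Finset.Ioc w T, ∫ ω in A' i, |Y i ω| ∂P
        ≤ (ε * (v * pr (C (i-1))) + ε⁻¹ * pr (A' i)) / 2 := by
      intro i hi
      have hiw : w < i := (Finset.mem_Ioc.1 hi).1
      have hint2 : IntegrableOn (fun ω => (ε * Y i ω ^ 2 + ε⁻¹) / 2) (A' i) P := by
        apply Integrable.integrableOn
        exact (((hY2int i (by omega)).const_mul ε).add (integrable_const _)).div_const 2
      have h1 : ∫ ω in A' i, |Y i ω| ∂P ≤ ∫ ω in A' i, (ε * Y i ω ^ 2 + ε⁻¹) / 2 ∂P := by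
        apply setIntegral_mono_on (hYint i (by omega)).abs.integrableOn hint2 (hA'meas i)
        intro ω _
        exact aux_amgm _ ε hε
      have h2 : ∫ ω in A' i, (ε * Y i ω ^ 2 + ε⁻¹) / 2 ∂P
          = (ε * ∫ ω in A' i, Y i ω ^ 2 ∂P + ε⁻¹ * pr (A' i)) / 2 := by
        rw [integral_div, integral_add (((hY2int i (by omega)).const_mul ε).integrableOn)
          ((integrableOn_const (measure_ne_top P _)))]
        rw [integral_const_mul, setIntegral_const, smul_eq_mul, mul_comm]
        simp only [hpr_def, Measure.real]
        ring
      have h3 : ε * ∫ ω in A' i, Y i ω ^ 2 ∂P ≤ ε * (v * pr (C (i-1))) := by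
        exact mul_le_mul_of_nonneg_left (sub3 i hi) (le_of_lt hε)
      have h4 : (0:ℝ) ≤ ε⁻¹ * pr (A' i) := mul_nonneg (le_of_lt (inv_pos.2 hε)) (hpr_nonneg _)
      rw [h2] at h1
      have : (ε * ∫ ω in A' i, Y i ω ^ 2 ∂P + ε⁻¹ * pr (A' i)) / 2
          ≤ (ε * (v * pr (C (i-1))) + ε⁻¹ * pr (A' i)) / 2 := by linarith
      linarith
    have hA'S : ∀ i ∈ Finset.Ioc w T, ∫ ω in A' i, S i ω ∂P
        ≤ b * pr (A' i) + ∫ ω in A' i, |Y i ω| ∂P := by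
      intro i hi
      rw [Finset.mem_Ioc] at hi
      have hptw : ∀ ω ∈ A' i, S i ω ≤ b + |Y i ω| := by
        intro ω hω
        have h1 : S (i-1) ω < b := hCS (i-1) (by omega) ω (hA'subset i hω)
        have h2 := hSsucc i hi.1 ω
        have h3 : Y i ω ≤ |Y i ω| := le_abs_self _
        linarith
      have h1 : ∫ ω in A' i, S i ω ∂P ≤ ∫ ω in A' i, (b + |Y i ω|) ∂P := by
        apply setIntegral_mono_on (hSint i).integrableOn
          (((integrable_const b).add (hYint i (by omega)).abs).integrableOn) (hA'meas i) hptw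
      have h2 : ∫ ω in A' i, (b + |Y i ω|) ∂P = b * pr (A' i) + ∫ ω in A' i, |Y i ω| ∂P := by
        rw [integral_add (integrableOn_const (C := b) (measure_ne_top P _))
          ((hYint i (by omega)).abs.integrableOn)]
        rw [setIntegral_const, smul_eq_mul, mul_comm]
        rfl
      linarith
    have sum_prA' : ∑ i ∈ Finset.Ioc w T, pr (A' i) = pr (C w) - pr (C T) := by
      have h1 : ∑ i ∈ Finset.Ioc w T, pr (A' i)
          = ∑ i ∈ Finset.Ioc w T, (pr (C (i-1)) - pr (C i)) := by
        apply Finset.sum_congr rfl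
        intro i hi
        exact hprA' i (Finset.mem_Ioc.1 hi).1
      rw [h1, shift_sum]
      calc ∑ t ∈ Finset.range (T - w), (pr (C (w+1+t-1)) - pr (C (w+1+t)))
          = ∑ t ∈ Finset.range (T - w), (pr (C (w+t)) - pr (C (w+(t+1)))) :=
            Finset.sum_congr rfl (fun t _ => by
              rw [show w+1+t-1 = w+t from by omega, show w+1+t = w+(t+1) from by omega])
        _ = pr (C (w+0)) - pr (C (w+(T-w))) := Finset.sum_range_sub' (fun j => pr (C (w+j))) (T-w)
        _ = pr (C w) - pr (C T) := by rw [show w+(T-w) = T from by omega, Nat.add_zero]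
    have hprCw : pr (C w) = 1 := by rw [hCuniv w le_rfl]; exact hpr_univ
    have fpart : ∑ i ∈ Finset.Ioc w (T + w), ∫ ω in E i, Y i ω ∂P ≤ b + Real.sqrt (v * x) := by
      have hsplitE : ∑ i ∈ Finset.Ioc w (T + w), ∫ ω in E i, Y i ω ∂P
          = ∑ i ∈ Finset.Ioc w T, ∫ ω in C (i-1), Y i ω ∂P := by
        have hcons : ∑ i ∈ Finset.Ioc w T, ∫ ω in E i, Y i ω ∂P
            + ∑ i ∈ Finset.Ioc T (T + w), ∫ ω in E i, Y i ω ∂P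
            = ∑ i ∈ Finset.Ioc w (T + w), ∫ ω in E i, Y i ω ∂P :=
          Finset.sum_Ioc_consecutive _ (le_of_lt hT) (by omega)
        have h2 : ∑ i ∈ Finset.Ioc T (T + w), ∫ ω in E i, Y i ω ∂P = 0 := by
          apply Finset.sum_eq_zero
          intro i hi
          rw [Finset.mem_Ioc] at hi
          rw [hE_def]
          dsimp only
          rw [if_neg (by omega)]
          simp
        have h3 : ∑ i ∈ Finset.Ioc w T, ∫ ω in E i, Y i ω ∂P
            = ∑ i ∈ Finset.Ioc w T, ∫ ω in C (i-1), Y i ω ∂P := by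
          apply Finset.sum_congr rfl
          intro i hi
          rw [Finset.mem_Ioc] at hi
          rw [hE_def]
          dsimp only
          rw [if_pos hi.2]
        rw [← hcons, h2, h3]
        ring
      have key : ∑ i ∈ Finset.Ioc w T, ∫ ω in C (i-1), Y i ω ∂P
          ≤ (V T - V w) + ∑ i ∈ Finset.Ioc w T,
              (b * pr (A' i) + (ε * (v * pr (C (i-1))) + ε⁻¹ * pr (A' i)) / 2) := by
        calc ∑ i ∈ Finset.Ioc w T, ∫ ω in C (i-1), Y i ω ∂P
            = ∑ i ∈ Finset.Ioc w T, ((V i - V (i-1)) + ∫ ω in A' i, S i ω ∂P) :=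
              Finset.sum_congr rfl step
          _ = ∑ i ∈ Finset.Ioc w T, (V i - V (i-1)) + ∑ i ∈ Finset.Ioc w T, ∫ ω in A' i, S i ω ∂P :=
              Finset.sum_add_distrib
          _ ≤ (V T - V w) + ∑ i ∈ Finset.Ioc w T,
                (b * pr (A' i) + (ε * (v * pr (C (i-1))) + ε⁻¹ * pr (A' i)) / 2) := by
              rw [telescope]
              apply add_le_add le_rfl
              apply Finset.sum_le_sum
              intro i hi
              have := hA'S i hi
              have := habs i hi
              linarith
      have expand : ∑ i ∈ Finset.Ioc w T,
            (b * pr (A' i) + (ε * (v * pr (C (i-1))) + ε⁻¹ * pr (A' i)) / 2)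
          = b * (pr (C w) - pr (C T)) + (ε * v * (x - w) + ε⁻¹ * (pr (C w) - pr (C T))) / 2 := by
        have e1 : ∑ i ∈ Finset.Ioc w T, b * pr (A' i) = b * (pr (C w) - pr (C T)) := by
          rw [← Finset.mul_sum, sum_prA']
        have e2 : ∑ i ∈ Finset.Ioc w T, ε * (v * pr (C (i-1))) = ε * v * (x - w) := by
          rw [← Finset.mul_sum, ← Finset.mul_sum, sum_CE, mul_assoc]
        have e3 : ∑ i ∈ Finset.Ioc w T, ε⁻¹ * pr (A' i) = ε⁻¹ * (pr (C w) - pr (C T)) := by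
          rw [← Finset.mul_sum, sum_prA']
        rw [Finset.sum_add_distrib, e1, ← Finset.sum_div, Finset.sum_add_distrib, e2, e3]
      have hbound : (V T - V w) + (b * (pr (C w) - pr (C T))
            + (ε * v * (x - w) + ε⁻¹ * (pr (C w) - pr (C T))) / 2)
          ≤ b + Real.sqrt (v * x) := by
        have hw0 : (0:ℝ) ≤ w := Nat.cast_nonneg w
        have h1 : ε * v * (x - w) ≤ ε * v * x := by
          apply mul_le_mul_of_nonneg_left _ (mul_nonneg (le_of_lt hε) (le_of_lt hv))
          linarith
        have h3 : ε * v * x = Real.sqrt (v * x) := by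
          calc ε * v * x = (v * x) / Real.sqrt (v * x) := by rw [hε_def]; ring
            _ = Real.sqrt (v * x) := Real.div_sqrt
        have h4 : ε⁻¹ = Real.sqrt (v * x) := by rw [hε_def, inv_inv]
        have h7 : ε⁻¹ * (pr (C w) - pr (C T)) ≤ ε⁻¹ := by
          apply mul_le_of_le_one_right (le_of_lt (inv_pos.2 hε))
          rw [hprCw]
          linarith [hpr_nonneg (C T)]
        have h5 : V T ≤ b * pr (C T) := hVT
        have h6 : 0 ≤ pr (C T) := hpr_nonneg _
        have h8 : pr (C T) ≤ 1 := hpr_le_one (C T)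
        rw [hVw, hprCw]
        nlinarith [h1, h3, h4, h7, h5, h6, h8]
      rw [hsplitE]
      calc ∑ i ∈ Finset.Ioc w T, ∫ ω in C (i-1), Y i ω ∂P
          ≤ (V T - V w) + ∑ i ∈ Finset.Ioc w T,
              (b * pr (A' i) + (ε * (v * pr (C (i-1))) + ε⁻¹ * pr (A' i)) / 2) := key
        _ = (V T - V w) + (b * (pr (C w) - pr (C T))
              + (ε * v * (x - w) + ε⁻¹ * (pr (C w) - pr (C T))) / 2) := by rw [expand]
        _ ≤ b + Real.sqrt (v * x) := hbound
    -- assemble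
    have assemble : c * x ≤ b + w * μ + Real.sqrt (v * x) := by
      calc c * x ≤ ∑ i ∈ Finset.Ioc w (T + w), ∫ ω in C (i - w - 1), (P[Y i | 𝒢 (i - w - 1)]) ω ∂P := drift
        _ = ∑ i ∈ Finset.Ioc w (T + w), ∫ ω in C (i - w - 1), Y i ω ∂P := Finset.sum_congr rfl transfer
        _ = ∑ i ∈ Finset.Ioc w (T + w), (∫ ω in E i, Y i ω ∂P + ∫ ω in C (i - w - 1) \ E i, Y i ω ∂P) :=
            Finset.sum_congr rfl decomp
        _ = (∑ i ∈ Finset.Ioc w (T + w), ∫ ω in E i, Y i ω ∂P)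
              + ∑ i ∈ Finset.Ioc w (T + w), ∫ ω in C (i - w - 1) \ E i, Y i ω ∂P := Finset.sum_add_distrib
        _ ≤ (b + Real.sqrt (v * x)) + ∑ i ∈ Finset.Ioc w (T + w), μ * (pr (C (i - w - 1)) - pr (E i)) := by
            apply add_le_add fpart
            exact Finset.sum_le_sum mid
        _ = (b + Real.sqrt (v * x)) + μ * (x - (x - w)) := by
            rw [← Finset.mul_sum, Finset.sum_sub_distrib, sum_D, sum_E]
        _ = b + w * μ + Real.sqrt (v * x) := by ring
    have := aux_quad c v b (w * μ) x hc hv hb (by positivity) (le_of_lt hx_pos) (by linarith [assemble])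
    linarith [this]
  -- ENNReal wrap-up
  have hτ_eq : ∀ ω, τ ω = ∑' t : ℕ, (C t).indicator (fun _ => (1:ℝ≥0∞)) ω := by
    intro ω
    rw [hτ]
    by_cases hex : ∃ n : ℕ, w < n ∧ b ≤ S n ω
    · set n₀ := Nat.find hex with hn₀
      have hspec := Nat.find_spec hex
      have h1 : sInf {t : ℝ≥0∞ | ∃ n : ℕ, t = n ∧ w < n ∧ b ≤ S n ω} = n₀ := by
        apply le_antisymm
        · exact sInf_le ⟨n₀, rfl, hspec⟩
        · apply le_sInf
          rintro t ⟨n, rfl, hn1, hn2⟩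
          exact_mod_cast Nat.find_min' hex ⟨hn1, hn2⟩
      have h2 : ∀ t : ℕ, ω ∈ C t ↔ t < n₀ := by
        intro t
        constructor
        · intro hmem
          by_contra hcon
          push_neg at hcon
          exact absurd (hmem n₀ hspec.1 hcon) (not_lt.2 hspec.2)
        · intro ht n hn hnt
          have h := Nat.find_min hex (lt_of_le_of_lt hnt ht)
          push_neg at h
          exact lt_of_not_ge (by simpa using h hn)
      have h3 : ∀ t : ℕ, (C t).indicator (fun _ => (1:ℝ≥0∞)) ω = if t < n₀ then 1 else 0 := by
        intro t
        by_cases h : t < n₀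
        · rw [if_pos h, Set.indicator_of_mem ((h2 t).2 h)]
        · rw [if_neg h, Set.indicator_of_notMem (fun hmem => h ((h2 t).1 hmem))]
      rw [h1, tsum_congr h3, tsum_eq_sum (s := Finset.range n₀)
        (fun t ht => if_neg (fun h => ht (Finset.mem_range.2 h)))]
      have h4 : ∀ t ∈ Finset.range n₀, (if t < n₀ then (1:ℝ≥0∞) else 0) = 1 :=
        fun t ht => if_pos (Finset.mem_range.1 ht)
      rw [Finset.sum_congr rfl h4, Finset.sum_const, Finset.card_range]
      simp
    · push_neg at hex
      have hset : {t : ℝ≥0∞ | ∃ n : ℕ, t = n ∧ w < n ∧ b ≤ S n ω} = ∅ := by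
        ext t
        simp only [mem_setOf_eq, mem_empty_iff_false, iff_false]
        rintro ⟨n, rfl, hn1, hn2⟩
        exact absurd hn2 (not_le.2 (hex n hn1))
      have hmem : ∀ t : ℕ, ω ∈ C t := fun t n hn _ => hex n hn
      rw [hset, sInf_empty]
      calc (⊤:ℝ≥0∞) = ∑' _ : ℕ, (1:ℝ≥0∞) :=
            (ENNReal.tsum_const_eq_top_of_ne_zero one_ne_zero).symm
        _ = ∑' t : ℕ, (C t).indicator (fun _ => (1:ℝ≥0∞)) ω := by
            apply tsum_congr
            intro t
            rw [Set.indicator_of_mem (hmem t)]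
  have hlin : ∫⁻ ω, τ ω ∂P = ∑' t : ℕ, P (C t) := by
    calc ∫⁻ ω, τ ω ∂P = ∫⁻ ω, ∑' t : ℕ, (C t).indicator (fun _ => (1:ℝ≥0∞)) ω ∂P :=
          lintegral_congr (fun ω => hτ_eq ω)
      _ = ∑' t : ℕ, ∫⁻ ω, (C t).indicator (fun _ => (1:ℝ≥0∞)) ω ∂P :=
          lintegral_tsum (fun t => ((measurable_const).indicator (hCmeas t)).aemeasurable)
      _ = ∑' t : ℕ, P (C t) := by
          apply tsum_congr
          intro t
          exact lintegral_indicator_one (hCmeas t)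
  rw [hlin, ENNReal.tsum_eq_iSup_nat]
  apply iSup_le
  intro T
  have hTT : ∑ t ∈ Finset.range T, P (C t) ≤ ∑ t ∈ Finset.range (T + w + 1), P (C t) :=
    Finset.sum_le_sum_of_subset (Finset.range_subset_range.2 (by omega))
  refine le_trans hTT ?_
  have hconv : ∑ t ∈ Finset.range (T + w + 1), P (C t)
      = ENNReal.ofReal (∑ t ∈ Finset.range (T + w + 1), (P (C t)).toReal) := by
    rw [ENNReal.ofReal_sum_of_nonneg (fun i _ => ENNReal.toReal_nonneg)]
    apply Finset.sum_congr rfl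
    intro t _
    rw [ENNReal.ofReal_toReal (hCfin t)]
  rw [hconv]
  apply ENNReal.ofReal_le_ofReal
  have hmain := main (T + w + 1) (by omega)
  simp only [hpr_def] at hmain
  rw [hK]
  exact hmain
end

section
/- Under the stated assumptions, for every b > 0 the expected overshoot R_b = S_{τ_b} − b satisfies E[R_b] ≤ K + √(Kb) + √(Kwμ), where K = v/(μ^*(1 − q/w)). -/
open MeasureTheory Filter Set
open scoped ENNReal

set_option maxHeartbeats 2000000 in
/-- The expected overshoot `R_b = S_{τ_b} - b` at the hitting time
`τ_b = inf {n > w : S_n ≥ b}` satisfies `E[R_b] ≤ K + √(Kb) + √(Kwμ)`,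
where `K = v / (μ* (1 - q/w))`. -/
theorem expected_overshoot_bound
    {Ω : Type*} [m0 : MeasurableSpace Ω] (P : Measure Ω) [IsProbabilityMeasure P]
    (𝒢 : Filtration ℕ m0) (h𝒢0 : 𝒢 0 = ⊥)
    (Y : ℕ → Ω → ℝ)
    (hY2 : ∀ n, 1 ≤ n → MemLp (Y n) 2 P)
    (hadp : ∀ n, 1 ≤ n → StronglyMeasurable[𝒢 n] (Y n))
    (w q : ℕ) (hq : 0 < q) (hqw : q < w)
    (N : Set ℕ) (hN : ∀ m ∈ N, w < m)
    (μstar μlow μ v : ℝ)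
    (hμstar : 0 < μstar) (hμlow : 0 < μlow) (hμ : 0 < μ) (hv : 0 < v)
    (haOut : ∀ n, w < n → n ∉ N →
      (fun _ => μstar) ≤ᵐ[P] P[Y n | 𝒢 (n - w - 1)])
    (haIn : ∀ n, w < n → n ∈ N →
      (fun _ => μlow) ≤ᵐ[P] P[Y n | 𝒢 (n - w - 1)])
    (hbnd : ∀ n, w < n → P[Y n | 𝒢 (n - 1)] ≤ᵐ[P] (fun _ => μ))
    (hvar : ∀ n, w < n → P[(fun ω => (Y n ω) ^ 2) | 𝒢 (n - 1)] ≤ᵐ[P] (fun _ => v))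
    (hd : ∀ (n : ℕ) (s : Finset ℕ),
      (∀ m ∈ s, m ∈ N ∧ m ∈ Finset.Ioc w (w + n)) → (s.card : ℝ) ≤ n * q / w)
    (S : ℕ → Ω → ℝ) (hS : ∀ n ω, S n ω = ∑ i ∈ Finset.Ioc w n, Y i ω)
    (b : ℝ) (hb : 0 < b)
    (τ : Ω → ℕ) (hτmeas : Measurable τ)
    (hτ : ∀ᵐ ω ∂P, w < τ ω ∧ b ≤ S (τ ω) ω ∧ ∀ n, w < n → n < τ ω → S n ω < b)
    (K : ℝ) (hK : K = v / (μstar * (1 - (q : ℝ) / w))) :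
    ∫ ω, (S (τ ω) ω - b) ∂P ≤ K + Real.sqrt (K * b) + Real.sqrt (K * (w * μ)) := by
  classical
  have hw1 : 1 ≤ w := by omega
  have hwR : (0:ℝ) < w := by exact_mod_cast Nat.lt_of_lt_of_le Nat.zero_lt_one hw1
  have hqwR : (q:ℝ)/w < 1 := by
    rw [div_lt_one hwR]; exact_mod_cast hqw
  have hcpos : (0:ℝ) < μstar * (1 - (q:ℝ)/w) := mul_pos hμstar (by linarith)
  set c : ℝ := μstar * (1 - (q:ℝ)/w) with hcdef
  have hK0 : 0 < K := by rw [hK]; exact div_pos hv hcpos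
  by_cases hInt : Integrable (fun ω => S (τ ω) ω - b) P
  swap
  · rw [integral_undef hInt]
    have h1 := Real.sqrt_nonneg (K*b); have h2 := Real.sqrt_nonneg (K*(w*μ)); linarith
  -- notation
  set r : ℝ := ∫ ω, (S (τ ω) ω - b) ∂P with hrdef
  -- basic measurability / integrability
  have hYint : ∀ n, 1 ≤ n → Integrable (Y n) P := fun n hn => (hY2 n hn).integrable one_le_two
  have hYsq : ∀ n, 1 ≤ n → Integrable (fun ω => (Y n ω)^2) P := fun n hn => (hY2 n hn).integrable_sq
  have hSm : ∀ n, Measurable[𝒢 n] (S n) := by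
    intro n
    have : S n = fun ω => ∑ i ∈ Finset.Ioc w n, Y i ω := funext (hS n)
    rw [this]
    exact Finset.measurable_sum _ fun i hi =>
      (((hadp i (le_trans hw1 (le_of_lt (Finset.mem_Ioc.1 hi).1))).mono
        (𝒢.mono (Finset.mem_Ioc.1 hi).2)).measurable)
  -- the sets B j (no hit by time j), measurable wrt 𝒢 j
  set B : ℕ → Set Ω := fun j => {ω | ∀ k ∈ Finset.Ioc w j, S k ω < b} with hBdef
  have hBmeas : ∀ j, MeasurableSet[𝒢 j] (B j) := by
    intro j
    have : B j = ⋂ k ∈ Finset.Ioc w j, {ω | S k ω < b} := by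
      ext ω; simp [hBdef]
    rw [this]
    refine MeasurableSet.biInter (Finset.Ioc w j).countable_toSet fun k hk => ?_
    have hk' : k ∈ Finset.Ioc w j := hk
    exact measurableSet_lt ((hSm k).mono (𝒢.mono (Finset.mem_Ioc.1 hk').2) le_rfl)
      measurable_const
  -- the sets I k = {k ≤ τ}
  set I : ℕ → Set Ω := fun k => {ω | k ≤ τ ω} with hIdef
  have hImeas : ∀ k, MeasurableSet (I k) := fun k => hτmeas (measurableSet_Ici)
  have hIae : ∀ k, 1 ≤ k → I k =ᵐ[P] B (k - 1) := by
    intro k hk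
    rw [Filter.eventuallyEq_set]
    filter_upwards [hτ] with ω hω
    obtain ⟨h1, h2, h3⟩ := hω
    simp only [hIdef, hBdef, Set.mem_setOf_eq]
    constructor
    · intro hle j hj
      rw [Finset.mem_Ioc] at hj
      exact h3 j hj.1 (by omega)
    · intro hall
      by_contra hcon
      push_neg at hcon
      have hmem : τ ω ∈ Finset.Ioc w (k-1) := Finset.mem_Ioc.2 ⟨h1, by omega⟩
      exact absurd h2 (not_le.2 (hall _ hmem))
  have hIfull : ∀ k, k ≤ w → (P (I k)).toReal = 1 := by
    intro k hk
    have he : I k =ᵐ[P] (Set.univ : Set Ω) := by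
      rw [Filter.eventuallyEq_set]
      filter_upwards [hτ] with ω hω
      simp only [hIdef, Set.mem_setOf_eq, Set.mem_univ, iff_true]
      omega
    rw [measure_congr he, measure_univ, ENNReal.toReal_one]
  -- conditional expectation bounds turned into set-integral bounds
  have keyLow : ∀ n, w < n →
      μstar * (P (I (n - w))).toReal - (if n ∈ N then μstar * (P (I (n-w))).toReal else 0)
        ≤ ∫ ω in I (n - w), Y n ω ∂P := by
    intro n hn
    have hnw1 : 1 ≤ n - w := by omega
    have hBI : I (n - w) =ᵐ[P] B (n - w - 1) := hIae (n-w) hnw1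
    have hPeq : P (I (n-w)) = P (B (n-w-1)) := measure_congr hBI
    have hint1 : ∫ ω in I (n-w), Y n ω ∂P = ∫ ω in B (n-w-1), (P[Y n|𝒢 (n-w-1)]) ω ∂P := by
      rw [setIntegral_congr_set hBI,
        setIntegral_condExp (𝒢.le (n-w-1)) (hYint n (by omega)) (hBmeas (n-w-1))]
    by_cases hNn : n ∈ N
    · rw [if_pos hNn, sub_self, hint1]
      have h2 : ∫ (_ : Ω) in B (n-w-1), μlow ∂P ≤ ∫ ω in B (n-w-1), (P[Y n|𝒢 (n-w-1)]) ω ∂P :=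
        setIntegral_mono_ae (integrableOn_const)
          integrable_condExp.integrableOn (haIn n hn hNn)
      rw [setIntegral_const, smul_eq_mul, measureReal_def] at h2
      have : (0:ℝ) ≤ (P (B (n-w-1))).toReal * μlow :=
        mul_nonneg ENNReal.toReal_nonneg hμlow.le
      linarith
    · rw [if_neg hNn, sub_zero, hint1]
      have h2 : ∫ (_ : Ω) in B (n-w-1), μstar ∂P ≤ ∫ ω in B (n-w-1), (P[Y n|𝒢 (n-w-1)]) ω ∂P :=
        setIntegral_mono_ae (integrableOn_const)
          integrable_condExp.integrableOn (haOut n hn hNn)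
      rw [setIntegral_const, smul_eq_mul, measureReal_def] at h2
      rw [hPeq]
      linarith
  have keyUp : ∀ n, w < n → ∀ C : Set Ω, MeasurableSet[𝒢 (n-1)] C →
      ∫ ω in C, Y n ω ∂P ≤ μ * (P C).toReal := by
    intro n hn C hC
    have hn1 : 1 ≤ n := by omega
    rw [← setIntegral_condExp (𝒢.le (n-1)) (hYint n hn1) hC]
    have h2 : ∫ ω in C, (P[Y n|𝒢 (n-1)]) ω ∂P ≤ ∫ (_ : Ω) in C, μ ∂P :=
      setIntegral_mono_ae integrable_condExp.integrableOn
        (integrableOn_const) (hbnd n hn)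
    rw [setIntegral_const, measureReal_def] at h2
    rw [smul_eq_mul, mul_comm] at h2
    exact h2
  have keyVar : ∀ n, w < n →
      ∫ ω in B (n-1), (Y n ω)^2 ∂P ≤ v * (P (I n)).toReal := by
    intro n hn
    have hn1 : 1 ≤ n := by omega
    rw [← setIntegral_condExp (𝒢.le (n-1)) (hYsq n hn1) (hBmeas (n-1))]
    have h2 : ∫ ω in B (n-1), (P[(fun ω => (Y n ω)^2)|𝒢 (n-1)]) ω ∂P ≤ ∫ (_ : Ω) in B (n-1), v ∂P :=
      setIntegral_mono_ae integrable_condExp.integrableOn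
        (integrableOn_const) (hvar n hn)
    rw [setIntegral_const, measureReal_def] at h2
    rw [smul_eq_mul, mul_comm, measure_congr ((hIae n hn1).symm)] at h2
    exact h2
  -- the difference sets D n
  set D : ℕ → Set Ω := fun n => I (n - w) \ I n with hDdef
  have hDmeas : ∀ n, MeasurableSet (D n) := fun n => (hImeas _).diff (hImeas _)
  have hDbound : ∀ n, w < n → ∫ ω in D n, Y n ω ∂P ≤ μ * (P (D n)).toReal := by
    intro n hn
    have h1 : D n =ᵐ[P] (B (n-w-1) \ B (n-1) : Set Ω) := by
      have e1 := hIae (n-w) (by omega)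
      have e2 := hIae n (by omega)
      rw [Filter.eventuallyEq_set] at e1 e2 ⊢
      filter_upwards [e1, e2] with ω p1 p2
      simp only [hDdef, Set.mem_diff, p1, p2]
    have hC : MeasurableSet[𝒢 (n-1)] (B (n-w-1) \ B (n-1)) :=
      MeasurableSet.diff ((𝒢.mono (by omega : n-w-1 ≤ n-1)) _ (hBmeas (n-w-1))) (hBmeas (n-1))
    rw [setIntegral_congr_set h1, measure_congr h1]
    exact keyUp n hn _ hC
  have hsplit : ∀ n, w < n →
      ∫ ω in I n, Y n ω ∂P = ∫ ω in I (n-w), Y n ω ∂P - ∫ ω in D n, Y n ω ∂P := by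
    intro n hn
    have hsub : I n ⊆ I (n - w) := fun ω hω => le_trans (Nat.sub_le n w) hω
    have hunion : I (n-w) = I n ∪ D n := (Set.union_diff_cancel hsub).symm
    have hdisj : Disjoint (I n) (D n) := disjoint_sdiff_self_right
    have := setIntegral_union hdisj (hDmeas n) ((hYint n (by omega)).integrableOn)
      ((hYint n (by omega)).integrableOn)
    rw [← hunion] at this
    linarith
  -- min(τ, M) as a sum of indicators
  have hmin : ∀ (M : ℕ) (ω : Ω),
      ∑ k ∈ Finset.Ioc 0 M, (I k).indicator (fun _ => (1:ℝ)) ω = ((min (τ ω) M : ℕ) : ℝ) := by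
    intro M ω
    have h1 : ∀ k, (I k).indicator (fun _ => (1:ℝ)) ω = if k ≤ τ ω then 1 else 0 := by
      intro k; simp [hIdef, Set.indicator_apply]
    simp only [h1]
    rw [Finset.sum_boole]
    have h2 : (Finset.Ioc 0 M).filter (fun k => k ≤ τ ω) = Finset.Ioc 0 (min (τ ω) M) := by
      ext k; simp only [Finset.mem_filter, Finset.mem_Ioc]; omega
    rw [h2, Nat.card_Ioc]
    norm_num
  -- A M = E[min(τ, M)]
  set A : ℕ → ℝ := fun M => ∑ k ∈ Finset.Ioc 0 M, (P (I k)).toReal with hAdef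
  have hminInt : ∀ M, Integrable (fun ω => ((min (τ ω) M : ℕ) : ℝ)) P := by
    intro M
    have : (fun ω => ((min (τ ω) M : ℕ) : ℝ))
        = fun ω => ∑ k ∈ Finset.Ioc 0 M, (I k).indicator (fun _ => (1:ℝ)) ω :=
      funext fun ω => (hmin M ω).symm
    rw [this]
    exact integrable_finset_sum _ fun k _ => (integrable_const 1).indicator (hImeas k)
  have hAint : ∀ M, ∫ ω, ((min (τ ω) M : ℕ) : ℝ) ∂P = A M := by
    intro M
    have h1 : (fun ω => ((min (τ ω) M : ℕ) : ℝ))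
        = fun ω => ∑ k ∈ Finset.Ioc 0 M, (I k).indicator (fun _ => (1:ℝ)) ω :=
      funext fun ω => (hmin M ω).symm
    rw [h1, integral_finset_sum _ fun k _ => (integrable_const 1).indicator (hImeas k)]
    refine Finset.sum_congr rfl fun k _ => ?_
    rw [integral_indicator (hImeas k), setIntegral_const, smul_eq_mul, mul_one, measureReal_def]
  have hAnonneg : ∀ M, 0 ≤ A M := by
    intro M
    exact Finset.sum_nonneg fun k _ => ENNReal.toReal_nonneg
  -- main drift estimate : for every m > w,  c * A (m - w) ≤ b + r + μ * w
  have hdrift : ∀ m, w < m → c * A (m - w) ≤ b + r + μ * w := by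
    intro m hm
    have hGrep : ∀ ω, S (min (τ ω) m) ω = ∑ n ∈ Finset.Ioc w m, (I n).indicator (Y n) ω := by
      intro ω
      rw [hS]
      have hf : Finset.Ioc w (min (τ ω) m) = (Finset.Ioc w m).filter (fun n => n ≤ τ ω) := by
        ext n; simp only [Finset.mem_Ioc, Finset.mem_filter]; omega
      rw [hf, Finset.sum_filter]
      refine Finset.sum_congr rfl fun n hn => ?_
      simp [hIdef, Set.indicator_apply]
    have hGint : Integrable (fun ω => S (min (τ ω) m) ω) P := by
      rw [funext hGrep]
      exact integrable_finset_sum _ fun n hn =>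
        (hYint n (by have := (Finset.mem_Ioc.1 hn).1; omega)).indicator (hImeas n)
    have hSτint : Integrable (fun ω => S (τ ω) ω) P := by
      have he : (fun ω => S (τ ω) ω) = fun ω => (S (τ ω) ω - b) + b := by
        funext ω; ring
      rw [he]; exact hInt.add (integrable_const b)
    have hrS : ∫ ω, S (τ ω) ω ∂P = r + b := by
      have he : r = ∫ ω, S (τ ω) ω ∂P - ∫ (_ : Ω), b ∂P := by
        rw [hrdef, ← integral_sub hSτint (integrable_const b)]
      rw [integral_const] at he
      simp only [measureReal_def, measure_univ, ENNReal.toReal_one, smul_eq_mul, one_mul] at he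
      linarith
    have hGup : ∫ ω, S (min (τ ω) m) ω ∂P ≤ b + r := by
      have hle : (fun ω => S (min (τ ω) m) ω) ≤ᵐ[P] fun ω => S (τ ω) ω := by
        filter_upwards [hτ] with ω hω
        obtain ⟨h1, h2, h3⟩ := hω
        rcases le_or_gt (τ ω) m with h|h
        · rw [min_eq_left h]
        · rw [min_eq_right h.le]
          have := h3 m hm h; linarith
      have hmono := integral_mono_ae hGint hSτint hle
      rw [hrS] at hmono
      linarith
    have hGeq : ∫ ω, S (min (τ ω) m) ω ∂P = ∑ n ∈ Finset.Ioc w m, ∫ ω in I n, Y n ω ∂P := by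
      rw [funext hGrep, integral_finset_sum _ (fun n hn =>
        (hYint n (by have := (Finset.mem_Ioc.1 hn).1; omega)).indicator (hImeas n))]
      exact Finset.sum_congr rfl fun n hn => integral_indicator (hImeas n)
    have hlow : ∑ n ∈ Finset.Ioc w m, (μstar * (P (I (n-w))).toReal
          - (if n ∈ N then μstar * (P (I (n-w))).toReal else 0))
        - ∑ n ∈ Finset.Ioc w m, μ * (P (D n)).toReal
        ≤ ∑ n ∈ Finset.Ioc w m, ∫ ω in I n, Y n ω ∂P := by
      rw [← Finset.sum_sub_distrib]
      refine Finset.sum_le_sum fun n hn => ?_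
      have hn' := (Finset.mem_Ioc.1 hn).1
      rw [hsplit n hn']
      have k1 := keyLow n hn'
      have k2 := hDbound n hn'
      linarith
    have hsum1 : ∑ n ∈ Finset.Ioc w m, (P (I (n-w))).toReal = A (m - w) := by
      rw [hAdef]
      refine Finset.sum_nbij' (fun n => n - w) (fun k => k + w) ?_ ?_ ?_ ?_ ?_
      · intro a ha; simp only [Finset.mem_Ioc] at *; omega
      · intro a ha; simp only [Finset.mem_Ioc] at *; omega
      · intro a ha; show a - w + w = a; simp only [Finset.mem_Ioc] at ha; omega
      · intro a ha; show a + w - w = a; simp only [Finset.mem_Ioc] at ha; omega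
      · intro a ha; rfl
    have hsum2 : ∑ n ∈ Finset.Ioc w m, (if n ∈ N then (P (I (n-w))).toReal else 0)
        ≤ (q:ℝ)/w * A (m-w) := by
      have hptcard : ∀ ω, ∑ n ∈ Finset.Ioc w m,
          (if n ∈ N then (I (n-w)).indicator (fun _ => (1:ℝ)) ω else 0)
          ≤ (q:ℝ)/w * ((min (τ ω) (m-w) : ℕ) : ℝ) := by
        intro ω
        have h1 : ∀ n, (if n ∈ N then (I (n-w)).indicator (fun _ => (1:ℝ)) ω else 0)
            = if (n ∈ N ∧ n - w ≤ τ ω) then (1:ℝ) else 0 := by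
          intro n
          simp only [hIdef, Set.indicator_apply, Set.mem_setOf_eq]
          by_cases hn : n ∈ N <;> by_cases ht : n - w ≤ τ ω <;> simp [hn, ht]
        simp only [h1]
        rw [Finset.sum_boole]
        have hcard := hd (min (τ ω) (m-w))
          ((Finset.Ioc w m).filter (fun n => n ∈ N ∧ n - w ≤ τ ω)) ?_
        · have he : ((min (τ ω) (m-w):ℕ):ℝ) * q / w
              = (q:ℝ)/w * ((min (τ ω) (m-w):ℕ):ℝ) := by ring
          linarith
        · intro m' hm'
          simp only [Finset.mem_filter, Finset.mem_Ioc] at hm'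
          refine ⟨hm'.2.1, Finset.mem_Ioc.2 ⟨hm'.1.1, ?_⟩⟩
          omega
      have hintN : ∀ n ∈ Finset.Ioc w m, Integrable
          (fun ω => if n ∈ N then (I (n-w)).indicator (fun _ => (1:ℝ)) ω else 0) P := by
        intro n _
        split_ifs with h
        · exact (integrable_const 1).indicator (hImeas _)
        · exact integrable_zero _ _ _
      have hlhs : ∑ n ∈ Finset.Ioc w m, (if n ∈ N then (P (I (n-w))).toReal else 0)
          = ∫ ω, ∑ n ∈ Finset.Ioc w m,
            (if n ∈ N then (I (n-w)).indicator (fun _ => (1:ℝ)) ω else 0) ∂P := by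
        rw [integral_finset_sum _ hintN]
        refine Finset.sum_congr rfl fun n _ => ?_
        split_ifs with h
        · rw [integral_indicator (hImeas _), setIntegral_const, smul_eq_mul, mul_one, measureReal_def]
        · simp
      rw [hlhs]
      calc ∫ ω, ∑ n ∈ Finset.Ioc w m,
            (if n ∈ N then (I (n-w)).indicator (fun _ => (1:ℝ)) ω else 0) ∂P
          ≤ ∫ ω, (q:ℝ)/w * ((min (τ ω) (m-w) : ℕ) : ℝ) ∂P := by
            exact integral_mono_ae (integrable_finset_sum _ hintN)
              ((hminInt (m-w)).const_mul _) (Filter.Eventually.of_forall hptcard)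
        _ = (q:ℝ)/w * A (m-w) := by rw [integral_const_mul, hAint]
    have hsum3 : ∑ n ∈ Finset.Ioc w m, μ * (P (D n)).toReal ≤ μ * w := by
      have hpt : ∀ ω, ∑ n ∈ Finset.Ioc w m, (D n).indicator (fun _ => (1:ℝ)) ω ≤ (w:ℝ) := by
        intro ω
        have h1 : ∀ n, (D n).indicator (fun _ => (1:ℝ)) ω
            = if (n - w ≤ τ ω ∧ ¬ n ≤ τ ω) then (1:ℝ) else 0 := by
          intro n
          simp only [hDdef, hIdef, Set.indicator_apply, Set.mem_diff, Set.mem_setOf_eq]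
        simp only [h1]
        rw [Finset.sum_boole]
        have hsub : (Finset.Ioc w m).filter (fun n => n - w ≤ τ ω ∧ ¬ n ≤ τ ω)
            ⊆ Finset.Ioc (τ ω) (τ ω + w) := by
          intro n hn
          simp only [Finset.mem_filter, Finset.mem_Ioc] at *
          omega
        have h2 := Finset.card_le_card hsub
        have hcard : (Finset.Ioc (τ ω) (τ ω + w)).card = w := by rw [Nat.card_Ioc]; omega
        rw [hcard] at h2
        exact_mod_cast h2
      have hPD : ∑ n ∈ Finset.Ioc w m, (P (D n)).toReal
          = ∫ ω, ∑ n ∈ Finset.Ioc w m, (D n).indicator (fun _ => (1:ℝ)) ω ∂P := by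
        rw [integral_finset_sum _ (fun n _ => (integrable_const 1).indicator (hDmeas n))]
        exact (Finset.sum_congr rfl fun n _ => by
          rw [integral_indicator (hDmeas n), setIntegral_const, smul_eq_mul, mul_one, measureReal_def]).symm
      have hPDle : ∑ n ∈ Finset.Ioc w m, (P (D n)).toReal ≤ (w:ℝ) := by
        rw [hPD]
        have := integral_mono_ae
          (integrable_finset_sum _ (fun n _ => (integrable_const 1).indicator (hDmeas n)))
          (integrable_const (μ := P) (w:ℝ)) (Filter.Eventually.of_forall hpt)
        rwa [integral_const, measureReal_def, measure_univ, ENNReal.toReal_one, one_smul] at this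
      rw [← Finset.mul_sum]
      exact mul_le_mul_of_nonneg_left hPDle hμ.le
    have hite : ∑ n ∈ Finset.Ioc w m, (if n ∈ N then μstar * (P (I (n-w))).toReal else 0)
        = μstar * ∑ n ∈ Finset.Ioc w m, (if n ∈ N then (P (I (n-w))).toReal else 0) := by
      rw [Finset.mul_sum]
      exact Finset.sum_congr rfl fun n _ => by split_ifs <;> simp
    have hexp : ∑ n ∈ Finset.Ioc w m, (μstar * (P (I (n-w))).toReal
          - (if n ∈ N then μstar * (P (I (n-w))).toReal else 0))
        = μstar * A (m-w)
          - μstar * ∑ n ∈ Finset.Ioc w m, (if n ∈ N then (P (I (n-w))).toReal else 0) := by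
      rw [Finset.sum_sub_distrib, ← Finset.mul_sum, hsum1, hite]
    have hfinal : μstar * A (m-w) - μstar * ((q:ℝ)/w * A (m-w)) - μ * w ≤ b + r := by
      have hmul : μstar * ∑ n ∈ Finset.Ioc w m, (if n ∈ N then (P (I (n-w))).toReal else 0)
          ≤ μstar * ((q:ℝ)/w * A (m-w)) := by
        exact mul_le_mul_of_nonneg_left hsum2 hμstar.le
      calc μstar * A (m-w) - μstar * ((q:ℝ)/w * A (m-w)) - μ * w
          ≤ (∑ n ∈ Finset.Ioc w m, (μstar * (P (I (n-w))).toReal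
              - (if n ∈ N then μstar * (P (I (n-w))).toReal else 0)))
            - ∑ n ∈ Finset.Ioc w m, μ * (P (D n)).toReal := by
            rw [hexp]; linarith
        _ ≤ ∑ n ∈ Finset.Ioc w m, ∫ ω in I n, Y n ω ∂P := hlow
        _ = ∫ ω, S (min (τ ω) m) ω ∂P := hGeq.symm
        _ ≤ b + r := hGup
    have : c * A (m-w) = μstar * A (m-w) - μstar * ((q:ℝ)/w * A (m-w)) := by
      rw [hcdef]; ring
    linarith
  -- consequence: the tail sums are bounded
  set u : ℝ := (b + r + μ * w) / c - w with hudef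
  have htail : ∀ m, w < m → ∑ n ∈ Finset.Ioc w m, (P (I n)).toReal ≤ u := by
    intro m hm
    have h1 := hdrift (m + w) (by omega)
    have hAm : (m + w) - w = m := by omega
    rw [hAm] at h1
    have hsplitA : A m = ∑ k ∈ Finset.Ioc 0 w, (P (I k)).toReal
        + ∑ n ∈ Finset.Ioc w m, (P (I n)).toReal := by
      rw [hAdef]
      exact (Finset.sum_Ioc_consecutive _ (Nat.zero_le w) (le_of_lt hm)).symm
    have hIocw : ∑ k ∈ Finset.Ioc 0 w, (P (I k)).toReal = (w:ℝ) := by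
      rw [Finset.sum_congr rfl (fun k hk => hIfull k (Finset.mem_Ioc.1 hk).2)]
      simp [Nat.card_Ioc]
    have h2 : A m ≤ (b + r + μ * w)/c := by
      rw [le_div_iff₀ hcpos, mul_comm]
      exact h1
    rw [hudef]
    rw [hsplitA, hIocw] at h2
    linarith
  have hu0 : 0 ≤ u := le_trans (Finset.sum_nonneg fun k _ => ENNReal.toReal_nonneg)
    (htail (w+1) (Nat.lt_succ_self w))
  -- second moment estimate: r ≤ sqrt (v * u)
  have hr0 : 0 ≤ r := by
    refine integral_nonneg_of_ae ?_
    filter_upwards [hτ] with ω hω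
    simp only [Pi.zero_apply]
    linarith [hω.2.1]
  have hrsqrt : r ≤ Real.sqrt (v * u) := by
    have hτn : ∀ n : ℕ, MeasurableSet {ω' | τ ω' = n} :=
      fun n => hτmeas (measurableSet_singleton n)
    have hτle : ∀ m : ℕ, MeasurableSet {ω' | τ ω' ≤ m} :=
      fun m => hτmeas measurableSet_Iic
    have hZle : ∀ m, w < m →
        ∫ ω, ({ω' | τ ω' ≤ m}).indicator (fun ω' => S (τ ω') ω' - b) ω ∂P
          ≤ Real.sqrt (v * u) := by
      intro m hm
      set Z : Ω → ℝ := fun ω => ∑ n ∈ Finset.Ioc w m, ({ω' | τ ω' = n}).indicator (Y n) ω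
        with hZdef
      have hZmem : MemLp Z 2 P := by
        have he : Z = ∑ n ∈ Finset.Ioc w m, ({ω' | τ ω' = n}).indicator (Y n) := by
          funext ω; rw [hZdef]; simp [Finset.sum_apply]
        rw [he]
        exact memLp_finsetSum' _ fun n hn =>
          ((hY2 n (by have := (Finset.mem_Ioc.1 hn).1; omega)).indicator (hτn n))
      have hZint : Integrable Z P := hZmem.integrable one_le_two
      have hZrep : ∀ ω, Z ω = if τ ω ∈ Finset.Ioc w m then Y (τ ω) ω else 0 := by
        intro ω
        rw [hZdef]
        have h1 : ∀ n, ({ω' | τ ω' = n}).indicator (Y n) ω = if τ ω = n then Y n ω else 0 := by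
          intro n; simp [Set.indicator_apply]
        simp only [h1]
        rw [Finset.sum_ite_eq]
      have hZsq : ∀ ω, Z ω ^ 2
          = ∑ n ∈ Finset.Ioc w m, ({ω' | τ ω' = n}).indicator (fun ω' => (Y n ω')^2) ω := by
        intro ω
        have h1 : ∀ n, ({ω' | τ ω' = n}).indicator (fun ω' => (Y n ω')^2) ω
            = if τ ω = n then (Y n ω)^2 else 0 := by
          intro n; simp [Set.indicator_apply]
        simp only [h1]
        rw [Finset.sum_ite_eq, hZrep ω]
        split_ifs with h <;> simp
      have hZsqint : ∫ ω, Z ω ^ 2 ∂P ≤ v * u := by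
        have he : ∫ ω, Z ω ^ 2 ∂P
            = ∑ n ∈ Finset.Ioc w m, ∫ ω in {ω' | τ ω' = n}, (Y n ω)^2 ∂P := by
          rw [show (fun ω => Z ω ^ 2) = fun ω => ∑ n ∈ Finset.Ioc w m,
              ({ω' | τ ω' = n}).indicator (fun ω' => (Y n ω')^2) ω from funext hZsq,
            integral_finset_sum _ (fun n hn =>
              ((hYsq n (by have := (Finset.mem_Ioc.1 hn).1; omega)).indicator (hτn n)))]
          exact Finset.sum_congr rfl fun n _ => integral_indicator (hτn n)
        rw [he]
        have hterm : ∀ n ∈ Finset.Ioc w m,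
            ∫ ω in {ω' | τ ω' = n}, (Y n ω)^2 ∂P ≤ v * (P (I n)).toReal := by
          intro n hn
          have hn' := (Finset.mem_Ioc.1 hn).1
          have hn1 : 1 ≤ n := by omega
          have hsub : {ω' | τ ω' = n} ⊆ I n := fun ω hω => le_of_eq hω.symm
          have h1 : ∫ ω in {ω' | τ ω' = n}, (Y n ω)^2 ∂P ≤ ∫ ω in I n, (Y n ω)^2 ∂P := by
            refine setIntegral_mono_set (hYsq n hn1).integrableOn ?_ (HasSubset.Subset.eventuallyLE hsub)
            exact Filter.Eventually.of_forall fun ω => sq_nonneg _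
          have h2 : ∫ ω in I n, (Y n ω)^2 ∂P = ∫ ω in B (n-1), (Y n ω)^2 ∂P :=
            setIntegral_congr_set (hIae n hn1)
          have h3 := keyVar n hn'
          linarith
        calc ∑ n ∈ Finset.Ioc w m, ∫ ω in {ω' | τ ω' = n}, (Y n ω)^2 ∂P
            ≤ ∑ n ∈ Finset.Ioc w m, v * (P (I n)).toReal := Finset.sum_le_sum hterm
          _ = v * ∑ n ∈ Finset.Ioc w m, (P (I n)).toReal := by rw [Finset.mul_sum]
          _ ≤ v * u := mul_le_mul_of_nonneg_left (htail m hm) hv.le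
      have hvarineq := ProbabilityTheory.variance_nonneg Z P
      rw [ProbabilityTheory.variance_eq_sub hZmem] at hvarineq
      have hsq_eq : ∫ ω, (Z ^ 2) ω ∂P = ∫ ω, Z ω ^ 2 ∂P := by
        refine integral_congr_ae (Filter.Eventually.of_forall fun ω => ?_)
        simp [Pi.pow_apply]
      have hZsqle : (∫ ω, Z ω ∂P)^2 ≤ v * u := by
        rw [hsq_eq] at hvarineq
        nlinarith
      have h4 : ∫ ω, Z ω ∂P ≤ Real.sqrt (v * u) := by
        have h5 : ∫ ω, Z ω ∂P ≤ |∫ ω, Z ω ∂P| := le_abs_self _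
        have h6 : |∫ ω, Z ω ∂P| = Real.sqrt ((∫ ω, Z ω ∂P)^2) := (Real.sqrt_sq_eq_abs _).symm
        have h7 := Real.sqrt_le_sqrt hZsqle
        linarith
      refine le_trans (integral_mono_ae (hInt.indicator (hτle m)) hZint ?_) h4
      filter_upwards [hτ] with ω hω
      obtain ⟨h1, h2, h3⟩ := hω
      rw [hZrep ω]
      by_cases hcase : τ ω ≤ m
      · rw [Set.indicator_of_mem (by exact hcase : ω ∈ {ω' | τ ω' ≤ m}),
          if_pos (Finset.mem_Ioc.2 ⟨h1, hcase⟩)]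
        obtain ⟨t, ht⟩ : ∃ t, τ ω = t + 1 := ⟨τ ω - 1, by omega⟩
        have hwt : w ≤ t := by omega
        have hSdec : S (τ ω) ω = S t ω + Y (τ ω) ω := by
          rw [hS (τ ω) ω, hS t ω, ht, Finset.sum_Ioc_succ_top hwt]
        have hSprev : S t ω < b := by
          rcases Nat.lt_or_ge w t with h|h
          · exact h3 t h (by omega)
          · have hteq : t = w := by omega
            rw [hteq, hS]
            simp only [Finset.Ioc_self, Finset.sum_empty]
            exact hb
        linarith
      · rw [Set.indicator_of_notMem (by exact hcase : ω ∉ {ω' | τ ω' ≤ m}),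
          if_neg (fun hc => hcase (Finset.mem_Ioc.1 hc).2)]
    have htend : Filter.Tendsto
        (fun m => ∫ ω, ({ω' | τ ω' ≤ m}).indicator (fun ω' => S (τ ω') ω' - b) ω ∂P)
        Filter.atTop (nhds r) := by
      rw [hrdef]
      refine tendsto_integral_of_dominated_convergence (fun ω => |S (τ ω) ω - b|)
        (fun m => hInt.aestronglyMeasurable.indicator (hτle m)) hInt.abs ?_ ?_
      · intro m
        refine Filter.Eventually.of_forall fun ω => ?_
        rw [Set.indicator_apply]
        split_ifs
        · exact le_refl _
        · simp [abs_nonneg]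
      · refine Filter.Eventually.of_forall fun ω => ?_
        refine tendsto_atTop_of_eventually_const (i₀ := τ ω) fun m hm => ?_
        exact Set.indicator_of_mem (by exact hm : ω ∈ {ω' | τ ω' ≤ m}) _
    refine le_of_tendsto htend ?_
    filter_upwards [Filter.eventually_ge_atTop (w+1)] with m hm
    exact hZle m (by omega)
  -- conclude by algebra
  have hru : r^2 ≤ v * u := by
    have h := Real.sq_sqrt (mul_nonneg hv.le hu0)
    nlinarith [Real.sqrt_nonneg (v*u)]
  have hKvc : v = K * c := by rw [hK]; field_simp
  have hvu : v * u ≤ K * (b + r + μ * w) := by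
    have : v * u = K * (b + r + μ * w) - v * w := by
      rw [hudef, hKvc]; field_simp
    nlinarith [mul_nonneg hv.le (le_of_lt hwR)]
  have hs1 : Real.sqrt (K*b) ^ 2 = K * b := Real.sq_sqrt (by positivity)
  have hs2 : Real.sqrt (K*(w*μ)) ^ 2 = K * (w*μ) := Real.sq_sqrt (by positivity)
  nlinarith [Real.sqrt_nonneg (K*b), Real.sqrt_nonneg (K*(w*μ)), hru, hvu, hr0, hK0.le,
    sq_nonneg (r - K - Real.sqrt (K*b) - Real.sqrt (K*(w*μ)))]
end

section
/- Under the stated assumptions, if E[τ_b] < ∞ then the delayed partial sum satisfies the lower bound E[ Σ_{n=w+1}^{τ_b + w} Y_n ] ≥ μ^* (1 − q/w) · E[τ_b]. -/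
open MeasureTheory Filter Set
open scoped ENNReal

lemma aux_tsum_ite {M : Type*} [AddCommMonoid M] [TopologicalSpace M] (T : ℕ) (g : ℕ → M) :
    ∑' k, (if k < T then g k else 0) = ∑ k ∈ Finset.range T, g k := by
  rw [tsum_eq_sum (s := Finset.range T)
    (fun b hb => if_neg fun h => hb (Finset.mem_range.mpr h))]
  exact Finset.sum_congr rfl fun k hk => if_pos (Finset.mem_range.mp hk)

lemma aux_setIntegral_ge {Ω : Type*} {m : MeasurableSpace Ω} [m0 : MeasurableSpace Ω]
    (P : Measure Ω) [IsProbabilityMeasure P] (hm : m ≤ m0)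
    {f : Ω → ℝ} (hf : Integrable f P) {c : ℝ}
    (hc : (fun _ => c) ≤ᵐ[P] P[f|m]) {D : Set Ω} (hD : MeasurableSet[m] D) :
    c * (P D).toReal ≤ ∫ ω in D, f ω ∂P := by
  rw [← setIntegral_condExp hm hf hD]
  have h1 : c * (P D).toReal = ∫ _ω in D, c ∂P := by
    rw [setIntegral_const, smul_eq_mul, mul_comm, measureReal_def]
  rw [h1]
  exact setIntegral_mono_ae ((integrableOn_const_iff).mpr (Or.inr (measure_lt_top _ _)))
    integrable_condExp.integrableOn hc

lemma aux_setIntegral_le {Ω : Type*} {m : MeasurableSpace Ω} [m0 : MeasurableSpace Ω]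
    (P : Measure Ω) [IsProbabilityMeasure P] (hm : m ≤ m0)
    {f : Ω → ℝ} (hf : Integrable f P) {c : ℝ}
    (hc : P[f|m] ≤ᵐ[P] (fun _ => c)) {D : Set Ω} (hD : MeasurableSet[m] D) :
    ∫ ω in D, f ω ∂P ≤ c * (P D).toReal := by
  rw [← setIntegral_condExp hm hf hD]
  have h1 : c * (P D).toReal = ∫ _ω in D, c ∂P := by
    rw [setIntegral_const, smul_eq_mul, mul_comm, measureReal_def]
  rw [h1]
  exact setIntegral_mono_ae integrable_condExp.integrableOn
    ((integrableOn_const_iff).mpr (Or.inr (measure_lt_top _ _))) hc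

/-- If `E[τ_b] < ∞`, then the delayed partial sum satisfies the lower bound
`E[ Σ_{n=w+1}^{τ_b + w} Y_n ] ≥ μ* (1 - q/w) E[τ_b]`. -/
theorem delayed_partial_sum_lower_bound
    {Ω : Type*} [m0 : MeasurableSpace Ω] (P : Measure Ω) [IsProbabilityMeasure P]
    (𝒢 : Filtration ℕ m0) (h𝒢0 : 𝒢 0 = ⊥)
    (Y : ℕ → Ω → ℝ)
    (hY2 : ∀ n, 1 ≤ n → MemLp (Y n) 2 P)
    (hadp : ∀ n, 1 ≤ n → StronglyMeasurable[𝒢 n] (Y n))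
    (w q : ℕ) (hq : 0 < q) (hqw : q < w)
    (N : Set ℕ) (hN : ∀ m ∈ N, w < m)
    (μstar μlow μ v : ℝ)
    (hμstar : 0 < μstar) (hμlow : 0 < μlow) (hμ : 0 < μ) (hv : 0 < v)
    (haOut : ∀ n, w < n → n ∉ N →
      (fun _ => μstar) ≤ᵐ[P] P[Y n | 𝒢 (n - w - 1)])
    (haIn : ∀ n, w < n → n ∈ N →
      (fun _ => μlow) ≤ᵐ[P] P[Y n | 𝒢 (n - w - 1)])
    (hbnd : ∀ n, w < n → P[Y n | 𝒢 (n - 1)] ≤ᵐ[P] (fun _ => μ))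
    (hvar : ∀ n, w < n → P[(fun ω => (Y n ω) ^ 2) | 𝒢 (n - 1)] ≤ᵐ[P] (fun _ => v))
    (hd : ∀ (n : ℕ) (s : Finset ℕ),
      (∀ m ∈ s, m ∈ N ∧ m ∈ Finset.Ioc w (w + n)) → (s.card : ℝ) ≤ n * q / w)
    (S : ℕ → Ω → ℝ) (hS : ∀ n ω, S n ω = ∑ i ∈ Finset.Ioc w n, Y i ω)
    (b : ℝ) (hb : 0 < b)
    (τ : Ω → ℕ) (hτmeas : Measurable τ)
    (hτ : ∀ᵐ ω ∂P, w < τ ω ∧ b ≤ S (τ ω) ω ∧ ∀ n, w < n → n < τ ω → S n ω < b)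
    (hτint : Integrable (fun ω => (τ ω : ℝ)) P) :
    μstar * (1 - (q : ℝ) / w) * ∫ ω, (τ ω : ℝ) ∂P ≤
      ∫ ω, (∑ n ∈ Finset.Ioc w (τ ω + w), Y n ω) ∂P := by
  classical
  have hw : 0 < w := hq.trans hqw
  set Eτ := ∫ ω, (τ ω : ℝ) ∂P with hEτdef
  have hEτ0 : 0 ≤ Eτ := integral_nonneg fun ω => Nat.cast_nonneg _
  have hYint : ∀ n, 1 ≤ n → Integrable (Y n) P := fun n hn => (hY2 n hn).integrable one_le_two
  -- S n is 𝒢 n-measurable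
  have hSmeas : ∀ n, StronglyMeasurable[𝒢 n] (S n) := by
    intro n
    have hfun : S n = fun ω => ∑ i ∈ Finset.Ioc w n, Y i ω := funext fun ω => hS n ω
    rw [hfun]
    exact Finset.stronglyMeasurable_fun_sum _ fun i hi =>
      (hadp i (by have := (Finset.mem_Ioc.mp hi).1; omega)).mono
        (𝒢.mono (Finset.mem_Ioc.mp hi).2)
  -- the events
  set A : ℕ → Set Ω := fun k => {ω | k < τ ω} with hAdef
  have hAmeas : ∀ k, MeasurableSet (A k) := fun k => measurableSet_lt measurable_const hτmeas
  set D : ℕ → Set Ω := fun k => (⋃ m ∈ Finset.Ioc w k, {ω | b ≤ S m ω})ᶜ with hDdef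
  have hDmeas : ∀ k, MeasurableSet[𝒢 k] (D k) := by
    intro k
    refine (MeasurableSet.biUnion (Finset.Ioc w k).countable_toSet fun m hm => ?_).compl
    have hm' := Finset.mem_Ioc.mp hm
    exact measurableSet_le measurable_const ((hSmeas m).mono (𝒢.mono hm'.2)).measurable
  have hAD : ∀ k, A k =ᵐ[P] D k := by
    intro k
    rw [Filter.eventuallyEq_set]
    filter_upwards [hτ] with ω hω
    obtain ⟨hτw, hτS, hτlt⟩ := hω
    simp only [hAdef, hDdef, Set.mem_setOf_eq, Set.mem_compl_iff, Set.mem_iUnion,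
      exists_prop, Finset.mem_Ioc, not_exists, not_and]
    constructor
    · intro hk m hm hbm
      rcases lt_or_ge m (τ ω) with h | h
      · exact absurd hbm (not_le.mpr (hτlt m hm.1 h))
      · omega
    · intro hmem
      by_contra hk
      push_neg at hk
      exact hmem (τ ω) ⟨hτw, hk⟩ hτS
  have hPAD : ∀ k, P (A k) = P (D k) := fun k => measure_congr (hAD k)
  set pk : ℕ → ℝ := fun k => (P (A k)).toReal with hpkdef
  have hpk0 : ∀ k, 0 ≤ pk k := fun k => ENNReal.toReal_nonneg
  -- lintegral of τ = sum of P (A k)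
  have hτlin : ∫⁻ ω, ((τ ω : ℕ) : ℝ≥0∞) ∂P = ∑' k, P (A k) := by
    have hpt : ∀ ω, ((τ ω : ℕ) : ℝ≥0∞) = ∑' k, (A k).indicator (fun _ => (1 : ℝ≥0∞)) ω := by
      intro ω
      have h1 : ∀ k, (A k).indicator (fun _ => (1 : ℝ≥0∞)) ω
          = if k < τ ω then (1 : ℝ≥0∞) else 0 := by
        intro k; by_cases h : k < τ ω <;> simp [hAdef, Set.indicator, h]
      rw [tsum_congr h1, aux_tsum_ite]
      simp
    calc ∫⁻ ω, ((τ ω : ℕ) : ℝ≥0∞) ∂P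
        = ∑' k, ∫⁻ ω, (A k).indicator (fun _ => (1 : ℝ≥0∞)) ω ∂P := by
          rw [← lintegral_tsum fun k => (measurable_const.indicator (hAmeas k)).aemeasurable]
          exact lintegral_congr hpt
      _ = ∑' k, P (A k) := tsum_congr fun k => lintegral_indicator_one (hAmeas k)
  have hofReal : ∫⁻ ω, ((τ ω : ℕ) : ℝ≥0∞) ∂P = ENNReal.ofReal Eτ := by
    rw [hEτdef, ofReal_integral_eq_lintegral_ofReal hτint
      (Eventually.of_forall fun ω => Nat.cast_nonneg _)]
    exact lintegral_congr fun ω => (ENNReal.ofReal_natCast _).symm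
  have hsumA : ∑' k, P (A k) = ENNReal.ofReal Eτ := by rw [← hτlin, hofReal]
  have hsumA_ne : ∑' k, P (A k) ≠ ⊤ := by rw [hsumA]; exact ENNReal.ofReal_ne_top
  have hpk_summable : Summable pk := ENNReal.summable_toReal hsumA_ne
  have hsum_pk : ∑' k, pk k = Eτ := by
    rw [hpkdef, ← ENNReal.tsum_toReal_eq fun k => measure_ne_top P _, hsumA,
      ENNReal.toReal_ofReal hEτ0]
  -- per-index lower bounds on the set integral
  have harith : ∀ k : ℕ, w + 1 + k - w - 1 = k := fun k => by omega
  have hIlow : ∀ k, w + 1 + k ∉ N → μstar * pk k ≤ ∫ ω in A k, Y (w + 1 + k) ω ∂P := by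
    intro k hkN
    have hc := haOut (w + 1 + k) (by omega) hkN
    rw [harith k] at hc
    have h2 := aux_setIntegral_ge P (𝒢.le k) (hYint _ (by omega)) hc (hDmeas k)
    rw [setIntegral_congr_set (hAD k), hpkdef]
    simp only [hPAD k]
    exact h2
  have hIpos : ∀ k, w + 1 + k ∈ N → 0 ≤ ∫ ω in A k, Y (w + 1 + k) ω ∂P := by
    intro k hkN
    have hc := haIn (w + 1 + k) (by omega) hkN
    rw [harith k] at hc
    have h2 := aux_setIntegral_ge P (𝒢.le k) (hYint _ (by omega)) hc (hDmeas k)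
    rw [setIntegral_congr_set (hAD k)]
    refine le_trans ?_ h2
    positivity
  -- per-index upper bound on the abs set integral
  have hIabs : ∀ k, ∫ ω in A k, |Y (w + 1 + k) ω| ∂P ≤ (1 + v) * pk k := by
    intro k
    have hn1 : 1 ≤ w + 1 + k := by omega
    have hsq : Integrable (fun ω => Y (w + 1 + k) ω ^ 2) P := (hY2 _ hn1).integrable_sq
    have habs : Integrable (fun ω => |Y (w + 1 + k) ω|) P := (hYint _ hn1).abs
    have hbd : P[(fun ω => |Y (w + 1 + k) ω|) | 𝒢 (w + 1 + k - 1)] ≤ᵐ[P] fun _ => 1 + v := by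
      have h1 : (fun ω => |Y (w + 1 + k) ω|) ≤ᵐ[P] fun ω => 1 + Y (w + 1 + k) ω ^ 2 := by
        refine Eventually.of_forall fun ω => ?_
        show |Y (w + 1 + k) ω| ≤ 1 + Y (w + 1 + k) ω ^ 2
        nlinarith [abs_nonneg (Y (w + 1 + k) ω), sq_abs (Y (w + 1 + k) ω), sq_nonneg (|Y (w + 1 + k) ω| - 1)]
      have h2 := condExp_mono (m := 𝒢 (w + 1 + k - 1)) habs ((integrable_const 1).add hsq) h1
      have h3 : P[(fun ω => 1 + Y (w + 1 + k) ω ^ 2) | 𝒢 (w + 1 + k - 1)] =ᵐ[P]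
          (P[(fun _ => (1 : ℝ)) | 𝒢 (w + 1 + k - 1)]) + (P[(fun ω => Y (w + 1 + k) ω ^ 2) | 𝒢 (w + 1 + k - 1)]) :=
        condExp_add (integrable_const (1 : ℝ)) hsq _
      have h4 := hvar (w + 1 + k) (by omega)
      filter_upwards [h2, h3, h4] with ω ha hbω hc
      rw [condExp_const (𝒢.le _)] at hbω
      calc (P[(fun ω => |Y (w + 1 + k) ω|) | 𝒢 (w + 1 + k - 1)]) ω
          ≤ (P[(fun ω => 1 + Y (w + 1 + k) ω ^ 2) | 𝒢 (w + 1 + k - 1)]) ω := ha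
        _ = 1 + (P[(fun ω => Y (w + 1 + k) ω ^ 2) | 𝒢 (w + 1 + k - 1)]) ω := hbω
        _ ≤ 1 + v := by linarith
    have hDk : MeasurableSet[𝒢 (w + 1 + k - 1)] (D k) := 𝒢.mono (by omega) _ (hDmeas k)
    calc ∫ ω in A k, |Y (w + 1 + k) ω| ∂P
        = ∫ ω in D k, |Y (w + 1 + k) ω| ∂P := setIntegral_congr_set (hAD k)
      _ ≤ (1 + v) * (P (D k)).toReal := aux_setIntegral_le P (𝒢.le _) habs hbd hDk
      _ = (1 + v) * pk k := by rw [hpkdef]; simp only [hPAD]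
  -- the summands
  set f : ℕ → Ω → ℝ := fun k => (A k).indicator (Y (w + 1 + k)) with hfdef
  have hfmeas : ∀ k, AEStronglyMeasurable (f k) P := fun k =>
    (((hadp _ (by omega)).mono (𝒢.le _)).indicator (hAmeas k)).aestronglyMeasurable
  have hfint : ∀ k, Integrable (f k) P := fun k => (hYint _ (by omega)).indicator (hAmeas k)
  have hfabs : ∀ k ω, |f k ω| = (A k).indicator (fun ω => |Y (w + 1 + k) ω|) ω := by
    intro k ω; by_cases h : ω ∈ A k <;> simp [hfdef, Set.indicator, h]
  have hfabsint : ∀ k, ∫ ω, |f k ω| ∂P ≤ (1 + v) * pk k := by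
    intro k
    calc ∫ ω, |f k ω| ∂P = ∫ ω in A k, |Y (w + 1 + k) ω| ∂P := by
          rw [← integral_indicator (hAmeas k)]
          exact integral_congr_ae (Eventually.of_forall fun ω => hfabs k ω)
      _ ≤ _ := hIabs k
  have hlint : ∀ k, ∫⁻ ω, (‖f k ω‖₊ : ℝ≥0∞) ∂P ≤ ENNReal.ofReal ((1 + v) * pk k) := by
    intro k
    have h1 : ∫⁻ ω, (‖f k ω‖₊ : ℝ≥0∞) ∂P = ENNReal.ofReal (∫ ω, |f k ω| ∂P) := by
      rw [ofReal_integral_eq_lintegral_ofReal (hfint k).abs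
        (Eventually.of_forall fun ω => abs_nonneg _)]
      exact (lintegral_congr fun ω => by
        rw [← ENNReal.ofReal_coe_nnreal, coe_nnnorm]; simp [Real.norm_eq_abs]).symm
    rw [h1]
    exact ENNReal.ofReal_le_ofReal (hfabsint k)
  have hlintsum : ∑' k, ∫⁻ ω, (‖f k ω‖₊ : ℝ≥0∞) ∂P ≠ ⊤ := by
    have h2 : ∑' k, ENNReal.ofReal ((1 + v) * pk k) = ENNReal.ofReal (1 + v) * ∑' k, P (A k) := by
      rw [← ENNReal.tsum_mul_left]
      exact tsum_congr fun k => by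
        rw [ENNReal.ofReal_mul (by linarith), ENNReal.ofReal_toReal (measure_ne_top P _)]
    refine ne_top_of_le_ne_top ?_ (ENNReal.tsum_le_tsum hlint)
    rw [h2]
    exact ENNReal.mul_ne_top ENNReal.ofReal_ne_top hsumA_ne
  have hswap : ∫ ω, (∑' k, f k ω) ∂P = ∑' k, ∫ ω, f k ω ∂P := integral_tsum hfmeas hlintsum
  -- pointwise identity
  have hpt2 : ∀ ω, ∑' k, f k ω = ∑ n ∈ Finset.Ioc w (τ ω + w), Y n ω := by
    intro ω
    have h1 : ∀ k, f k ω = if k < τ ω then Y (w + 1 + k) ω else 0 := by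
      intro k; by_cases h : k < τ ω <;> simp [hfdef, hAdef, Set.indicator, h]
    rw [tsum_congr h1, aux_tsum_ite]
    have h2 : Finset.Ioc w (τ ω + w) = Finset.Ico (w + 1) (τ ω + w + 1) := by
      ext x; simp only [Finset.mem_Ioc, Finset.mem_Ico]; omega
    rw [h2, Finset.sum_Ico_eq_sum_range]
    have h3 : τ ω + w + 1 - (w + 1) = τ ω := by omega
    rw [h3]
  have hIeq : ∀ k, ∫ ω, f k ω ∂P = ∫ ω in A k, Y (w + 1 + k) ω ∂P := by
    intro k
    rw [hfdef]
    exact integral_indicator (hAmeas k)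
  -- the N-part sum bound
  have hNsum : ∑' k, (if w + 1 + k ∈ N then pk k else 0) ≤ (q : ℝ) / w * Eτ := by
    set rN : ℕ → ℝ≥0∞ := fun k => if w + 1 + k ∈ N then P (A k) else 0 with hrNdef
    have hinner : ∀ ω, ∑' k, (if w + 1 + k ∈ N then (A k).indicator (fun _ => (1:ℝ≥0∞)) ω else 0)
        = (((Finset.range (τ ω)).filter fun k => w + 1 + k ∈ N).card : ℝ≥0∞) := by
      intro ω
      have h1 : ∀ k, (if w + 1 + k ∈ N then (A k).indicator (fun _ => (1:ℝ≥0∞)) ω else 0)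
          = if k < τ ω then (if w + 1 + k ∈ N then (1:ℝ≥0∞) else 0) else 0 := by
        intro k
        by_cases h : k < τ ω <;> by_cases h' : w + 1 + k ∈ N <;>
          simp [hAdef, Set.indicator, h, h']
      rw [tsum_congr h1, aux_tsum_ite]
      rw [Finset.sum_boole]
    have hcard : ∀ ω, ((((Finset.range (τ ω)).filter fun k => w + 1 + k ∈ N).card : ℕ) : ℝ≥0∞)
        ≤ ENNReal.ofReal ((q : ℝ) / w) * ENNReal.ofReal ((τ ω : ℕ) : ℝ) := by
      intro ω
      set s := Finset.image (fun k => w + 1 + k) ((Finset.range (τ ω)).filter fun k => w + 1 + k ∈ N) with hsdef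
      have hmem : ∀ m ∈ s, m ∈ N ∧ m ∈ Finset.Ioc w (w + τ ω) := by
        intro m hm
        rw [hsdef] at hm
        obtain ⟨k, hk, rfl⟩ := Finset.mem_image.mp hm
        obtain ⟨hk1, hk2⟩ := Finset.mem_filter.mp hk
        have := Finset.mem_range.mp hk1
        exact ⟨hk2, Finset.mem_Ioc.mpr ⟨by omega, by omega⟩⟩
      have hcard_eq : s.card = ((Finset.range (τ ω)).filter fun k => w + 1 + k ∈ N).card := by
        rw [hsdef]
        exact Finset.card_image_of_injective _ fun a b hab => by omega
      have hds := hd (τ ω) s hmem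
      rw [hcard_eq] at hds
      calc ((((Finset.range (τ ω)).filter fun k => w + 1 + k ∈ N).card : ℕ) : ℝ≥0∞)
          = ENNReal.ofReal ((((Finset.range (τ ω)).filter fun k => w + 1 + k ∈ N).card : ℕ) : ℝ) := by
            rw [ENNReal.ofReal_natCast]
        _ ≤ ENNReal.ofReal ((τ ω : ℝ) * q / w) := ENNReal.ofReal_le_ofReal hds
        _ = ENNReal.ofReal ((q : ℝ) / w) * ENNReal.ofReal ((τ ω : ℕ) : ℝ) := by
            rw [← ENNReal.ofReal_mul (by positivity)]
            ring_nf
    have hr2 : ∑' k, rN k ≤ ENNReal.ofReal ((q : ℝ) / w) * ENNReal.ofReal Eτ := by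
      have hmeas' : ∀ k, AEMeasurable
          (fun ω => (if w + 1 + k ∈ N then (A k).indicator (fun _ => (1:ℝ≥0∞)) ω else 0)) P := by
        intro k
        by_cases h : w + 1 + k ∈ N <;> simp only [h, if_true, if_false]
        · exact (measurable_const.indicator (hAmeas k)).aemeasurable
        · exact aemeasurable_const
      have hr1 : ∑' k, rN k
          = ∫⁻ ω, ∑' k, (if w + 1 + k ∈ N then (A k).indicator (fun _ => (1:ℝ≥0∞)) ω else 0) ∂P := by
        rw [lintegral_tsum hmeas']
        refine tsum_congr fun k => ?_
        rw [hrNdef]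
        by_cases h : w + 1 + k ∈ N <;> simp only [h, if_true, if_false]
        · exact (lintegral_indicator_one (hAmeas k)).symm
        · simp
      rw [hr1]
      calc ∫⁻ ω, ∑' k, (if w + 1 + k ∈ N then (A k).indicator (fun _ => (1:ℝ≥0∞)) ω else 0) ∂P
          ≤ ∫⁻ ω, ENNReal.ofReal ((q : ℝ) / w) * ENNReal.ofReal ((τ ω : ℕ) : ℝ) ∂P := by
            refine lintegral_mono fun ω => ?_
            rw [hinner ω]
            exact hcard ω
        _ = ENNReal.ofReal ((q : ℝ) / w) * ∫⁻ ω, ENNReal.ofReal ((τ ω : ℕ) : ℝ) ∂P :=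
            lintegral_const_mul' _ _ ENNReal.ofReal_ne_top
        _ = ENNReal.ofReal ((q : ℝ) / w) * ENNReal.ofReal Eτ := by
            rw [hEτdef, ofReal_integral_eq_lintegral_ofReal hτint
              (Eventually.of_forall fun ω => Nat.cast_nonneg _)]
    have hrN_ne : ∀ k, rN k ≠ ⊤ := by
      intro k; simp only [hrNdef]
      split_ifs
      · exact measure_ne_top P _
      · exact ENNReal.zero_ne_top
    have htoReal := ENNReal.toReal_mono
      (ENNReal.mul_ne_top ENNReal.ofReal_ne_top ENNReal.ofReal_ne_top) hr2
    rw [ENNReal.tsum_toReal_eq hrN_ne] at htoReal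
    have hleft : ∑' k, (rN k).toReal = ∑' k, (if w + 1 + k ∈ N then pk k else 0) := by
      refine tsum_congr fun k => ?_
      simp only [hrNdef, hpkdef]
      split_ifs <;> simp
    have hright : (ENNReal.ofReal ((q : ℝ) / w) * ENNReal.ofReal Eτ).toReal = (q : ℝ) / w * Eτ := by
      rw [ENNReal.toReal_mul, ENNReal.toReal_ofReal (by positivity), ENNReal.toReal_ofReal hEτ0]
    rw [hleft, hright] at htoReal
    exact htoReal
  -- assemble
  set I : ℕ → ℝ := fun k => ∫ ω, f k ω ∂P with hIdef
  have hIabs2 : ∀ k, |I k| ≤ (1 + v) * pk k := by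
    intro k
    rw [hIdef]
    calc |∫ ω, f k ω ∂P| ≤ ∫ ω, |f k ω| ∂P := by
          simpa [Real.norm_eq_abs] using norm_integral_le_integral_norm (f := f k) (μ := P)
      _ ≤ (1 + v) * pk k := hfabsint k
  have hSummableI : Summable I :=
    Summable.of_abs (Summable.of_nonneg_of_le (fun k => abs_nonneg _) hIabs2
      (hpk_summable.mul_left (1 + v)))
  set g : ℕ → ℝ := fun k => if w + 1 + k ∈ N then 0 else μstar * pk k with hgdef
  have hgle : ∀ k, g k ≤ I k := by
    intro k
    simp only [hgdef, hIdef]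
    rw [hIeq k]
    split_ifs with h
    · exact hIpos k h
    · exact hIlow k h
  have hg0 : ∀ k, 0 ≤ g k := by
    intro k; simp only [hgdef]
    split_ifs
    · rfl
    · positivity
  have hgub : ∀ k, g k ≤ μstar * pk k := by
    intro k; simp only [hgdef]
    split_ifs
    · positivity
    · rfl
  have hgsummable : Summable g :=
    Summable.of_nonneg_of_le hg0 hgub (hpk_summable.mul_left μstar)
  have hNsummable : Summable (fun k => if w + 1 + k ∈ N then pk k else 0) := by
    refine Summable.of_nonneg_of_le (fun k => ?_) (fun k => ?_) hpk_summable
    · split_ifs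
      · exact hpk0 k
      · rfl
    · split_ifs
      · rfl
      · exact hpk0 k
  have hgeq : ∀ k, g k = μstar * pk k - μstar * (if w + 1 + k ∈ N then pk k else 0) := by
    intro k; simp only [hgdef]; split_ifs <;> ring
  have hsumg : ∑' k, g k = μstar * Eτ - μstar * ∑' k, (if w + 1 + k ∈ N then pk k else 0) := by
    rw [tsum_congr hgeq, Summable.tsum_sub (hpk_summable.mul_left μstar) (hNsummable.mul_left μstar),
      tsum_mul_left, tsum_mul_left, hsum_pk]
  have hfinal1 : μstar * (1 - (q : ℝ) / w) * Eτ ≤ ∑' k, g k := by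
    rw [hsumg]
    have h := mul_le_mul_of_nonneg_left hNsum hμstar.le
    nlinarith [h]
  calc μstar * (1 - (q : ℝ) / w) * Eτ ≤ ∑' k, g k := hfinal1
    _ ≤ ∑' k, I k := Summable.tsum_le_tsum hgle hgsummable hSummableI
    _ = ∫ ω, (∑' k, f k ω) ∂P := hswap.symm
    _ = ∫ ω, (∑ n ∈ Finset.Ioc w (τ ω + w), Y n ω) ∂P :=
        integral_congr_ae (Eventually.of_forall hpt2)
end

section
/- For every b > 0, the stopping time T_b = inf{n > w : M_n ≥ e^b} satisfies E[T_b] ≥ e^b (with E[T_b] = ∞ allowed). -/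
open MeasureTheory Filter Set
open scoped ENNReal Topology

lemma pullout_lintegral {Ω : Type*} {m0 : MeasurableSpace Ω} {P : Measure Ω}
    [IsProbabilityMeasure P]
    {m : MeasurableSpace Ω} (hm : m ≤ m0) {f g : Ω → ℝ}
    (hf : StronglyMeasurable[m] f) (hf0 : ∀ ω, 0 ≤ f ω)
    (hg0 : ∀ ω, 0 ≤ g ω) (hgi : Integrable g P)
    (hgc : P[g|m] =ᵐ[P] fun _ => (1 : ℝ)) :
    ∫⁻ ω, ENNReal.ofReal (f ω * g ω) ∂P = ∫⁻ ω, ENNReal.ofReal (f ω) ∂P := by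
  set fk : ℕ → Ω → ℝ := fun k ω => min (f ω) k with hfkdef
  have hfkm : ∀ k, StronglyMeasurable[m] (fk k) := fun k => (hf.measurable.min measurable_const).stronglyMeasurable
  have hfk0 : ∀ k ω, 0 ≤ fk k ω := fun k ω => le_min (hf0 ω) (Nat.cast_nonneg k)
  have hfkb : ∀ k ω, ‖fk k ω‖ ≤ (k : ℝ) := by
    intro k ω
    rw [Real.norm_eq_abs, abs_of_nonneg (hfk0 k ω)]
    exact min_le_right _ _
  have hfki : ∀ k, Integrable (fk k) P := fun k =>
    Integrable.mono' (integrable_const (k : ℝ))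
      ((hfkm k).mono hm).aestronglyMeasurable (ae_of_all _ (hfkb k))
  have hfkgi : ∀ k, Integrable (fun ω => fk k ω * g ω) P := fun k =>
    hgi.bdd_mul ((hfkm k).mono hm).aestronglyMeasurable (ae_of_all _ (hfkb k))
  -- integral identity for each k
  have hint : ∀ k, ∫ ω, fk k ω * g ω ∂P = ∫ ω, fk k ω ∂P := by
    intro k
    have h1 : P[fun ω => fk k ω * g ω | m] =ᵐ[P] fun ω => fk k ω * (P[g|m]) ω := by
      have := condExp_mul_of_stronglyMeasurable_left (μ := P) (hfkm k) (hfkgi k) hgi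
      exact this
    have h2 : P[fun ω => fk k ω * g ω | m] =ᵐ[P] fk k := by
      filter_upwards [h1, hgc] with ω hω hω2
      rw [hω, hω2, mul_one]
    calc ∫ ω, fk k ω * g ω ∂P = ∫ ω, (P[fun ω => fk k ω * g ω | m]) ω ∂P :=
          (integral_condExp hm).symm
      _ = ∫ ω, fk k ω ∂P := integral_congr_ae h2
  -- lintegral identity for each k
  have hlint : ∀ k, ∫⁻ ω, ENNReal.ofReal (fk k ω * g ω) ∂P
      = ∫⁻ ω, ENNReal.ofReal (fk k ω) ∂P := by
    intro k
    rw [← ofReal_integral_eq_lintegral_ofReal (hfkgi k)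
        (ae_of_all _ fun ω => mul_nonneg (hfk0 k ω) (hg0 ω)),
      ← ofReal_integral_eq_lintegral_ofReal (hfki k) (ae_of_all _ (hfk0 k)), hint k]
  -- monotone convergence
  have hsup1 : ∀ ω, (⨆ k : ℕ, ENNReal.ofReal (fk k ω * g ω)) = ENNReal.ofReal (f ω * g ω) := by
    intro ω
    refine le_antisymm (iSup_le fun k => ENNReal.ofReal_le_ofReal
      (mul_le_mul_of_nonneg_right (min_le_left _ _) (hg0 ω))) ?_
    refine le_iSup_of_le ⌈f ω⌉₊ ?_
    have h : fk ⌈f ω⌉₊ ω = f ω := min_eq_left (α := ℝ) (Nat.le_ceil (f ω))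
    rw [h]
  have hsup2 : ∀ ω, (⨆ k : ℕ, ENNReal.ofReal (fk k ω)) = ENNReal.ofReal (f ω) := by
    intro ω
    refine le_antisymm (iSup_le fun k => ENNReal.ofReal_le_ofReal (min_le_left _ _)) ?_
    refine le_iSup_of_le ⌈f ω⌉₊ ?_
    have h : fk ⌈f ω⌉₊ ω = f ω := min_eq_left (α := ℝ) (Nat.le_ceil (f ω))
    rw [h]
  have hmono1 : Monotone fun k : ℕ => fun ω => ENNReal.ofReal (fk k ω * g ω) := by
    intro k k' hkk ω
    exact ENNReal.ofReal_le_ofReal (mul_le_mul_of_nonneg_right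
      (min_le_min le_rfl (Nat.cast_le.2 hkk)) (hg0 ω))
  have hmono2 : Monotone fun k : ℕ => fun ω => ENNReal.ofReal (fk k ω) := by
    intro k k' hkk ω
    exact ENNReal.ofReal_le_ofReal (min_le_min le_rfl (Nat.cast_le.2 hkk))
  have hae1 : ∀ k : ℕ, AEMeasurable (fun ω => ENNReal.ofReal (fk k ω * g ω)) P := fun k =>
    ENNReal.measurable_ofReal.comp_aemeasurable
      ((((hfkm k).mono hm).measurable).aemeasurable.mul hgi.aemeasurable)
  have hae2 : ∀ k : ℕ, AEMeasurable (fun ω => ENNReal.ofReal (fk k ω)) P := fun k =>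
    ENNReal.measurable_ofReal.comp_aemeasurable (((hfkm k).mono hm).measurable).aemeasurable
  calc ∫⁻ ω, ENNReal.ofReal (f ω * g ω) ∂P
      = ∫⁻ ω, ⨆ k : ℕ, ENNReal.ofReal (fk k ω * g ω) ∂P := by
        refine lintegral_congr fun ω => (hsup1 ω).symm
    _ = ⨆ k : ℕ, ∫⁻ ω, ENNReal.ofReal (fk k ω * g ω) ∂P :=
        lintegral_iSup' hae1 (ae_of_all _ fun ω k k' hkk => hmono1 hkk ω)
    _ = ⨆ k : ℕ, ∫⁻ ω, ENNReal.ofReal (fk k ω) ∂P := by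
        exact iSup_congr hlint
    _ = ∫⁻ ω, ⨆ k : ℕ, ENNReal.ofReal (fk k ω) ∂P :=
        (lintegral_iSup' hae2 (ae_of_all _ fun ω k k' hkk => hmono2 hkk ω)).symm
    _ = ∫⁻ ω, ENNReal.ofReal (f ω) ∂P := lintegral_congr fun ω => hsup2 ω


lemma pullout_setLintegral {Ω : Type*} {m0 : MeasurableSpace Ω} {P : Measure Ω}
    [IsProbabilityMeasure P]
    {m : MeasurableSpace Ω} (hm : m ≤ m0) {f g : Ω → ℝ} {A : Set Ω}
    (hA : MeasurableSet[m] A)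
    (hf : StronglyMeasurable[m] f) (hf0 : ∀ ω, 0 ≤ f ω)
    (hg0 : ∀ ω, 0 ≤ g ω) (hgi : Integrable g P)
    (hgc : P[g|m] =ᵐ[P] fun _ => (1 : ℝ)) :
    ∫⁻ ω in A, ENNReal.ofReal (f ω * g ω) ∂P = ∫⁻ ω in A, ENNReal.ofReal (f ω) ∂P := by
  have hfi : StronglyMeasurable[m] (A.indicator f) := hf.indicator hA
  have hfi0 : ∀ ω, 0 ≤ A.indicator f ω := fun ω => Set.indicator_nonneg (fun x _ => hf0 x) ω
  have key := pullout_lintegral hm hfi hfi0 hg0 hgi hgc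
  have hA0 : MeasurableSet[m0] A := hm A hA
  calc ∫⁻ ω in A, ENNReal.ofReal (f ω * g ω) ∂P
      = ∫⁻ ω, A.indicator (fun ω => ENNReal.ofReal (f ω * g ω)) ω ∂P :=
        (lintegral_indicator hA0 _).symm
    _ = ∫⁻ ω, ENNReal.ofReal (A.indicator f ω * g ω) ∂P :=
        lintegral_congr fun ω => by by_cases hω : ω ∈ A <;> simp [hω]
    _ = ∫⁻ ω, ENNReal.ofReal (A.indicator f ω) ∂P := key
    _ = ∫⁻ ω, A.indicator (fun ω => ENNReal.ofReal (f ω)) ω ∂P :=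
        lintegral_congr fun ω => by by_cases hω : ω ∈ A <;> simp [hω]
    _ = ∫⁻ ω in A, ENNReal.ofReal (f ω) ∂P := lintegral_indicator hA0 _

noncomputable def cusumSR {Ω : Type*} (w : ℕ) (L : ℕ → Ω → ℝ) : ℕ → Ω → ℝ
  | 0 => fun _ => 0
  | (j + 1) => fun ω => (cusumSR w L j ω + 1) * L (w + j + 1) ω

/-- For the exponentiated CuSum statistic `M_w = 1`, `M_n = max(M_{n-1}, 1) L_n` for `n > w`,
driven by nonnegative integrable likelihood ratios with `E[L_n | F_{n-1}] = 1` a.s., the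
stopping time `T_b = inf {n > w : M_n ≥ e^b}` satisfies `E[T_b] ≥ e^b`
(the expectation being allowed to be infinite). -/
theorem cusum_mean_time_to_false_alarm
    {Ω : Type*} [m0 : MeasurableSpace Ω] (P : Measure Ω) [IsProbabilityMeasure P]
    (w : ℕ) (ℱ : Filtration ℕ m0)
    (L : ℕ → Ω → ℝ)
    (hLpos : ∀ n, w < n → ∀ ω, 0 ≤ L n ω)
    (hLint : ∀ n, w < n → Integrable (L n) P)
    (hLmeas : ∀ n, w < n → StronglyMeasurable[ℱ n] (L n))
    (hLcond : ∀ n, w < n → P[L n | ℱ (n - 1)] =ᵐ[P] (fun _ => (1 : ℝ)))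
    (M : ℕ → Ω → ℝ)
    (hMw : ∀ ω, M w ω = 1)
    (hMrec : ∀ n, w < n → ∀ ω, M n ω = max (M (n - 1) ω) 1 * L n ω)
    (b : ℝ) (hb : 0 < b)
    (T : Ω → ℝ≥0∞)
    (hT : ∀ ω, T ω = sInf {t : ℝ≥0∞ | ∃ n : ℕ, t = n ∧ w < n ∧ Real.exp b ≤ M n ω}) :
    ENNReal.ofReal (Real.exp b) ≤ ∫⁻ ω, T ω ∂P := by
  classical
  set B : ℝ := Real.exp b with hBdef
  set B' : ℝ≥0∞ := ENNReal.ofReal B with hB'def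
  have hB'top : B' ≠ ∞ := ENNReal.ofReal_ne_top
  set S : ℕ → Ω → ℝ := cusumSR w L with hSdef
  -- basic properties of S
  have hS0 : ∀ j ω, 0 ≤ S j ω := by
    intro j
    induction j with
    | zero => intro ω; simp [hSdef, cusumSR]
    | succ j ih =>
      intro ω
      show 0 ≤ (S j ω + 1) * L (w + j + 1) ω
      exact mul_nonneg (by linarith [ih ω]) (hLpos _ (by omega) ω)
  have hSmeas : ∀ j, StronglyMeasurable[ℱ (w + j)] (S j) := by
    intro j
    induction j with
    | zero => exact stronglyMeasurable_const
    | succ j ih =>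
      exact ((ih.mono (ℱ.mono (Nat.le_succ _))).add stronglyMeasurable_const).mul
        (hLmeas (w + j + 1) (by omega))
  -- measurability of M
  have hMmeas : ∀ n, w ≤ n → StronglyMeasurable[ℱ n] (M n) := by
    intro n hn
    induction n, hn using Nat.le_induction with
    | base =>
      have h : M w = fun _ => (1 : ℝ) := funext hMw
      rw [h]; exact stronglyMeasurable_const
    | succ n hn ih =>
      have hrec : M (n + 1) = fun ω => max (M n ω) 1 * L (n + 1) ω := by
        funext ω
        have h := hMrec (n + 1) (by omega) ω
        simpa using h
      rw [hrec]
      exact (((ih.mono (ℱ.mono (Nat.le_succ _))).measurable.max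
        measurable_const).stronglyMeasurable).mul (hLmeas (n + 1) (by omega))
  -- M ≤ S for indices beyond w
  have hMS : ∀ j, 1 ≤ j → ∀ ω, M (w + j) ω ≤ S j ω := by
    intro j hj
    induction j, hj using Nat.le_induction with
    | base =>
      intro ω
      have h1 := hMrec (w + 1) (by omega) ω
      have h2 : w + 1 - 1 = w := by omega
      rw [h2, hMw ω] at h1
      have hS1 : S 1 ω = L (w + 1) ω := by
        show (S 0 ω + 1) * L (w + 0 + 1) ω = L (w + 1) ω
        have h0 : S 0 ω = 0 := rfl
        rw [h0]; ring_nf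
      rw [h1, hS1, max_self, one_mul]
    | succ j hj ih =>
      intro ω
      have h1 := hMrec (w + j + 1) (by omega) ω
      have h2 : w + j + 1 - 1 = w + j := by omega
      rw [h2] at h1
      have hSrec : S (j + 1) ω = (S j ω + 1) * L (w + j + 1) ω := rfl
      have hmax : max (M (w + j) ω) 1 ≤ S j ω + 1 := by
        rcases max_cases (M (w + j) ω) 1 with ⟨h, _⟩ | ⟨h, _⟩
        · rw [h]; linarith [ih ω]
        · rw [h]; linarith [hS0 j ω]
      have h3 : w + (j + 1) = w + j + 1 := by omega
      rw [h3, h1, hSrec]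
      exact mul_le_mul_of_nonneg_right hmax (hLpos _ (by omega) ω)
  -- the events G n = {T > n}
  set G : ℕ → Set Ω := fun n => {ω | ∀ k, w < k → k ≤ n → M k ω < B} with hGdef
  have hGmeasF : ∀ n, w ≤ n → MeasurableSet[ℱ n] (G n) := by
    intro n hn
    have h : G n = ⋂ (k : ℕ), ⋂ (_ : w < k ∧ k ≤ n), {ω | M k ω < B} := by
      ext ω
      simp only [hGdef, Set.mem_setOf_eq, Set.mem_iInter]
      constructor
      · intro h k hk; exact h k hk.1 hk.2
      · intro h k h1 h2; exact h k ⟨h1, h2⟩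
    rw [h]
    refine MeasurableSet.iInter fun k => MeasurableSet.iInter fun hk => ?_
    have hMk : Measurable[ℱ n] (M k) :=
      ((hMmeas k (le_of_lt hk.1)).mono (ℱ.mono hk.2)).measurable
    exact measurableSet_lt hMk measurable_const
  have hGmeas : ∀ n, w ≤ n → MeasurableSet (G n) := fun n hn => ℱ.le n _ (hGmeasF n hn)
  have hGanti : ∀ {p q : ℕ}, p ≤ q → G q ⊆ G p := by
    intro p q hpq ω hω k h1 h2
    exact hω k h1 (le_trans h2 hpq)
  have hGw : G w = Set.univ := by
    ext ω
    simp only [hGdef, Set.mem_setOf_eq, Set.mem_univ, iff_true]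
    intro k h1 h2; omega
  -- T > k on G k
  have hTgt : ∀ k, w ≤ k → ∀ ω, ω ∈ G k → ((k : ℝ≥0∞) + 1) ≤ T ω := by
    intro k hk ω hω
    rw [hT ω]
    refine le_sInf fun t ht => ?_
    obtain ⟨n, rfl, hn1, hn2⟩ := ht
    have hnk : k < n := by
      by_contra hcon
      push_neg at hcon
      exact absurd hn2 (not_le.2 (hω n hn1 hcon))
    calc (k : ℝ≥0∞) + 1 = ((k + 1 : ℕ) : ℝ≥0∞) := by push_cast; ring
      _ ≤ (n : ℝ≥0∞) := by exact_mod_cast hnk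
  -- the sum of indicators is below T
  have hpt : ∀ N, w ≤ N → ∀ ω,
      (∑ k ∈ Finset.Ico w N, (G k).indicator (fun _ => (1 : ℝ≥0∞)) ω) ≤ T ω := by
    intro N hN
    induction N, hN using Nat.le_induction with
    | base => intro ω; simp
    | succ N hN ih =>
      intro ω
      rw [Finset.sum_Ico_succ_top hN]
      by_cases hω : ω ∈ G N
      · have hcard : (∑ k ∈ Finset.Ico w N, (G k).indicator (fun _ => (1 : ℝ≥0∞)) ω)
            ≤ (N : ℝ≥0∞) := by
          calc (∑ k ∈ Finset.Ico w N, (G k).indicator (fun _ => (1 : ℝ≥0∞)) ω)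
              ≤ ∑ _k ∈ Finset.Ico w N, (1 : ℝ≥0∞) :=
                Finset.sum_le_sum fun k _ => Set.indicator_le_self' (fun _ _ => zero_le_one) ω
            _ = ((N - w : ℕ) : ℝ≥0∞) := by
                rw [Finset.sum_const, Nat.card_Ico]; simp
            _ ≤ (N : ℝ≥0∞) := by exact_mod_cast Nat.sub_le N w
        have hind : (G N).indicator (fun _ => (1 : ℝ≥0∞)) ω = 1 :=
          Set.indicator_of_mem hω _
        rw [hind]
        calc (∑ k ∈ Finset.Ico w N, (G k).indicator (fun _ => (1 : ℝ≥0∞)) ω) + 1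
            ≤ (N : ℝ≥0∞) + 1 := add_le_add_left hcard 1
          _ ≤ T ω := hTgt N hN ω hω
      · rw [Set.indicator_of_notMem hω, add_zero]
        exact ih ω
  have hsumT : ∀ N, w ≤ N → (∑ k ∈ Finset.Ico w N, P (G k)) ≤ ∫⁻ ω, T ω ∂P := by
    intro N hN
    have h1 : ∀ k, w ≤ k → P (G k) = ∫⁻ ω, (G k).indicator (fun _ => (1 : ℝ≥0∞)) ω ∂P := by
      intro k hk
      rw [lintegral_indicator (hGmeas k hk), setLIntegral_const, one_mul]
    calc (∑ k ∈ Finset.Ico w N, P (G k))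
        = ∑ k ∈ Finset.Ico w N, ∫⁻ ω, (G k).indicator (fun _ => (1 : ℝ≥0∞)) ω ∂P :=
          Finset.sum_congr rfl fun k hk => h1 k (Finset.mem_Ico.1 hk).1
      _ = ∫⁻ ω, ∑ k ∈ Finset.Ico w N, (G k).indicator (fun _ => (1 : ℝ≥0∞)) ω ∂P := by
          rw [lintegral_finset_sum]
          intro k hk
          exact measurable_const.indicator (hGmeas k (Finset.mem_Ico.1 hk).1)
      _ ≤ ∫⁻ ω, T ω ∂P := lintegral_mono (hpt N hN)
  -- key martingale estimate
  set a : ℕ → ℝ≥0∞ := fun n => ∫⁻ ω in G n, ENNReal.ofReal (S (n - w) ω) ∂P with hadef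
  have hclaim : ∀ N, w ≤ N →
      B' + a N ≤ B' * P (G N) + ∑ k ∈ Finset.Ico w N, P (G k) := by
    intro N hN
    induction N, hN using Nat.le_induction with
    | base =>
      have haw : a w = 0 := by
        have h : ∀ ω, ENNReal.ofReal (S (w - w) ω) = 0 := by
          intro ω
          rw [Nat.sub_self, show S 0 ω = 0 from rfl]
          exact ENNReal.ofReal_zero
        show (∫⁻ ω in G w, ENNReal.ofReal (S (w - w) ω) ∂P) = 0
        rw [lintegral_congr h, lintegral_zero]
      rw [haw, hGw, measure_univ, Finset.Ico_self, Finset.sum_empty, mul_one, add_zero]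
    | succ n hn ih =>
      have hGsub : G (n + 1) ⊆ G n := hGanti (Nat.le_succ n)
      have hDmeas : MeasurableSet (G n \ G (n + 1)) :=
        (hGmeas n hn).diff (hGmeas (n + 1) (by omega))
      have hsplit : P (G n) = P (G (n + 1)) + P (G n \ G (n + 1)) := by
        have h : P (G (n + 1) ∪ (G n \ G (n + 1)))
            = P (G (n + 1)) + P (G n \ G (n + 1)) :=
          measure_union disjoint_sdiff_right hDmeas
        rwa [Set.union_diff_cancel hGsub] at h
      -- step 1 : the pull-out identity
      have harep : ∀ ω, S (n + 1 - w) ω = (S (n - w) ω + 1) * L (n + 1) ω := by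
        intro ω
        rw [show n + 1 - w = (n - w) + 1 from by omega]
        show (S (n - w) ω + 1) * L (w + (n - w) + 1) ω = _
        rw [show w + (n - w) + 1 = n + 1 from by omega]
      have hSm : StronglyMeasurable[ℱ n] (fun ω => S (n - w) ω + 1) := by
        have h := hSmeas (n - w)
        rw [show w + (n - w) = n from by omega] at h
        exact h.add stronglyMeasurable_const
      have step1 : ∫⁻ ω in G n, ENNReal.ofReal (S (n + 1 - w) ω) ∂P = a n + P (G n) := by
        calc ∫⁻ ω in G n, ENNReal.ofReal (S (n + 1 - w) ω) ∂P
            = ∫⁻ ω in G n, ENNReal.ofReal ((S (n - w) ω + 1) * L (n + 1) ω) ∂P :=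
              lintegral_congr fun ω => by rw [harep ω]
          _ = ∫⁻ ω in G n, ENNReal.ofReal (S (n - w) ω + 1) ∂P := by
              refine pullout_setLintegral (ℱ.le n) (hGmeasF n hn) hSm
                (fun ω => by linarith [hS0 (n - w) ω]) (hLpos (n + 1) (by omega))
                (hLint (n + 1) (by omega)) ?_
              have h := hLcond (n + 1) (by omega)
              simpa using h
          _ = ∫⁻ ω in G n, (ENNReal.ofReal (S (n - w) ω) + 1) ∂P :=
              lintegral_congr fun ω => by
                rw [ENNReal.ofReal_add (hS0 _ ω) zero_le_one, ENNReal.ofReal_one]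
          _ = a n + P (G n) := by
              rw [lintegral_add_right _ measurable_const, setLIntegral_const, one_mul]
      -- step 2 : lower bound
      have hle : ∀ ω ∈ G n \ G (n + 1), B' ≤ ENNReal.ofReal (S (n + 1 - w) ω) := by
        intro ω hω
        obtain ⟨hω1, hω2⟩ := hω
        have hBM : B ≤ M (n + 1) ω := by
          by_contra hcon
          push_neg at hcon
          apply hω2
          intro k h1 h2
          rcases Nat.lt_or_ge k (n + 1) with h | h
          · exact hω1 k h1 (by omega)
          · rw [show k = n + 1 from by omega]
            exact hcon
        have hMle : M (n + 1) ω ≤ S (n + 1 - w) ω := by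
          have h := hMS (n + 1 - w) (by omega) ω
          rwa [show w + (n + 1 - w) = n + 1 from by omega] at h
        exact ENNReal.ofReal_le_ofReal (le_trans hBM hMle)
      have step2 : a (n + 1) + B' * P (G n \ G (n + 1))
          ≤ ∫⁻ ω in G n, ENNReal.ofReal (S (n + 1 - w) ω) ∂P := by
        calc a (n + 1) + B' * P (G n \ G (n + 1))
            ≤ (∫⁻ ω in G (n + 1), ENNReal.ofReal (S (n + 1 - w) ω) ∂P)
              + ∫⁻ ω in G n \ G (n + 1), ENNReal.ofReal (S (n + 1 - w) ω) ∂P := by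
              refine add_le_add le_rfl ?_
              exact le_trans (le_of_eq (setLIntegral_const (G n \ G (n + 1)) B').symm)
                (setLIntegral_mono' hDmeas hle)
          _ = ∫⁻ ω in G (n + 1) ∪ (G n \ G (n + 1)), ENNReal.ofReal (S (n + 1 - w) ω) ∂P :=
              (lintegral_union hDmeas disjoint_sdiff_right).symm
          _ = ∫⁻ ω in G n, ENNReal.ofReal (S (n + 1 - w) ω) ∂P := by
              rw [Set.union_diff_cancel hGsub]
      have hstep : a (n + 1) + B' * P (G n \ G (n + 1)) ≤ a n + P (G n) :=
        step2.trans (le_of_eq step1)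
      have hBPD : B' * P (G n \ G (n + 1)) ≠ ∞ :=
        ENNReal.mul_ne_top hB'top (measure_ne_top P _)
      have key : B' + a (n + 1) + B' * P (G n \ G (n + 1))
          ≤ (B' * P (G (n + 1)) + ∑ k ∈ Finset.Ico w (n + 1), P (G k))
            + B' * P (G n \ G (n + 1)) := by
        calc B' + a (n + 1) + B' * P (G n \ G (n + 1))
            = B' + (a (n + 1) + B' * P (G n \ G (n + 1))) := by ring
          _ ≤ B' + (a n + P (G n)) := add_le_add_right hstep _
          _ = (B' + a n) + P (G n) := by ring
          _ ≤ (B' * P (G n) + ∑ k ∈ Finset.Ico w n, P (G k)) + P (G n) :=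
              add_le_add_left ih _
          _ = (B' * P (G (n + 1)) + ∑ k ∈ Finset.Ico w (n + 1), P (G k))
              + B' * P (G n \ G (n + 1)) := by
              rw [Finset.sum_Ico_succ_top hn, hsplit]; ring
      exact (ENNReal.add_le_add_iff_right hBPD).1 key
  -- combine
  have hbound : ∀ j : ℕ, B' ≤ B' * P (G (w + j)) + ∫⁻ ω, T ω ∂P := by
    intro j
    calc B' ≤ B' + a (w + j) := le_self_add
      _ ≤ B' * P (G (w + j)) + ∑ k ∈ Finset.Ico w (w + j), P (G k) :=
          hclaim (w + j) (by omega)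
      _ ≤ B' * P (G (w + j)) + ∫⁻ ω, T ω ∂P :=
          add_le_add_right (hsumT (w + j) (by omega)) _
  set I : Set Ω := ⋂ j : ℕ, G (w + j) with hIdef
  have hImeas : MeasurableSet I := MeasurableSet.iInter fun j => hGmeas (w + j) (by omega)
  by_cases hI : P I = 0
  · have hanti : Antitone (fun j : ℕ => G (w + j)) := fun i j hij => hGanti (by omega)
    have htend : Tendsto (fun j => P (G (w + j))) atTop (𝓝 (P I)) :=
      tendsto_measure_iInter_atTop (fun j => (hGmeas (w + j) (by omega)).nullMeasurableSet)
        hanti ⟨0, measure_ne_top P _⟩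
    rw [hI] at htend
    have htend2 : Tendsto (fun j => B' * P (G (w + j)) + ∫⁻ ω, T ω ∂P) atTop
        (𝓝 (B' * 0 + ∫⁻ ω, T ω ∂P)) :=
      (ENNReal.Tendsto.const_mul htend (Or.inr hB'top)).add tendsto_const_nhds
    have h := ge_of_tendsto' htend2 hbound
    simpa using h
  · have hTI : ∀ ω ∈ I, (⊤ : ℝ≥0∞) ≤ T ω := by
      intro ω hω
      by_contra hcon
      push_neg at hcon
      obtain ⟨k, hk⟩ := ENNReal.exists_nat_gt hcon.ne_top
      have h1 : ((w + k : ℕ) : ℝ≥0∞) + 1 ≤ T ω :=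
        hTgt (w + k) (by omega) ω (Set.mem_iInter.1 hω k)
      have h2 : (k : ℝ≥0∞) ≤ ((w + k : ℕ) : ℝ≥0∞) + 1 := by
        have : (k : ℕ) ≤ (w + k) + 1 := by omega
        calc (k : ℝ≥0∞) ≤ ((w + k + 1 : ℕ) : ℝ≥0∞) := by exact_mod_cast this
          _ = ((w + k : ℕ) : ℝ≥0∞) + 1 := by push_cast; ring
      exact absurd (le_trans h2 h1) (not_le.2 hk)
    have hge : (⊤ : ℝ≥0∞) ≤ ∫⁻ ω, T ω ∂P := by
      calc (⊤ : ℝ≥0∞) = ⊤ * P I := (ENNReal.top_mul hI).symm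
        _ = ∫⁻ _ω in I, ⊤ ∂P := (setLIntegral_const I ⊤).symm
        _ ≤ ∫⁻ ω in I, T ω ∂P := setLIntegral_mono' hImeas hTI
        _ ≤ ∫⁻ ω, T ω ∂P := setLIntegral_le_lintegral _ _
    exact le_trans le_top hge
end

section
/- Let σ be a {G_n}-stopping time with E[σ] < ∞. Then the delayed Wald identity holds: E[ Σ_{n=w+1}^{σ+w} Y_n ] = Σ_{n=w+1}^{∞} E[ E[Y_n | G_{n−w−1}] · 1{σ ≥ n − w} ], where the series on the right converges absolutely. -/
open MeasureTheory Filter Set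
open scoped ENNReal

/-- Delayed Wald identity: if `σ` is a stopping time with `E[σ] < ∞`, then
`E[ Σ_{n=w+1}^{σ+w} Y_n ] = Σ_{n=w+1}^{∞} E[ E[Y_n | G_{n-w-1}] · 1{σ ≥ n-w} ]`,
where the series converges absolutely.  (The series is written below via the
reindexing `n = w + 1 + k`, so that `n - w - 1 = k` and `{σ ≥ n - w} = {σ ≥ k + 1}`.) -/
theorem delayed_wald_identity
    {Ω : Type*} [m0 : MeasurableSpace Ω] (P : Measure Ω) [IsProbabilityMeasure P]
    (𝒢 : Filtration ℕ m0) (w : ℕ)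
    (Y : ℕ → Ω → ℝ)
    (hY2 : ∀ n, w < n → MemLp (Y n) 2 P)
    (hadp : ∀ n, w < n → StronglyMeasurable[𝒢 n] (Y n))
    (v : ℝ) (hv : 0 < v)
    (hvar : ∀ n, w < n → P[(fun ω => (Y n ω) ^ 2) | 𝒢 (n - 1)] ≤ᵐ[P] (fun _ => v))
    (σ : Ω → ℕ) (hσ : IsStoppingTime 𝒢 (fun ω => (σ ω : WithTop ℕ)))
    (hσint : Integrable (fun ω => (σ ω : ℝ)) P) :
    Summable (fun k : ℕ =>
      |∫ ω, (P[Y (w + 1 + k) | 𝒢 k]) ω *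
        Set.indicator {ω' | k + 1 ≤ σ ω'} (fun _ => (1 : ℝ)) ω ∂P|) ∧
    ∫ ω, (∑ n ∈ Finset.Ioc w (σ ω + w), Y n ω) ∂P =
      ∑' k : ℕ, ∫ ω, (P[Y (w + 1 + k) | 𝒢 k]) ω *
        Set.indicator {ω' | k + 1 ≤ σ ω'} (fun _ => (1 : ℝ)) ω ∂P := by
  classical
  set C : ℝ := (v + 1) / 2 with hCdef
  have hC0 : 0 ≤ C := by positivity
  set N : ℕ → ℕ := fun k => w + 1 + k with hNdef
  set A : ℕ → Set Ω := fun k => {ω' | k + 1 ≤ σ ω'} with hAdef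
  have hNgt : ∀ k, w < N k := fun k => by simp [hNdef]; omega
  -- measurability of A k
  have hA : ∀ k, MeasurableSet[𝒢 k] (A k) := by
    intro k
    have : A k = {ω' | σ ω' ≤ k}ᶜ := by
      ext ω; simp [hAdef]
    rw [this]
    simpa using (hσ k).compl
  have hAm : ∀ k, MeasurableSet (A k) := fun k => 𝒢.le k _ (hA k)
  have hYint : ∀ k, Integrable (Y (N k)) P :=
    fun k => (hY2 _ (hNgt k)).integrable one_le_two
  have hY2int : ∀ k, Integrable (fun ω => Y (N k) ω ^ 2) P :=
    fun k => (hY2 _ (hNgt k)).integrable_sq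
  -- bound on ∫_{A k} (Y (N k))²
  have hsq : ∀ k, ∫ ω in A k, Y (N k) ω ^ 2 ∂P ≤ v * (P (A k)).toReal := by
    intro k
    have hAk' : MeasurableSet[𝒢 (N k - 1)] (A k) :=
      𝒢.mono (by simp only [hNdef]; omega) _ (hA k)
    have h1 : ∫ ω in A k, Y (N k) ω ^ 2 ∂P
        = ∫ ω in A k, (P[(fun ω => Y (N k) ω ^ 2) | 𝒢 (N k - 1)]) ω ∂P :=
      (setIntegral_condExp (𝒢.le _) (hY2int k) hAk').symm
    rw [h1]
    have h2 : ∫ ω in A k, (P[(fun ω => Y (N k) ω ^ 2) | 𝒢 (N k - 1)]) ω ∂P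
        ≤ ∫ ω in A k, v ∂P := by
      refine setIntegral_mono_ae integrable_condExp.integrableOn
        (integrable_const v).integrableOn ?_
      exact hvar (N k) (hNgt k)
    calc _ ≤ ∫ ω in A k, v ∂P := h2
    _ = v * (P (A k)).toReal := by rw [setIntegral_const]; ring_nf; rw [measureReal_def]
  -- key bound
  have key : ∀ k, ∫ ω in A k, |Y (N k) ω| ∂P ≤ C * (P (A k)).toReal := by
    intro k
    have h1 : ∫ ω in A k, |Y (N k) ω| ∂P ≤ ∫ ω in A k, (Y (N k) ω ^ 2 + 1) / 2 ∂P := by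
      refine setIntegral_mono (hYint k).abs.integrableOn
        (((hY2int k).add (integrable_const 1)).div_const 2).integrableOn ?_
      intro ω
      nlinarith [sq_nonneg (|Y (N k) ω| - 1), sq_abs (Y (N k) ω)]
    have h2 : ∫ ω in A k, (Y (N k) ω ^ 2 + 1) / 2 ∂P
        = ((∫ ω in A k, Y (N k) ω ^ 2 ∂P) + (P (A k)).toReal) / 2 := by
      rw [integral_div, integral_add (hY2int k).integrableOn (integrable_const 1).integrableOn]
      simp [setIntegral_const, measureReal_def]
    have h3 := hsq k
    rw [h2] at h1
    calc ∫ ω in A k, |Y (N k) ω| ∂P ≤ _ := h1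
    _ ≤ C * (P (A k)).toReal := by rw [hCdef]; nlinarith
  -- summability of the tail probabilities
  have hsum_ennreal : ∑' k, P (A k) = ∫⁻ ω, (σ ω : ℝ≥0∞) ∂P := by
    have h1 : ∀ k, P (A k) = ∫⁻ ω, (A k).indicator (1 : Ω → ℝ≥0∞) ω ∂P :=
      fun k => (lintegral_indicator_one (hAm k)).symm
    simp_rw [h1]
    rw [← lintegral_tsum (fun k => ((measurable_one.indicator (hAm k)).aemeasurable))]
    refine lintegral_congr fun ω => ?_
    have hiff : ∀ k, (A k).indicator (1 : Ω → ℝ≥0∞) ω = if k < σ ω then 1 else 0 := by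
      intro k
      by_cases h : k < σ ω
      · have hm : ω ∈ A k := by simp [hAdef]; omega
        simp [indicator_of_mem hm, h]
      · have hm : ω ∉ A k := by simp [hAdef]; omega
        simp [indicator_of_notMem hm, h]
    simp_rw [hiff]
    rw [tsum_eq_sum (s := Finset.range (σ ω)) (fun k hk => by simp at hk; simp [hk])]
    have hone : ∀ k ∈ Finset.range (σ ω), (if k < σ ω then (1 : ℝ≥0∞) else 0) = 1 := by
      intro k hk; simp at hk; simp [hk]
    rw [Finset.sum_congr rfl hone]
    simp
  have hσlt : ∫⁻ ω, (σ ω : ℝ≥0∞) ∂P < ∞ := by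
    have h := hσint.hasFiniteIntegral
    have heq : ∀ ω, (σ ω : ℝ≥0∞) = (‖(σ ω : ℝ)‖₊ : ℝ≥0∞) := by
      intro ω; simp
    calc ∫⁻ ω, (σ ω : ℝ≥0∞) ∂P = ∫⁻ ω, (‖(σ ω : ℝ)‖₊ : ℝ≥0∞) ∂P :=
      lintegral_congr heq
    _ < ∞ := h
  have hPne : ∑' k, P (A k) ≠ ∞ := by rw [hsum_ennreal]; exact hσlt.ne
  have hPsum : Summable fun k => (P (A k)).toReal := ENNReal.summable_toReal hPne
  -- the summand functions
  set f : ℕ → Ω → ℝ :=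
    fun k ω => Y (N k) ω * (A k).indicator (fun _ => (1 : ℝ)) ω with hfdef
  have hf_ind : ∀ k, f k = (A k).indicator (Y (N k)) := by
    intro k
    funext ω
    by_cases h : ω ∈ A k
    · simp [hfdef, indicator_of_mem h]
    · simp [hfdef, indicator_of_notMem h]
  have hfint : ∀ k, Integrable (f k) P := by
    intro k; rw [hf_ind k]; exact (hYint k).indicator (hAm k)
  have hint_eq : ∀ k, ∫ ω, f k ω ∂P = ∫ ω in A k, Y (N k) ω ∂P := by
    intro k; rw [hf_ind k]; exact integral_indicator (hAm k)
  have hcond_eq : ∀ k, (∫ ω, (P[Y (N k) | 𝒢 k]) ω *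
      (A k).indicator (fun _ => (1 : ℝ)) ω ∂P) = ∫ ω, f k ω ∂P := by
    intro k
    have h1 : (fun ω => (P[Y (N k) | 𝒢 k]) ω * (A k).indicator (fun _ => (1 : ℝ)) ω)
        = (A k).indicator (P[Y (N k) | 𝒢 k]) := by
      funext ω
      by_cases h : ω ∈ A k
      · simp [indicator_of_mem h]
      · simp [indicator_of_notMem h]
    rw [h1, integral_indicator (hAm k), hint_eq k]
    exact setIntegral_condExp (𝒢.le k) (hYint k) (hA k)
  have habs : ∀ k, |∫ ω, f k ω ∂P| ≤ C * (P (A k)).toReal := by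
    intro k
    rw [hint_eq k]
    calc |∫ ω in A k, Y (N k) ω ∂P| ≤ ∫ ω in A k, |Y (N k) ω| ∂P := by
          simpa using norm_integral_le_integral_norm (μ := P.restrict (A k)) (Y (N k))
    _ ≤ C * (P (A k)).toReal := key k
  constructor
  · -- summability
    refine Summable.of_nonneg_of_le (fun k => abs_nonneg _) (fun k => ?_) (hPsum.mul_left C)
    rw [hcond_eq k]
    exact habs k
  · -- main identity
    have hpt : ∀ ω, (∑ n ∈ Finset.Ioc w (σ ω + w), Y n ω) = ∑' k, f k ω := by
      intro ω
      have h1 : Finset.Ioc w (σ ω + w) = Finset.Ico (w + 1) (σ ω + w + 1) := by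
        ext n; simp
      rw [h1, Finset.sum_Ico_eq_sum_range]
      have h2 : σ ω + w + 1 - (w + 1) = σ ω := by omega
      rw [h2]
      rw [tsum_eq_sum (s := Finset.range (σ ω)) (fun k hk => by
        simp only [hfdef]
        have : ω ∉ A k := by simp at hk; simp [hAdef]; omega
        simp [indicator_of_notMem this])]
      refine Finset.sum_congr rfl fun k hk => ?_
      have : ω ∈ A k := by simp at hk; simp [hAdef]; omega
      simp [hfdef, indicator_of_mem this, hNdef]
    have hlin : ∑' k, ∫⁻ ω, ‖f k ω‖₊ ∂P ≠ ∞ := by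
      have hb : ∀ k, ∫⁻ ω, ‖f k ω‖₊ ∂P ≤ ENNReal.ofReal C * P (A k) := by
        intro k
        change ∫⁻ ω, ‖f k ω‖ₑ ∂P ≤ _
        rw [← ofReal_integral_norm_eq_lintegral_enorm (hfint k)]
        have : ∫ ω, ‖f k ω‖ ∂P ≤ C * (P (A k)).toReal := by
          have : ∫ ω, ‖f k ω‖ ∂P = ∫ ω in A k, |Y (N k) ω| ∂P := by
            rw [hf_ind k]
            simp_rw [norm_indicator_eq_indicator_norm]
            rw [integral_indicator (hAm k)]
            simp [Real.norm_eq_abs]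
          rw [this]; exact key k
        calc ENNReal.ofReal (∫ ω, ‖f k ω‖ ∂P) ≤ ENNReal.ofReal (C * (P (A k)).toReal) :=
          ENNReal.ofReal_le_ofReal this
        _ = ENNReal.ofReal C * ENNReal.ofReal ((P (A k)).toReal) := by
          rw [ENNReal.ofReal_mul hC0]
        _ = ENNReal.ofReal C * P (A k) := by
          rw [ENNReal.ofReal_toReal (measure_ne_top P _)]
      refine ne_of_lt (lt_of_le_of_lt (ENNReal.tsum_le_tsum hb) ?_)
      rw [ENNReal.tsum_mul_left]
      exact ENNReal.mul_lt_top ENNReal.ofReal_lt_top (lt_of_le_of_ne le_top hPne)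
    have hswap : ∫ ω, (∑' k, f k ω) ∂P = ∑' k, ∫ ω, f k ω ∂P :=
      integral_tsum (fun k => (hfint k).aestronglyMeasurable) hlin
    calc ∫ ω, (∑ n ∈ Finset.Ioc w (σ ω + w), Y n ω) ∂P
        = ∫ ω, (∑' k, f k ω) ∂P := by exact integral_congr_ae (.of_forall hpt)
    _ = ∑' k, ∫ ω, f k ω ∂P := hswap
    _ = ∑' k, ∫ ω, (P[Y (N k) | 𝒢 k]) ω * (A k).indicator (fun _ => (1 : ℝ)) ω ∂P :=
      tsum_congr fun k => (hcond_eq k).symm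
end

section
/- Lorden's pathwise overshoot inequality holds: 0 ≤ 2 ∫_0^b R_c dc ≤ Σ_{n=w+1}^{τ_b} Y_n² − R_b². -/
open MeasureTheory

/-- Lorden's pathwise overshoot inequality: with `S_w = 0`, `S_n = S_{n-1} + Y_n` for
`n > w`, hitting times `τ_c = inf {n > w : S_n ≥ c}` and overshoots `R_c = S_{τ_c} - c`,
if `τ_b < ∞` then `0 ≤ 2 ∫_0^b R_c dc ≤ Σ_{n=w+1}^{τ_b} Y_n² - R_b²`. -/
theorem lorden_pathwise_overshoot_inequality
    (w : ℕ) (Y : ℕ → ℝ) (S : ℕ → ℝ)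
    (hSw : S w = 0)
    (hSrec : ∀ n, w < n → S n = S (n - 1) + Y n)
    (b : ℝ) (hb : 0 < b)
    (τ : ℝ → ℕ)
    (hτ : ∀ c, 0 < c → c ≤ b →
      w < τ c ∧ c ≤ S (τ c) ∧ ∀ n, w < n → n < τ c → S n < c) :
    (0 ≤ 2 * ∫ c in Set.Ioc (0 : ℝ) b, (S (τ c) - c)) ∧
      2 * (∫ c in Set.Ioc (0 : ℝ) b, (S (τ c) - c)) ≤
        (∑ n ∈ Finset.Ioc w (τ b), (Y n) ^ 2) - (S (τ b) - b) ^ 2 := by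
  obtain ⟨hτb_gt, hτb_ge, hτb_lt⟩ := hτ b hb le_rfl
  -- running maximum (including S w = 0)
  set M : ℕ → ℝ := fun n => (insert w (Finset.Icc w n)).sup'
    (Finset.insert_nonempty _ _) S with hMdef
  have hM0 : ∀ n, 0 ≤ M n := fun n => by
    have := Finset.le_sup' (f := S) (Finset.mem_insert_self w (Finset.Icc w n))
    rw [hSw] at this; exact this
  have hMS : ∀ j n, w ≤ j → j ≤ n → S j ≤ M n := fun j n hj hjn =>
    Finset.le_sup' S (Finset.mem_insert_of_mem (Finset.mem_Icc.mpr ⟨hj, hjn⟩))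
  -- the pieces
  set A : ℕ → Set ℝ := fun n => Set.Ioc (M (n - 1)) (min (S n) b) with hAdef
  have hAsub : ∀ n, A n ⊆ Set.Ioc (0 : ℝ) b := by
    intro n c hc
    exact ⟨lt_of_le_of_lt (hM0 (n - 1)) hc.1, hc.2.trans (min_le_right _ _)⟩
  -- on A n (for relevant n), τ c = n
  have hτA : ∀ n, n ∈ Finset.Ioc w (τ b) → ∀ c ∈ A n, τ c = n := by
    intro n hn c hc
    rw [Finset.mem_Ioc] at hn
    have hc0b := hAsub n hc
    obtain ⟨hk1, hk2, hk3⟩ := hτ c hc0b.1 hc0b.2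
    have hcSn : c ≤ S n := hc.2.trans (min_le_left _ _)
    rcases lt_trichotomy (τ c) n with h | h | h
    · exfalso
      have : S (τ c) ≤ M (n - 1) := hMS (τ c) (n - 1) hk1.le (Nat.le_sub_one_of_lt h)
      linarith [hc.1, hk2]
    · exact h
    · exact absurd (hk3 n hn.1 h) (not_lt.mpr hcSn)
  -- the pieces cover (0, b]
  have hcover : Set.Ioc (0 : ℝ) b = ⋃ n ∈ Finset.Ioc w (τ b), A n := by
    ext c
    constructor
    · intro hc
      obtain ⟨hk1, hk2, hk3⟩ := hτ c hc.1 hc.2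
      have hτcb : τ c ≤ τ b := by
        by_contra h
        push_neg at h
        have := hk3 (τ b) hτb_gt h
        linarith [hc.2, hτb_ge]
      refine Set.mem_biUnion (Finset.mem_Ioc.mpr ⟨hk1, hτcb⟩) ?_
      refine ⟨?_, le_min hk2 hc.2⟩
      rw [hMdef]
      rw [Finset.sup'_lt_iff]
      intro j hj
      rcases Finset.mem_insert.mp hj with h | h
      · rw [h, hSw]; exact hc.1
      · rw [Finset.mem_Icc] at h
        rcases eq_or_lt_of_le h.1 with h' | h'
        · rw [← h', hSw]; exact hc.1
        · exact hk3 j h' (lt_of_le_of_lt h.2 (Nat.sub_lt (Nat.zero_lt_of_lt hk1) one_pos))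
    · intro hc
      obtain ⟨n, hn, hcn⟩ := Set.mem_iUnion₂.mp hc
      exact hAsub n hcn
  -- disjointness
  have hdisj : Set.Pairwise ↑(Finset.Ioc w (τ b)) (Function.onFun Disjoint A) := by
    intro n hn m hm hnm
    refine Set.disjoint_left.mpr fun c hcn hcm => hnm ?_
    rw [← hτA n (by exact_mod_cast hn) c hcn, ← hτA m (by exact_mod_cast hm) c hcm]
  have hmeas : ∀ n ∈ Finset.Ioc w (τ b), MeasurableSet (A n) := fun n _ => measurableSet_Ioc
  have hint : ∀ n ∈ Finset.Ioc w (τ b),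
      IntegrableOn (fun c => S (τ c) - c) (A n) volume := by
    intro n hn
    have : IntegrableOn (fun c : ℝ => S n - c) (A n) volume :=
      (Continuous.integrableOn_Ioc (continuous_const.sub continuous_id))
    exact this.congr_fun (fun c hc => by rw [hτA n hn c hc]) measurableSet_Ioc
  rw [hcover, integral_biUnion_finset _ hmeas hdisj hint]
  -- rewrite each piece's integral
  have hpiece : ∀ n ∈ Finset.Ioc w (τ b),
      ∫ c in A n, (S (τ c) - c) = ∫ c in A n, (S n - c) := by
    intro n hn
    exact setIntegral_congr_fun measurableSet_Ioc (fun c hc => by rw [hτA n hn c hc])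
  rw [Finset.sum_congr rfl hpiece]
  constructor
  · -- nonnegativity
    have h1 : ∀ n ∈ Finset.Ioc w (τ b), 0 ≤ ∫ c in A n, (S n - c) := by
      intro n hn
      apply setIntegral_nonneg measurableSet_Ioc
      intro c hc
      have : c ≤ S n := hc.2.trans (min_le_left _ _)
      linarith
    have := Finset.sum_nonneg h1
    linarith
  · -- the main bound
    have key : ∀ n ∈ Finset.Ioc w (τ b),
        2 * ∫ c in A n, (S n - c) ≤
          Y n ^ 2 - (if n = τ b then (S (τ b) - b) ^ 2 else 0) := by
      intro n hn
      rw [Finset.mem_Ioc] at hn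
      set a := M (n - 1) with ha
      set u := min (S n) b with hu
      have haS : S (n - 1) ≤ a := hMS (n - 1) (n - 1) (Nat.le_sub_one_of_lt hn.1) le_rfl
      have hYn : S n - a ≤ Y n := by
        have := hSrec n hn.1
        linarith
      by_cases hau : u ≤ a
      · -- empty piece
        have hempty : A n = ∅ := Set.Ioc_eq_empty (not_lt.mpr hau)
        rw [hempty]
        simp only [Measure.restrict_empty, integral_zero_measure, mul_zero]
        have hne : n ≠ τ b := by
          intro h
          subst h
          have hub : u = b := min_eq_right (by linarith [hτb_ge])
          have : a < b := by
            rw [ha, hMdef]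
            rw [Finset.sup'_lt_iff]
            intro j hj
            rcases Finset.mem_insert.mp hj with h | h
            · rw [h, hSw]; exact hb
            · rw [Finset.mem_Icc] at h
              rcases eq_or_lt_of_le h.1 with h' | h'
              · rw [← h', hSw]; exact hb
              · exact hτb_lt j h' (lt_of_le_of_lt h.2 (Nat.sub_lt (Nat.zero_lt_of_lt hn.1) one_pos))
          rw [hub] at hau
          linarith
        rw [if_neg hne]
        nlinarith [sq_nonneg (Y n)]
      · push_neg at hau
        have hcomp : ∫ c in A n, (S n - c) = (u - a) * S n - (u ^ 2 - a ^ 2) / 2 := by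
          rw [hAdef]
          simp only
          rw [← ha, ← hu, ← intervalIntegral.integral_of_le hau.le]
          rw [intervalIntegral.integral_sub intervalIntegrable_const
            intervalIntegral.intervalIntegrable_id,
            intervalIntegral.integral_const, integral_id]
          ring_nf
        rw [hcomp]
        have huS : u ≤ S n := min_le_left _ _
        by_cases hnτ : n = τ b
        · subst hnτ
          rw [if_pos rfl]
          have hub : u = b := min_eq_right (by linarith [hτb_ge])
          have haSn : 0 ≤ S (τ b) - a := by linarith
          nlinarith [sq_nonneg (S (τ b) - a), sq_nonneg (Y (τ b) - (S (τ b) - a))]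
        · rw [if_neg hnτ]
          have hnlt : n < τ b := lt_of_le_of_ne hn.2 hnτ
          have hSnb : S n < b := hτb_lt n hn.1 hnlt
          have hus : u = S n := min_eq_left hSnb.le
          have haSn : 0 ≤ S n - a := by linarith
          nlinarith [sq_nonneg (Y n - (S n - a))]
    have hsum := Finset.sum_le_sum key
    have hmem : τ b ∈ Finset.Ioc w (τ b) := Finset.mem_Ioc.mpr ⟨hτb_gt, le_rfl⟩
    rw [Finset.sum_sub_distrib, Finset.sum_ite_eq' (Finset.Ioc w (τ b)) (τ b), if_pos hmem]
      at hsum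
    calc 2 * ∑ n ∈ Finset.Ioc w (τ b), ∫ c in A n, (S n - c)
        = ∑ n ∈ Finset.Ioc w (τ b), 2 * ∫ c in A n, (S n - c) := by rw [Finset.mul_sum]
      _ ≤ _ := hsum
end
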